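/- arXiv:1709.07737 — 7 statements merged into one kernel-verified Lean document; each statement's English description precedes it below -/
import Mathlib

section
/- Let p > 0 and let h : (0,∞) → ℝ be continuous and positive with ∫_0^1 h(y) dy < ∞ and lim_{y→∞} h(y) = h_∞ > 0. Then the function ξ_p(y) = (p + y) ∫_y^∞ p h(y')/(p + y')² dy' is well defined and continuously differentiable on (0,∞), it satisfies −h(y) − ξ_p'(y) + (1/p)[ξ_p(y) − y ξ_p'(y)] = 0 for every y > 0, and lim_{y→∞} ξ_p(y) = p h_∞. -/
open MeasureTheory Real Filter Set
open scoped Topology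

lemma aux_hasDeriv (p : ℝ) (hp : 0 < p) {x : ℝ} (hx : 0 ≤ x) :
    HasDerivAt (fun t => -(p + t)⁻¹) (((p + x) ^ 2)⁻¹) x := by
  have hne : p + x ≠ 0 := by positivity
  have h1 : HasDerivAt (fun t : ℝ => p + t) 1 x := (hasDerivAt_id x).const_add p
  have h2 : HasDerivAt (fun t => -(p + t)⁻¹) (-(-1 / (p + x) ^ 2)) x := (h1.inv hne).neg
  convert h2 using 1
  ring

lemma aux_tendsto (p : ℝ) : Tendsto (fun t : ℝ => -(p + t)⁻¹) atTop (𝓝 0) := by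
  have h : Tendsto (fun t : ℝ => p + t) atTop atTop :=
    tendsto_atTop_add_const_left _ _ tendsto_id
  simpa using h.inv_tendsto_atTop.neg

lemma aux_intOn (p : ℝ) (hp : 0 < p) {a : ℝ} (ha : 0 ≤ a) :
    IntegrableOn (fun x => ((p + x) ^ 2)⁻¹) (Ioi a) := by
  refine integrableOn_Ioi_deriv_of_nonneg'
    (fun x hx => aux_hasDeriv p hp (ha.trans hx)) ?_ (aux_tendsto p)
  intro x hx
  have hax : a < x := hx
  have : 0 < p + x := by linarith
  positivity

lemma aux_intval (p : ℝ) (hp : 0 < p) {a : ℝ} (ha : 0 ≤ a) :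
    ∫ x in Ioi a, ((p + x) ^ 2)⁻¹ = (p + a)⁻¹ := by
  have := integral_Ioi_of_hasDerivAt_of_tendsto'
    (fun x hx => aux_hasDeriv p hp (ha.trans hx)) (aux_intOn p hp ha) (aux_tendsto p)
  simpa using this


/-- well-definedness, C¹ regularity, the ODE, and the limit at infinity
for the equilibrium profile ξ_p(y) = (p+y)∫_y^∞ p h(y')/(p+y')² dy'. -/
theorem stmt_0 (p hinf : ℝ) (hp : 0 < p) (h : ℝ → ℝ)
    (hcont : ContinuousOn h (Set.Ioi (0:ℝ)))
    (hpos : ∀ y > (0:ℝ), 0 < h y)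
    (hint : IntegrableOn h (Set.Ioo (0:ℝ) 1))
    (hlim : Tendsto h atTop (nhds hinf))
    (hinfpos : 0 < hinf)
    (ξp : ℝ → ℝ)
    (hξp : ∀ y, ξp y = (p + y) * ∫ y' in Set.Ioi y, p * h y' / (p + y') ^ 2) :
    (∀ y > (0:ℝ), IntegrableOn (fun y' => p * h y' / (p + y') ^ 2) (Set.Ioi y)) ∧
    (∀ y > (0:ℝ), DifferentiableAt ℝ ξp y) ∧
    ContinuousOn (deriv ξp) (Set.Ioi 0) ∧
    (∀ y > (0:ℝ), -h y - deriv ξp y + (1 / p) * (ξp y - y * deriv ξp y) = 0) ∧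
    Tendsto ξp atTop (nhds (p * hinf)) := by
  set g : ℝ → ℝ := fun x => p * h x / (p + x) ^ 2 with hg
  -- continuity of g on Ioi 0
  have hgcont : ContinuousOn g (Ioi 0) := by
    apply ContinuousOn.div
    · exact continuousOn_const.mul hcont
    · exact (continuous_const.add continuous_id).pow 2 |>.continuousOn
    · intro x hx
      have : (0:ℝ) < x := hx
      positivity
  -- boundedness of h on [a, ∞) for a > 0
  have hbdd : ∀ a > (0:ℝ), ∃ C, ∀ x, a ≤ x → |h x| ≤ C := by
    intro a ha
    obtain ⟨M, hM⟩ := Metric.tendsto_atTop.mp hlim 1 one_pos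
    obtain ⟨C₁, hC₁⟩ := (isCompact_Icc (a := a) (b := max M a)).exists_bound_of_continuousOn
      (hcont.mono (fun x hx => lt_of_lt_of_le ha hx.1))
    refine ⟨max C₁ (|hinf| + 1), fun x hx => ?_⟩
    rcases le_total x (max M a) with hcase | hcase
    · exact le_max_of_le_left (by simpa using hC₁ x ⟨hx, hcase⟩)
    · have hxM : M ≤ x := le_trans (le_max_left _ _) hcase
      have := hM x hxM
      rw [Real.dist_eq] at this
      have : |h x| ≤ |hinf| + 1 := by
        calc |h x| ≤ |h x - hinf| + |hinf| := by
              have := abs_sub_abs_le_abs_sub (h x) hinf; linarith [abs_abs (h x)]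
          _ ≤ |hinf| + 1 := by linarith
      exact le_max_of_le_right this
  -- integrability
  have key1 : ∀ y > (0:ℝ), IntegrableOn g (Ioi y) := by
    intro y hy
    obtain ⟨C, hC⟩ := hbdd y hy
    have hCpos : 0 ≤ C := le_trans (abs_nonneg _) (hC y le_rfl)
    refine Integrable.mono' ((aux_intOn p hp hy.le).const_mul (p * C)) ?_ ?_
    · exact (hgcont.mono (fun x hx => lt_trans hy hx)).aestronglyMeasurable measurableSet_Ioi
    · refine (ae_restrict_iff' measurableSet_Ioi).mpr (ae_of_all _ fun x hx => ?_)
      have hxy : y < x := hx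
      have hx0 : 0 < x := lt_trans hy hxy
      have hpx : 0 < p + x := by linarith
      have h1 : ‖g x‖ = p * h x / (p + x) ^ 2 := by
        rw [Real.norm_eq_abs, abs_of_nonneg]
        have := (hpos x hx0).le
        positivity
      rw [h1]
      have h2 : h x ≤ C := le_trans (le_abs_self _) (hC x (le_of_lt hxy))
      rw [div_eq_mul_inv]
      exact mul_le_mul_of_nonneg_right (mul_le_mul_of_nonneg_left h2 hp.le)
        (by positivity)
  set F : ℝ → ℝ := fun y => ∫ x in Ioi y, g x with hF
  -- derivative of F
  have keyF : ∀ y > (0:ℝ), HasDerivAt F (-(g y)) y := by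
    intro y hy
    set c := y / 2 with hc
    have hc0 : 0 < c := by positivity
    have hcy : c < y := by rw [hc]; linarith
    have hgc : IntegrableOn g (Ioi c) := key1 c hc0
    have hdecomp : ∀ x ∈ Ioi c, F x = F c - ∫ t in c..x, g t := by
      intro x hx
      have hcx : c ≤ x := le_of_lt hx
      have hsplit : ∫ t in Ioc c x ∪ Ioi x, g t =
          (∫ t in Ioc c x, g t) + ∫ t in Ioi x, g t :=
        setIntegral_union (Ioc_disjoint_Ioi le_rfl) measurableSet_Ioi
          (hgc.mono_set Ioc_subset_Ioi_self) (hgc.mono_set (Ioi_subset_Ioi hcx))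
      rw [Ioc_union_Ioi_eq_Ioi hcx] at hsplit
      rw [intervalIntegral.integral_of_le hcx]
      simp only [hF]
      linarith [hsplit]
    have hmeas : StronglyMeasurableAtFilter g (𝓝 y) volume :=
      (hgcont.stronglyMeasurableAtFilter isOpen_Ioi) y hy
    have hgy : ContinuousAt g y := hgcont.continuousAt (Ioi_mem_nhds hy)
    have hii : IntervalIntegrable g volume c y :=
      (intervalIntegrable_iff_integrableOn_Ioc_of_le hcy.le).mpr
        (hgc.mono_set Ioc_subset_Ioi_self)
    have hd1 := intervalIntegral.integral_hasDerivAt_right hii hmeas hgy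
    have hd2 : HasDerivAt (fun x => F c - ∫ t in c..x, g t) (-(g y)) y := by
      have h3 : HasDerivAt (fun x => F c - ∫ t in c..x, g t) (0 - g y) y :=
        (hasDerivAt_const y (F c)).sub hd1
      simpa using h3
    exact hd2.congr_of_eventuallyEq
      (eventuallyEq_of_mem (Ioi_mem_nhds hcy) hdecomp)
  -- derivative of ξp
  have keyD : ∀ y > (0:ℝ), HasDerivAt ξp (F y - (p + y) * g y) y := by
    intro y hy
    have h1 : HasDerivAt (fun x => (p + x) * F x)
        (1 * F y + (p + y) * -(g y)) y :=
      ((hasDerivAt_id y).const_add p).mul (keyF y hy)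
    have h2 : ξp = fun x => (p + x) * F x := funext fun x => hξp x
    rw [h2]
    convert h1 using 1
    ring
  have keyd : ∀ y > (0:ℝ), deriv ξp y = F y - (p + y) * g y :=
    fun y hy => (keyD y hy).deriv
  refine ⟨key1, fun y hy => (keyD y hy).differentiableAt, ?_, ?_, ?_⟩
  · -- continuity of deriv
    have hFc : ContinuousOn F (Ioi 0) := fun y hy =>
      ((keyF y hy).differentiableAt.continuousAt).continuousWithinAt
    have : ContinuousOn (fun y => F y - (p + y) * g y) (Ioi 0) :=
      hFc.sub (((continuous_const.add continuous_id).continuousOn).mul hgcont)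
    exact this.congr keyd
  · -- ODE
    intro y hy
    have hpy : p + y ≠ 0 := by positivity
    rw [keyd y hy, hξp y, hF, hg]
    have hI : (∫ y' in Ioi y, p * h y' / (p + y') ^ 2) = F y := rfl
    field_simp
    ring
  · -- limit
    rw [Metric.tendsto_atTop]
    intro ε hε
    obtain ⟨M, hM⟩ := Metric.tendsto_atTop.mp hlim (ε / (2 * p)) (by positivity)
    refine ⟨max M 1, fun y hy => ?_⟩
    have hy1 : (1:ℝ) ≤ y := le_trans (le_max_right _ _) hy
    have hy0 : (0:ℝ) < y := lt_of_lt_of_le one_pos hy1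
    have hyM : M ≤ y := le_trans (le_max_left _ _) hy
    have hpy : (0:ℝ) < p + y := by linarith
    have hint2 : IntegrableOn (fun x => hinf * p * ((p + x) ^ 2)⁻¹) (Ioi y) :=
      (aux_intOn p hp hy0.le).const_mul _
    have hval2 : ∫ x in Ioi y, hinf * p * ((p + x) ^ 2)⁻¹ = hinf * p * (p + y)⁻¹ := by
      rw [integral_const_mul, aux_intval p hp hy0.le]
    have hkey : ξp y - p * hinf =
        (p + y) * ∫ x in Ioi y, (g x - hinf * p * ((p + x) ^ 2)⁻¹) := by
      rw [integral_sub (key1 y hy0) hint2, hval2, hξp y]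
      have : (∫ y' in Ioi y, p * h y' / (p + y') ^ 2) = F y := rfl
      field_simp
    have hbound : ‖∫ x in Ioi y, (g x - hinf * p * ((p + x) ^ 2)⁻¹)‖ ≤
        ∫ x in Ioi y, (p * (ε / (2 * p))) * ((p + x) ^ 2)⁻¹ := by
      refine norm_integral_le_of_norm_le ((aux_intOn p hp hy0.le).const_mul _) ?_
      refine (ae_restrict_iff' measurableSet_Ioi).mpr (ae_of_all _ fun x hx => ?_)
      have hxy : y < x := hx
      have hpx : 0 < p + x := by linarith
      have hhx : |h x - hinf| ≤ ε / (2 * p) := by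
        have := hM x (le_trans hyM hxy.le)
        rw [Real.dist_eq] at this
        linarith
      have : g x - hinf * p * ((p + x) ^ 2)⁻¹ = p * (h x - hinf) * ((p + x) ^ 2)⁻¹ := by
        rw [hg]
        field_simp
      rw [this, Real.norm_eq_abs, abs_mul, abs_mul, abs_of_pos hp,
        abs_of_pos (by positivity : (0:ℝ) < ((p + x) ^ 2)⁻¹)]
      gcongr
    rw [Real.dist_eq, hkey]
    have hvb : ∫ x in Ioi y, (p * (ε / (2 * p))) * ((p + x) ^ 2)⁻¹ =
        p * (ε / (2 * p)) * (p + y)⁻¹ := by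
      rw [integral_const_mul, aux_intval p hp hy0.le]
    rw [abs_mul, abs_of_pos hpy]
    calc (p + y) * |∫ x in Ioi y, (g x - hinf * p * ((p + x) ^ 2)⁻¹)|
        ≤ (p + y) * (p * (ε / (2 * p)) * (p + y)⁻¹) := by
          rw [← hvb]; gcongr; exact hbound
      _ = ε / 2 := by field_simp
      _ < ε := by linarith
end

section
/- Let p > 0 and let K : [0,∞) → ℝ be a function such that t ↦ e^{t/p} K(t) is positive and nonincreasing on [0,∞). Then for every complex number z with Re z > −1/p the Laplace transform K̂(z) = ∫_0^∞ K(t) e^{−z t} dt converges absolutely, and 1 + K̂(z) ≠ 0. (Indeed Im K̂(z) ≠ 0 whenever Im z ≠ 0 and Re z > −1/p, while K̂(z) > 0 for real z > −1/p.) -/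
open MeasureTheory Real Filter Set

lemma myUnionIoc {c : ℝ} (hc : 0 < c) : (⋃ n : ℕ, Ioc ((n:ℝ)*c) ((n+1)*c)) = Ioi 0 := by
  ext t
  simp only [mem_iUnion, mem_Ioc, mem_Ioi]
  constructor
  · rintro ⟨n, h1, _⟩
    exact lt_of_le_of_lt (by positivity) h1
  · intro ht
    have hn : 1 ≤ ⌈t/c⌉₊ := Nat.ceil_pos.mpr (div_pos ht hc)
    refine ⟨⌈t/c⌉₊ - 1, ?_, ?_⟩
    · have h1 : ⌈t/c⌉₊ - 1 < ⌈t/c⌉₊ := Nat.sub_lt hn one_pos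
      have hcast : ((⌈t/c⌉₊ - 1 : ℕ) : ℝ) < t / c := Nat.lt_ceil.mp h1
      calc ((⌈t/c⌉₊ - 1 : ℕ) : ℝ) * c < (t/c) * c := mul_lt_mul_of_pos_right hcast hc
        _ = t := div_mul_cancel₀ t hc.ne'
    · have h2 : t / c ≤ ⌈t/c⌉₊ := Nat.le_ceil _
      have : ((⌈t/c⌉₊ - 1 : ℕ) : ℝ) + 1 = ⌈t/c⌉₊ := by
        have := Nat.cast_sub (R := ℝ) hn
        push_cast [this]; ring
      rw [this]
      calc t = (t/c)*c := (div_mul_cancel₀ t hc.ne').symm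
        _ ≤ (⌈t/c⌉₊ : ℝ) * c := mul_le_mul_of_nonneg_right h2 hc.le

lemma sin_core {f : ℝ → ℝ} (hf : IntegrableOn f (Set.Ioi 0))
    (hpos : ∀ t ∈ Set.Ici (0:ℝ), 0 < f t)
    (hanti : StrictAntiOn f (Set.Ici 0)) {y : ℝ} (hy : 0 < y) :
    0 < ∫ t in Set.Ioi (0:ℝ), f t * Real.sin (y * t) := by
  set T := π / y with hTdef
  have hT : 0 < T := div_pos pi_pos hy
  have hyT : y * T = π := mul_div_cancel₀ π hy.ne'
  set F := fun t => f t * Real.sin (y * t) with hFdef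
  -- integrability of F on Ioi 0
  have hF : IntegrableOn F (Set.Ioi 0) := by
    refine Integrable.mono' hf ?_ ?_
    · exact hf.aestronglyMeasurable.mul
        ((Real.continuous_sin.comp (continuous_const.mul continuous_id)).aestronglyMeasurable)
    · refine (ae_restrict_iff' measurableSet_Ioi).2 (Filter.Eventually.of_forall fun t ht => ?_)
      have h1 : 0 < f t := hpos t (Set.mem_Ici.mpr (le_of_lt ht))
      calc ‖F t‖ = |f t| * |Real.sin (y*t)| := abs_mul _ _
        _ ≤ |f t| * 1 := by
            exact mul_le_mul_of_nonneg_left (abs_sin_le_one _) (abs_nonneg _)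
        _ = f t := by rw [mul_one, abs_of_pos h1]
  -- interval integrability
  have hFI : ∀ a b : ℝ, 0 ≤ a → a ≤ b → IntervalIntegrable F volume a b := by
    intro a b ha hab
    rw [intervalIntegrable_iff_integrableOn_Ioc_of_le hab]
    exact hF.mono_set (fun t ht => lt_of_le_of_lt ha ht.1)
  -- shifted integral identity
  have hshift : ∀ a : ℝ, (∫ t in (a+T)..(a+2*T), F t)
      = ∫ t in a..(a+T), (-(f (t+T) * Real.sin (y*t))) := by
    intro a
    rw [show a + 2*T = (a+T)+T by ring, ← intervalIntegral.integral_comp_add_right (fun t => F t) T]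
    congr 1
    funext t
    simp only [hFdef]
    rw [mul_add, hyT, Real.sin_add_pi]
    ring
  -- key: block integral equals integral of difference
  have hkey : ∀ a : ℝ, 0 ≤ a → (∫ t in a..(a+2*T), F t)
      = ∫ t in a..(a+T), (f t - f (t+T)) * Real.sin (y*t) := by
    intro a ha
    have h1 : IntervalIntegrable F volume a (a+T) := hFI a (a+T) ha (by linarith)
    have h2 : IntervalIntegrable F volume (a+T) (a+2*T) :=
      hFI (a+T) (a+2*T) (by linarith) (by linarith)
    have h3 : IntervalIntegrable (fun t => -(f (t+T) * Real.sin (y*t))) volume a (a+T) := by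
      have := (h2.comp_add_right T)
      rw [show a + 2*T - T = a + T by ring, show a + T - T = a by ring] at this
      refine this.congr_ae ?_
      refine (Filter.EventuallyEq.of_eq ?_ : _ )
      funext t
      simp only [hFdef]
      rw [mul_add, hyT, Real.sin_add_pi]
      ring
    rw [← intervalIntegral.integral_add_adjacent_intervals h1 h2, hshift a, ← intervalIntegral.integral_add h1 h3]
    congr 1
    funext t
    ring
  have hsin_nonneg : ∀ (n : ℕ) (t : ℝ), (n:ℝ)*(2*T) ≤ t → t ≤ (n:ℝ)*(2*T) + T →
      0 ≤ Real.sin (y*t) := by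
    intro n t h1 h2
    have : Real.sin (y*t) = Real.sin (y*t - n*(2*π)) := by
      rw [← Real.sin_add_nat_mul_two_pi (y*t - n*(2*π)) n]; ring_nf
    rw [this]
    apply Real.sin_nonneg_of_nonneg_of_le_pi
    · nlinarith [mul_le_mul_of_nonneg_left h1 hy.le]
    · nlinarith [mul_le_mul_of_nonneg_left h2 hy.le]
  -- HasSum
  have hU := myUnionIoc (c := 2*T) (by linarith)
  have hHS : HasSum (fun n : ℕ => ∫ t in Ioc ((n:ℝ)*(2*T)) ((n+1)*(2*T)), F t)
      (∫ t in Set.Ioi (0:ℝ), F t) := by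
    have := hasSum_integral_iUnion (μ := volume) (s := fun n : ℕ => Ioc ((n:ℝ)*(2*T)) (((n:ℝ)+1)*(2*T)))
      (fun i => measurableSet_Ioc) ?_ (by rw [hU]; exact hF)
    · rw [hU] at this; exact_mod_cast this
    · intro i j hij
      apply Set.Ioc_disjoint_Ioc.mpr
      rcases hij.lt_or_gt with h | h
      · have : (i:ℝ) + 1 ≤ j := by exact_mod_cast Nat.succ_le_of_lt h
        refine le_trans (min_le_left _ _) (le_trans ?_ (le_max_right _ _))
        nlinarith
      · have : (j:ℝ) + 1 ≤ i := by exact_mod_cast Nat.succ_le_of_lt h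
        refine le_trans (min_le_right _ _) (le_trans ?_ (le_max_left _ _))
        nlinarith
  -- each term nonneg, first positive
  have hb_eq : ∀ n : ℕ, (∫ t in Ioc ((n:ℝ)*(2*T)) (((n:ℝ)+1)*(2*T)), F t)
      = ∫ t in ((n:ℝ)*(2*T))..((n:ℝ)*(2*T)+T), (f t - f (t+T)) * Real.sin (y*t) := by
    intro n
    have ha : (0:ℝ) ≤ (n:ℝ)*(2*T) := by positivity
    rw [show ((n:ℝ)+1)*(2*T) = (n:ℝ)*(2*T) + 2*T by ring] at *
    rw [← intervalIntegral.integral_of_le (by linarith), hkey _ ha]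
  have hb_nonneg : ∀ n : ℕ, 0 ≤ ∫ t in Ioc ((n:ℝ)*(2*T)) (((n:ℝ)+1)*(2*T)), F t := by
    intro n
    rw [hb_eq n]
    apply intervalIntegral.integral_nonneg (by linarith)
    intro u hu
    have h0u : (0:ℝ) ≤ u := le_trans (by positivity) hu.1
    have hfd : 0 ≤ f u - f (u+T) := by
      have := hanti (show u ∈ Set.Ici (0:ℝ) from h0u)
        (show u + T ∈ Set.Ici (0:ℝ) by simp; linarith) (by linarith)
      linarith
    exact mul_nonneg hfd (hsin_nonneg n u hu.1 hu.2)
  have hII : ∀ a : ℝ, 0 ≤ a →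
      IntervalIntegrable (fun t => (f t - f (t+T)) * Real.sin (y*t)) volume a (a+T) := by
    intro a ha
    have h1 : IntervalIntegrable F volume a (a+T) := hFI a (a+T) ha (by linarith)
    have h2 : IntervalIntegrable F volume (a+T) (a+2*T) :=
      hFI (a+T) (a+2*T) (by linarith) (by linarith)
    have h3 : IntervalIntegrable (fun t => -(f (t+T) * Real.sin (y*t))) volume a (a+T) := by
      have := (h2.comp_add_right T)
      rw [show a + 2*T - T = a + T by ring, show a + T - T = a by ring] at this
      refine this.congr_ae (Filter.EventuallyEq.of_eq ?_)
      funext t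
      simp only [hFdef]
      rw [mul_add, hyT, Real.sin_add_pi]
      ring
    refine (h1.add h3).congr_ae (Filter.EventuallyEq.of_eq ?_)
    funext t
    simp only [hFdef]
    ring
  have hb0 : 0 < ∫ t in Ioc (((0:ℕ):ℝ)*(2*T)) ((((0:ℕ):ℝ)+1)*(2*T)), F t := by
    rw [hb_eq 0]
    have h00 : ((0:ℕ):ℝ)*(2*T) = 0 := by norm_num
    rw [h00, zero_add]
    have := hII 0 le_rfl
    rw [zero_add] at this
    refine intervalIntegral.intervalIntegral_pos_of_pos_on this ?_ hT
    intro u hu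
    have hfd : 0 < f u - f (u+T) := by
      have := hanti (show u ∈ Set.Ici (0:ℝ) from hu.1.le)
        (show u + T ∈ Set.Ici (0:ℝ) by simp; linarith [hu.1]) (by linarith)
      linarith
    have hs : 0 < Real.sin (y*u) := by
      apply Real.sin_pos_of_pos_of_lt_pi (mul_pos hy hu.1)
      rw [← hyT]
      exact mul_lt_mul_of_pos_left hu.2 hy
    exact mul_pos hfd hs
  rw [← hHS.tsum_eq]
  exact Summable.tsum_pos hHS.summable hb_nonneg 0 hb0

/-- if t ↦ e^{t/p}K(t) is positive and nonincreasing on [0,∞), then the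
Laplace transform K̂(z) = ∫_0^∞ K(t)e^{−zt} dt converges absolutely for Re z > −1/p and
1 + K̂(z) ≠ 0 there; moreover Im K̂(z) ≠ 0 when Im z ≠ 0, and K̂(z) > 0 for real z > −1/p. -/
theorem stmt_2 (p : ℝ) (hp : 0 < p) (K : ℝ → ℝ)
    (hKpos : ∀ t ≥ (0:ℝ), 0 < Real.exp (t / p) * K t)
    (hKmono : AntitoneOn (fun t => Real.exp (t / p) * K t) (Set.Ici 0)) :
    (∀ z : ℂ, -1 / p < z.re →
      IntegrableOn (fun t : ℝ => (K t : ℂ) * Complex.exp (-z * (t : ℂ))) (Set.Ioi 0)) ∧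
    (∀ z : ℂ, -1 / p < z.re →
      1 + (∫ t in Set.Ioi (0:ℝ), (K t : ℂ) * Complex.exp (-z * (t : ℂ))) ≠ 0) ∧
    (∀ z : ℂ, -1 / p < z.re → z.im ≠ 0 →
      (∫ t in Set.Ioi (0:ℝ), (K t : ℂ) * Complex.exp (-z * (t : ℂ))).im ≠ 0) ∧
    (∀ x : ℝ, -1 / p < x →
      0 < ∫ t in Set.Ioi (0:ℝ), K t * Real.exp (-x * t)) := by
  -- basic facts
  have hre : ∀ (z : ℂ) (t : ℝ), (-z*(t:ℂ)).re = -z.re*t := by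
    intro z t; simp [Complex.mul_re]
  have him : ∀ (z : ℂ) (t : ℝ), (-z*(t:ℂ)).im = -z.im*t := by
    intro z t; simp [Complex.mul_im]
  have hKt : ∀ t : ℝ, 0 ≤ t → 0 < K t := by
    intro t ht
    have := hKpos t ht
    nlinarith [Real.exp_pos (t/p)]
  -- measurable antitone extension
  set G : ℝ → ℝ := fun t => Real.exp (max t 0 / p) * K (max t 0) with hGdef
  have hGanti : Antitone G := by
    intro s t hst
    exact hKmono (le_max_right s 0) (le_max_right t 0) (max_le_max hst le_rfl)
  have hGmeas : Measurable G := hGanti.measurable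
  have hGpos : ∀ t, 0 < G t := fun t => hKpos _ (le_max_right t 0)
  have hGle : ∀ t, 0 ≤ t → G t ≤ G 0 := fun t ht => hGanti ht
  have hGK : ∀ t : ℝ, 0 ≤ t → K t = Real.exp (-(t/p)) * G t := by
    intro t ht
    simp only [hGdef, max_eq_left ht]
    rw [← mul_assoc, ← Real.exp_add, neg_add_cancel, Real.exp_zero, one_mul]
  -- the pointwise norm identity & strict antitonicity of the real kernel
  have hfid : ∀ (x t : ℝ), 0 ≤ t → K t * Real.exp (-x*t)
      = Real.exp (-(x+1/p)*t) * (Real.exp (t/p) * K t) := by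
    intro x t ht
    rw [← mul_assoc, ← Real.exp_add]
    have : -(x+1/p)*t + t/p = -x*t := by ring
    rw [this]; ring
  -- Part A : integrability
  have A : ∀ z : ℂ, -1 / p < z.re →
      IntegrableOn (fun t : ℝ => (K t : ℂ) * Complex.exp (-z * (t : ℂ))) (Set.Ioi 0) := by
    intro z hz
    have hε : 0 < z.re + 1/p := by
      have : -1/p = -(1/p) := by ring
      rw [this] at hz; linarith
    refine Integrable.mono' (g := fun t => G 0 * Real.exp (-(z.re+1/p)*t))
      (((exp_neg_integrableOn_Ioi 0 hε).const_mul (G 0))) ?_ ?_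
    · -- a.e. strong measurability
      have hM : Measurable fun t : ℝ =>
          ((Real.exp (-(t/p)) * G t : ℝ) : ℂ) * Complex.exp (-z*(t:ℂ)) := by
        apply Measurable.mul
        · exact Complex.measurable_ofReal.comp
            ((Real.measurable_exp.comp (measurable_id.div_const p).neg).mul hGmeas)
        · exact Complex.measurable_exp.comp
            ((Complex.measurable_ofReal.const_mul (-z)))
      refine hM.aestronglyMeasurable.congr ?_
      refine ((ae_restrict_iff' measurableSet_Ioi).2 (Eventually.of_forall fun t ht => ?_))
      dsimp only
      rw [← hGK t (le_of_lt ht)]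
    · refine (ae_restrict_iff' measurableSet_Ioi).2 (Eventually.of_forall fun t ht => ?_)
      have ht0 : (0:ℝ) ≤ t := le_of_lt ht
      have hnorm : ‖(K t : ℂ) * Complex.exp (-z*(t:ℂ))‖ = K t * Real.exp (-z.re*t) := by
        rw [norm_mul, Complex.norm_real, Real.norm_eq_abs, 
          Complex.norm_exp, hre, abs_of_pos (hKt t ht0)]
      rw [hnorm, hfid z.re t ht0]
      have h1 : Real.exp (t/p) * K t ≤ G 0 := by
        have := hKmono (self_mem_Ici) (mem_Ici.mpr ht0) ht0
        simpa [hGdef] using this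
      calc Real.exp (-(z.re+1/p)*t) * (Real.exp (t/p) * K t)
          ≤ Real.exp (-(z.re+1/p)*t) * G 0 :=
            mul_le_mul_of_nonneg_left h1 (Real.exp_pos _).le
        _ = G 0 * Real.exp (-(z.re+1/p)*t) := mul_comm _ _
  -- real-kernel facts
  have hfprops : ∀ x : ℝ, -1/p < x →
      IntegrableOn (fun t => K t * Real.exp (-x*t)) (Set.Ioi 0) ∧
      (∀ t ∈ Set.Ici (0:ℝ), 0 < K t * Real.exp (-x*t)) ∧
      StrictAntiOn (fun t => K t * Real.exp (-x*t)) (Set.Ici 0) := by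
    intro x hx
    have hε : 0 < x + 1/p := by
      have : -1/p = -(1/p) := by ring
      rw [this] at hx; linarith
    refine ⟨?_, ?_, ?_⟩
    · have := (A (x:ℂ) (by simpa using hx)).norm
      refine this.congr ?_
      refine (ae_restrict_iff' measurableSet_Ioi).2 (Eventually.of_forall fun t ht => ?_)
      dsimp only
      rw [norm_mul, Complex.norm_real, Real.norm_eq_abs, 
        Complex.norm_exp, hre, abs_of_pos (hKt t ht.le)]
      norm_num
    · intro t ht
      exact mul_pos (hKt t ht) (Real.exp_pos _)
    · intro s hs t ht hst
      show K t * Real.exp (-x*t) < K s * Real.exp (-x*s)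
      rw [hfid x s hs, hfid x t ht]
      have h1 : Real.exp (t/p) * K t ≤ Real.exp (s/p) * K s := hKmono hs ht hst.le
      have h2 : Real.exp (-(x+1/p)*t) < Real.exp (-(x+1/p)*s) := by
        apply Real.exp_lt_exp.mpr
        nlinarith
      calc Real.exp (-(x+1/p)*t) * (Real.exp (t/p) * K t)
          ≤ Real.exp (-(x+1/p)*t) * (Real.exp (s/p) * K s) :=
            mul_le_mul_of_nonneg_left h1 (Real.exp_pos _).le
        _ < Real.exp (-(x+1/p)*s) * (Real.exp (s/p) * K s) :=
            mul_lt_mul_of_pos_right h2 (hKpos s hs)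
  -- Part D : real positivity
  have D : ∀ x : ℝ, -1 / p < x → 0 < ∫ t in Set.Ioi (0:ℝ), K t * Real.exp (-x * t) := by
    intro x hx
    obtain ⟨hint, hpos, -⟩ := hfprops x hx
    rw [setIntegral_pos_iff_support_of_nonneg_ae ?_ hint]
    · have hsub : Set.Ioi (0:ℝ) ⊆ Function.support (fun t => K t * Real.exp (-x*t)) := by
        intro t ht
        exact (hpos t (Set.mem_Ici.mpr ht.le)).ne'
      calc (0:ENNReal) < volume (Set.Ioi (0:ℝ)) := by simp [Real.volume_Ioi]
        _ = volume (Function.support (fun t => K t * Real.exp (-x*t)) ∩ Set.Ioi 0) := by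
            rw [Set.inter_eq_right.mpr hsub]
    · refine (ae_restrict_iff' measurableSet_Ioi).2 (Eventually.of_forall fun t ht => ?_)
      exact (hpos t (Set.mem_Ici.mpr ht.le)).le
  -- Part C : nonzero imaginary part
  have C : ∀ z : ℂ, -1 / p < z.re → z.im ≠ 0 →
      (∫ t in Set.Ioi (0:ℝ), (K t : ℂ) * Complex.exp (-z * (t : ℂ))).im ≠ 0 := by
    intro z hz hzim
    obtain ⟨hint, hpos, hanti⟩ := hfprops z.re hz
    have him_eq : (∫ t in Set.Ioi (0:ℝ), (K t : ℂ) * Complex.exp (-z * (t : ℂ))).im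
        = -∫ t in Set.Ioi (0:ℝ), (K t * Real.exp (-z.re*t)) * Real.sin (z.im * t) := by
      have h1 := integral_im (A z hz)
      simp only [RCLike.im_to_complex] at h1
      rw [← h1, ← integral_neg]
      congr 1
      funext t
      rw [Complex.mul_im, Complex.ofReal_re, Complex.ofReal_im, Complex.exp_im, hre, him]
      rw [show -z.im*t = -(z.im*t) by ring, Real.sin_neg]
      ring
    rw [him_eq]
    rcases lt_or_gt_of_ne hzim with hy | hy
    · -- z.im < 0
      have hcore := sin_core hint hpos hanti (y := -z.im) (by linarith)
      have : (∫ t in Set.Ioi (0:ℝ), (K t * Real.exp (-z.re*t)) * Real.sin (z.im * t))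
          = -∫ t in Set.Ioi (0:ℝ), (K t * Real.exp (-z.re*t)) * Real.sin ((-z.im) * t) := by
        rw [← integral_neg]
        congr 1; funext t
        rw [show (-z.im)*t = -(z.im*t) by ring, Real.sin_neg]; ring
      rw [this]
      simp only [neg_neg]
      exact hcore.ne'
    · -- z.im > 0
      have hcore := sin_core hint hpos hanti (y := z.im) hy
      exact neg_ne_zero.mpr hcore.ne'
  -- Part B
  have B : ∀ z : ℂ, -1 / p < z.re →
      1 + (∫ t in Set.Ioi (0:ℝ), (K t : ℂ) * Complex.exp (-z * (t : ℂ))) ≠ 0 := by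
    intro z hz
    by_cases hzim : z.im = 0
    · -- z is real
      have hzeq : z = (z.re : ℂ) := by
        apply Complex.ext <;> simp [hzim]
      have heq : (∫ t in Set.Ioi (0:ℝ), (K t : ℂ) * Complex.exp (-z * (t : ℂ)))
          = ((∫ t in Set.Ioi (0:ℝ), K t * Real.exp (-z.re * t) : ℝ) : ℂ) := by
        have hfun : (fun t : ℝ => (K t : ℂ) * Complex.exp (-z * (t : ℂ)))
            = fun t : ℝ => ((K t * Real.exp (-z.re * t) : ℝ) : ℂ) := by
          funext t
          rw [hzeq, Complex.ofReal_mul, Complex.ofReal_exp]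
          congr 1
          simp only [Complex.ofReal_re]
          push_cast
          ring
        rw [hfun]
        exact integral_ofReal
      rw [heq]
      have hr := D z.re hz
      intro h
      have : ((1 + ∫ t in Set.Ioi (0:ℝ), K t * Real.exp (-z.re * t) : ℝ) : ℂ) = 0 := by
        push_cast; convert h using 2
      have h2 : (1 + ∫ t in Set.Ioi (0:ℝ), K t * Real.exp (-z.re * t) : ℝ) = 0 := by
        exact_mod_cast this
      linarith
    · intro h
      have := congrArg Complex.im h
      simp only [Complex.add_im, Complex.one_im, Complex.zero_im, zero_add] at this
      exact C z hz hzim this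
  exact ⟨A, B, C, D⟩
end

section
/- (Lemma 3.1.) Let p > 0 and suppose h : (0,∞) → ℝ is C², positive, decreasing, convex, integrable on (0,1), lim_{y→∞} h(y) = h_∞ > 0, sup_{y>0} y|h'(y)| < ∞, and h'(y) + (1 + y/p) y h''(y) ≥ 0 for all y > 0. Let φ : (0,∞) → ℝ be a negative integrable function, let I_p > 0 be a constant, and assume d := p I_p + ∫_0^∞ φ(y) (Aξ_p)(y) dy > 0. Define K(t) = −(1/d) ∫_0^∞ φ(y) (e^{−Bt} B(Aξ_p))(y) dy for t ≥ 0. Then the function t ↦ e^{t/p} K(t) is positive and decreasing on [0,∞). -/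
open MeasureTheory Real Filter Set

/-- The operator (Aζ)(y) = ζ(y) − yζ'(y). -/
noncomputable def opA (ζ : ℝ → ℝ) : ℝ → ℝ := fun y => ζ y - y * deriv ζ y

/-- The operator (Bζ)(y) = (1/p)ζ(y) − (1 + y/p)ζ'(y). -/
noncomputable def opB (p : ℝ) (ζ : ℝ → ℝ) : ℝ → ℝ :=
  fun y => (1 / p) * ζ y - (1 + y / p) * deriv ζ y

/-- The equilibrium profile ξ_p(y) = (p+y)∫_y^∞ p h(y')/(p+y')² dy'. -/
noncomputable def xiP (p : ℝ) (h : ℝ → ℝ) : ℝ → ℝ :=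
  fun y => (p + y) * ∫ y' in Set.Ioi y, p * h y' / (p + y') ^ 2

/-- The semigroup (e^{−Bt}ζ)(y) = e^{−t/p} ζ(e^{t/p}y + p(e^{t/p} − 1)). -/
noncomputable def sgB (p t : ℝ) (ζ : ℝ → ℝ) : ℝ → ℝ :=
  fun y => Real.exp (-t / p) * ζ (Real.exp (t / p) * y + p * (Real.exp (t / p) - 1))

/-- The pairing ⟨φ, ζ⟩ = ∫_0^∞ φ(y)ζ(y) dy. -/
noncomputable def pairing (φ ζ : ℝ → ℝ) : ℝ := ∫ y in Set.Ioi (0:ℝ), φ y * ζ y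

noncomputable def auxf (p : ℝ) (h : ℝ → ℝ) : ℝ → ℝ := fun y => p * h y / (p + y) ^ 2
noncomputable def auxF (p : ℝ) (h : ℝ → ℝ) : ℝ → ℝ := fun y => ∫ y' in Set.Ioi y, auxf p h y'
noncomputable def auxg (p : ℝ) (h : ℝ → ℝ) : ℝ → ℝ :=
  fun y => auxF p h y + y * h y / (p + y) - y * deriv h y

section aux
variable {p : ℝ} {h : ℝ → ℝ} (hp : 0 < p) (hh2 : ContDiffOn ℝ 2 h (Set.Ioi 0))

include hh2 in
lemma hcont : ContinuousOn h (Set.Ioi 0) := hh2.continuousOn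

include hh2 in
lemma hdiff : DifferentiableOn ℝ h (Set.Ioi 0) := hh2.differentiableOn (by norm_num)

include hh2 in
lemma hderiv1 : ContDiffOn ℝ 1 (deriv h) (Set.Ioi 0) := by
  have : (2 : WithTop ℕ∞) = 1 + 1 := by norm_num
  rw [this, contDiffOn_succ_iff_deriv_of_isOpen isOpen_Ioi] at hh2
  exact hh2.2.2

include hh2 in
lemma hdcont : ContinuousOn (deriv h) (Set.Ioi 0) := (hderiv1 hh2).continuousOn

include hh2 in
lemma hddiff : DifferentiableOn ℝ (deriv h) (Set.Ioi 0) := (hderiv1 hh2).differentiableOn (by norm_num)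

include hp hh2 in
lemma fcont : ContinuousOn (auxf p h) (Set.Ioi 0) := by
  apply ((continuousOn_const.mul (hcont hh2)).div ((continuousOn_const.add continuousOn_id).pow 2))
  intro x hx
  have : 0 < p + x := by linarith [mem_Ioi.1 hx]
  show (p + x) ^ 2 ≠ 0
  positivity
end aux

section aux2
variable {p : ℝ} {h : ℝ → ℝ} (hp : 0 < p) (hh2 : ContDiffOn ℝ 2 h (Set.Ioi 0))
    (hpos : ∀ y > (0:ℝ), 0 < h y) (hdec : AntitoneOn h (Set.Ioi 0))
    (hint : IntegrableOn h (Set.Ioo (0:ℝ) 1))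

include hp hh2 hpos hdec hint in
lemma fint : IntegrableOn (auxf p h) (Set.Ioi 0) := by
  have hsplit : Set.Ioi (0:ℝ) = Set.Ioo 0 1 ∪ Set.Ici 1 := by
    rw [Set.Ioo_union_Ici_eq_Ioi one_pos]
  rw [hsplit]
  apply IntegrableOn.union
  · -- on Ioo 0 1, dominate by h/p
    apply Integrable.mono' (hint.const_mul (1/p))
    · exact ((fcont hp hh2).mono Set.Ioo_subset_Ioi_self).aestronglyMeasurable measurableSet_Ioo
    · filter_upwards [ae_restrict_mem measurableSet_Ioo] with x hx
      have hx0 : 0 < x := hx.1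
      have hhx := (hpos x hx0).le
      have hpx : p ^ 2 ≤ (p + x) ^ 2 := by nlinarith
      rw [Real.norm_eq_abs, auxf, abs_of_nonneg (by positivity)]
      calc p * h x / (p + x) ^ 2 ≤ p * h x / p ^ 2 :=
            div_le_div_of_nonneg_left (by positivity) (by positivity) hpx
        _ = 1 / p * h x := by field_simp
  · -- on Ici 1, dominate by p * h 1 * (p+y)⁻¹^2
    have hbase : IntegrableOn (fun y : ℝ => (p + y)⁻¹ ^ 2) (Set.Ici 1) := by
      rw [integrableOn_Ici_iff_integrableOn_Ioi]
      apply (integrableOn_Ioi_rpow_of_lt (show (-2:ℝ) < -1 by norm_num) one_pos).mono'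
      · apply (ContinuousOn.aestronglyMeasurable _ measurableSet_Ioi)
        apply ContinuousOn.pow
        apply ContinuousOn.inv₀ (continuousOn_const.add continuousOn_id)
        intro x hx; have := mem_Ioi.1 hx; show p + x ≠ 0; positivity
      · filter_upwards [ae_restrict_mem measurableSet_Ioi] with x hx
        have hx1 : (1:ℝ) < x := hx
        have h0 : (0:ℝ) < x := by linarith
        have hxx : x ^ (-2:ℝ) = (x ^ 2)⁻¹ := by
          rw [rpow_neg h0.le, ← rpow_natCast x 2]; norm_num
        rw [hxx, Real.norm_eq_abs, ← inv_pow, abs_of_nonneg (by positivity)]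
        gcongr
        linarith
    apply Integrable.mono' (hbase.const_mul (p * h 1))
    · exact ((fcont hp hh2).mono (fun x (hx : x ∈ Set.Ici (1:ℝ)) => Set.mem_Ioi.2 (lt_of_lt_of_le one_pos hx))).aestronglyMeasurable measurableSet_Ici
    · filter_upwards [ae_restrict_mem measurableSet_Ici] with x hx
      have hx1 : (1:ℝ) ≤ x := hx
      have h0 : (0:ℝ) < x := lt_of_lt_of_le one_pos hx1
      have hhx := (hpos x h0).le
      have hmono : h x ≤ h 1 := hdec (mem_Ioi.2 one_pos) (mem_Ioi.2 h0) hx1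
      have hpx : (0:ℝ) < p + x := by linarith
      rw [Real.norm_eq_abs, auxf, abs_of_nonneg (by positivity), inv_pow, div_eq_mul_inv]
      exact mul_le_mul_of_nonneg_right (mul_le_mul_of_nonneg_left hmono hp.le) (by positivity)
end aux2

section aux3
variable {p : ℝ} {h : ℝ → ℝ} (hp : 0 < p) (hh2 : ContDiffOn ℝ 2 h (Set.Ioi 0))
    (hpos : ∀ y > (0:ℝ), 0 < h y) (hdec : AntitoneOn h (Set.Ioi 0))
    (hint : IntegrableOn h (Set.Ioo (0:ℝ) 1))

include hp hh2 hpos hdec hint in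
lemma Fhasderiv : ∀ x ∈ Set.Ioi (0:ℝ), HasDerivAt (auxF p h) (-(auxf p h x)) x := by
  intro x hx
  have hx0 : (0:ℝ) < x := hx
  have hfI : IntegrableOn (auxf p h) (Set.Ioi 0) := fint hp hh2 hpos hdec hint
  set c := x / 2 with hc
  have hc0 : 0 < c := by positivity
  have hcx : c < x := by linarith
  have heq : ∀ᶠ y in nhds x, auxF p h y
      = (∫ t in Set.Ioi c, auxf p h t) - ∫ t in c..y, auxf p h t := by
    filter_upwards [Ioi_mem_nhds hcx] with y hy
    have hcy : c < y := hy
    rw [intervalIntegral.integral_of_le hcy.le]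
    have hu : Set.Ioc c y ∪ Set.Ioi y = Set.Ioi c := Set.Ioc_union_Ioi_eq_Ioi hcy.le
    have hsum : (∫ t in Set.Ioc c y ∪ Set.Ioi y, auxf p h t)
        = (∫ t in Set.Ioc c y, auxf p h t) + ∫ t in Set.Ioi y, auxf p h t := by
      apply setIntegral_union Set.Ioc_disjoint_Ioi_same measurableSet_Ioi
      · exact hfI.mono_set (fun t ht => lt_trans hc0 ht.1)
      · exact hfI.mono_set (Set.Ioi_subset_Ioi (by linarith [lt_trans hc0 hcy]))
    rw [hu] at hsum
    simp only [auxF]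
    linarith
  have hD2 : HasDerivAt (fun y => ∫ t in c..y, auxf p h t) (auxf p h x) x := by
    apply intervalIntegral.integral_hasDerivAt_right
    · apply IntegrableOn.intervalIntegrable
      apply hfI.mono_set
      intro t ht
      rw [Set.uIcc_of_le hcx.le] at ht
      exact lt_of_lt_of_le hc0 ht.1
    · exact (fcont hp hh2).stronglyMeasurableAtFilter isOpen_Ioi x hx
    · exact (fcont hp hh2 x hx).continuousAt (Ioi_mem_nhds hx0)
  have := (hasDerivAt_const x (∫ t in Set.Ioi c, auxf p h t)).sub hD2
  rw [zero_sub] at this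
  exact this.congr_of_eventuallyEq heq
end aux3

section aux4
variable {p : ℝ} {h : ℝ → ℝ} (hp : 0 < p) (hh2 : ContDiffOn ℝ 2 h (Set.Ioi 0))
    (hpos : ∀ y > (0:ℝ), 0 < h y) (hdec : AntitoneOn h (Set.Ioi 0))
    (hint : IntegrableOn h (Set.Ioo (0:ℝ) 1))

include hp hpos in
lemma fnonneg : ∀ y ∈ Set.Ioi (0:ℝ), 0 ≤ auxf p h y := by
  intro y hy
  have := (hpos y hy).le
  have hpy : (0:ℝ) < p + y := by have : (0:ℝ) < y := hy; linarith
  unfold auxf; positivity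

include hp hpos in
lemma Fnonneg : ∀ y ∈ Set.Ioi (0:ℝ), 0 ≤ auxF p h y := by
  intro y hy
  apply setIntegral_nonneg measurableSet_Ioi
  intro t ht
  exact fnonneg hp hpos t (Set.mem_Ioi.2 (lt_trans (Set.mem_Ioi.1 hy) (Set.mem_Ioi.1 ht)))

include hp hh2 hpos hdec hint in
lemma Fbound : ∀ y ∈ Set.Ioi (0:ℝ), auxF p h y ≤ ∫ t in Set.Ioi (0:ℝ), auxf p h t := by
  intro y hy
  apply setIntegral_mono_set (fint hp hh2 hpos hdec hint)
  · filter_upwards [ae_restrict_mem measurableSet_Ioi] with t ht using fnonneg hp hpos t ht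
  · exact (Set.Ioi_subset_Ioi (le_of_lt hy)).eventuallyLE

include hh2 hdec in
lemma dh_nonpos : ∀ x ∈ Set.Ioi (0:ℝ), deriv h x ≤ 0 := by
  intro x hx
  have hx0 : (0:ℝ) < x := hx
  have hd : HasDerivAt h (deriv h x) x :=
    ((hdiff hh2 x hx).differentiableAt (Ioi_mem_nhds hx0)).hasDerivAt
  rw [hasDerivAt_iff_tendsto_slope] at hd
  have h2 : Tendsto (slope h x) (nhdsWithin x (Set.Ioi x)) (nhds (deriv h x)) :=
    hd.mono_left (nhdsWithin_mono x (fun y hy => Set.mem_compl_singleton_iff.2 (LT.lt.ne' hy)))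
  apply le_of_tendsto h2
  filter_upwards [self_mem_nhdsWithin] with y hy
  have hxy : x < y := hy
  rw [slope_def_field]
  have hle : h y ≤ h x := hdec hx (lt_trans hx0 hxy) hxy.le
  have : (0:ℝ) < y - x := by linarith
  exact div_nonpos_of_nonpos_of_nonneg (by linarith) (by linarith)

include hp hpos hdec hint in
lemma yh_bound : ∀ y > (0:ℝ), y * h y / (p + y) ≤ (2 / p) * (∫ t in Set.Ioo (0:ℝ) 1, h t) + h 1 := by
  intro y hy
  have hpy : (0:ℝ) < p + y := by linarith
  have hJ : 0 ≤ ∫ t in Set.Ioo (0:ℝ) 1, h t := by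
    apply setIntegral_nonneg measurableSet_Ioo
    intro t ht; exact (hpos t ht.1).le
  rcases lt_or_ge y 1 with hy1 | hy1
  · -- y < 1 : (y/2) h y ≤ J
    have hsub : Set.Ioc (y/2) y ⊆ Set.Ioo (0:ℝ) 1 := by
      intro t ht; exact ⟨by linarith [ht.1], lt_of_le_of_lt ht.2 hy1⟩
    have hmono : (y/2) * h y ≤ ∫ t in Set.Ioc (y/2) y, h t := by
      have hconst : (y/2) * h y = ∫ _ in Set.Ioc (y/2) y, h y := by
        rw [setIntegral_const, measureReal_def, Real.volume_Ioc, smul_eq_mul]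
        rw [ENNReal.toReal_ofReal (by linarith)]
        ring_nf
      rw [hconst]
      apply setIntegral_mono_on ((integrableOn_const ?_)) (hint.mono_set hsub)
          measurableSet_Ioc ?_
      · rw [Real.volume_Ioc]; exact ENNReal.ofReal_ne_top
      · intro t ht
        exact hdec (hsub ht).1 hy ht.2
    have hJ2 : (∫ t in Set.Ioc (y/2) y, h t) ≤ ∫ t in Set.Ioo (0:ℝ) 1, h t := by
      apply setIntegral_mono_set hint
      · filter_upwards [ae_restrict_mem measurableSet_Ioo] with t ht using (hpos t ht.1).le
      · exact hsub.eventuallyLE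
    have hyh : y * h y ≤ 2 * ∫ t in Set.Ioo (0:ℝ) 1, h t := by linarith
    have h1pos := (hpos 1 one_pos).le
    calc y * h y / (p + y) ≤ y * h y / p :=
          div_le_div_of_nonneg_left (by nlinarith [(hpos y hy).le]) hp (by linarith)
      _ ≤ (2 * ∫ t in Set.Ioo (0:ℝ) 1, h t) / p := by gcongr
      _ = (2 / p) * (∫ t in Set.Ioo (0:ℝ) 1, h t) := by ring
      _ ≤ _ := by linarith
  · -- y ≥ 1
    have hle : h y ≤ h 1 := hdec (Set.mem_Ioi.2 one_pos) hy hy1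
    have : y * h y / (p + y) ≤ h y := by
      rw [div_le_iff₀ hpy]
      nlinarith [(hpos y hy).le, hp]
    have h2p : 0 ≤ 2 / p * ∫ t in Set.Ioo (0:ℝ) 1, h t := by positivity
    linarith
end aux4

section aux5
variable {p : ℝ} {h : ℝ → ℝ} (hp : 0 < p) (hh2 : ContDiffOn ℝ 2 h (Set.Ioi 0))
    (hpos : ∀ y > (0:ℝ), 0 < h y) (hdec : AntitoneOn h (Set.Ioi 0))
    (hint : IntegrableOn h (Set.Ioo (0:ℝ) 1))

include hp hh2 hpos hdec hint in
lemma xi_hasderiv : ∀ x ∈ Set.Ioi (0:ℝ),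
    HasDerivAt (xiP p h) (auxF p h x - p * h x / (p + x)) x := by
  intro x hx
  have hx0 : (0:ℝ) < x := hx
  have hpx : (0:ℝ) < p + x := by linarith
  have hF := Fhasderiv hp hh2 hpos hdec hint x hx
  have hD := ((hasDerivAt_const x p).add (hasDerivAt_id x)).mul hF
  have : xiP p h = fun y => (p + y) * auxF p h y := rfl
  rw [this]
  refine hD.congr_deriv ?_
  simp only [Pi.add_apply, id_eq]
  unfold auxf
  field_simp
  ring

include hp hh2 hpos hdec hint in
lemma opA_eq : ∀ x ∈ Set.Ioi (0:ℝ),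
    opA (xiP p h) x = p * (auxF p h x + x * h x / (p + x)) := by
  intro x hx
  have hx0 : (0:ℝ) < x := hx
  have hpx : (0:ℝ) < p + x := by linarith
  have hd := (xi_hasderiv hp hh2 hpos hdec hint x hx).deriv
  unfold opA
  rw [hd]
  show (p + x) * auxF p h x - x * (auxF p h x - p * h x / (p + x)) = _
  field_simp
  ring

include hp hh2 hpos hdec hint in
lemma opA_hasderiv : ∀ x ∈ Set.Ioi (0:ℝ),
    HasDerivAt (opA (xiP p h)) (p * x * deriv h x / (p + x)) x := by
  intro x hx
  have hx0 : (0:ℝ) < x := hx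
  have hpx : (0:ℝ) < p + x := by linarith
  have hF := Fhasderiv hp hh2 hpos hdec hint x hx
  have hh : HasDerivAt h (deriv h x) x :=
    ((hdiff hh2 x hx).differentiableAt (Ioi_mem_nhds hx0)).hasDerivAt
  have hnum : HasDerivAt (fun y => y * h y) (1 * h x + x * deriv h x) x :=
    (hasDerivAt_id x).mul hh
  have hden : HasDerivAt (fun y => p + y) 1 x := by
    exact (hasDerivAt_id' x).const_add p
  have hquot := hnum.div hden (ne_of_gt hpx)
  have hw := (hF.add hquot).const_mul p
  have heq : (fun y => p * (auxF p h y + y * h y / (p + y))) =ᶠ[nhds x] opA (xiP p h) := by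
    filter_upwards [Ioi_mem_nhds hx0] with y hy
    exact (opA_eq hp hh2 hpos hdec hint y hy).symm
  have := hw.congr_of_eventuallyEq heq.symm
  refine this.congr_deriv ?_
  unfold auxf
  field_simp
  ring

include hp hh2 hpos hdec hint in
lemma opB_eq_g : ∀ x ∈ Set.Ioi (0:ℝ), opB p (opA (xiP p h)) x = auxg p h x := by
  intro x hx
  have hx0 : (0:ℝ) < x := hx
  have hpx : (0:ℝ) < p + x := by linarith
  have hd := (opA_hasderiv hp hh2 hpos hdec hint x hx).deriv
  unfold opB auxg
  rw [hd, opA_eq hp hh2 hpos hdec hint x hx]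
  field_simp
end aux5

section aux6
variable {p : ℝ} {h : ℝ → ℝ} (hp : 0 < p) (hh2 : ContDiffOn ℝ 2 h (Set.Ioi 0))
    (hpos : ∀ y > (0:ℝ), 0 < h y) (hdec : AntitoneOn h (Set.Ioi 0))
    (hint : IntegrableOn h (Set.Ioo (0:ℝ) 1))

include hp hh2 hpos hdec hint in
lemma g_hasderiv : ∀ x ∈ Set.Ioi (0:ℝ),
    HasDerivAt (auxg p h)
      (-(p * deriv h x / (p + x) + x * deriv (deriv h) x)) x := by
  intro x hx
  have hx0 : (0:ℝ) < x := hx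
  have hpx : (0:ℝ) < p + x := by linarith
  have hF := Fhasderiv hp hh2 hpos hdec hint x hx
  have hh : HasDerivAt h (deriv h x) x :=
    ((hdiff hh2 x hx).differentiableAt (Ioi_mem_nhds hx0)).hasDerivAt
  have hdh : HasDerivAt (deriv h) (deriv (deriv h) x) x :=
    ((hddiff hh2 x hx).differentiableAt (Ioi_mem_nhds hx0)).hasDerivAt
  have hnum : HasDerivAt (fun y => y * h y) (1 * h x + x * deriv h x) x :=
    (hasDerivAt_id x).mul hh
  have hden : HasDerivAt (fun y => p + y) 1 x := by
    exact (hasDerivAt_id' x).const_add p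
  have hquot := hnum.div hden (ne_of_gt hpx)
  have hlast : HasDerivAt (fun y => y * deriv h y) (1 * deriv h x + x * deriv (deriv h) x) x :=
    (hasDerivAt_id x).mul hdh
  have hw := (hF.add hquot).sub hlast
  have : auxg p h = fun y => (auxF p h y + y * h y / (p + y)) - y * deriv h y := rfl
  rw [this]
  refine hw.congr_deriv ?_
  unfold auxf
  field_simp
  ring

include hp hh2 hpos hdec hint in
lemma g_antitone (hineq : ∀ y > (0:ℝ), 0 ≤ deriv h y + (1 + y / p) * y * iteratedDeriv 2 h y) :
    AntitoneOn (auxg p h) (Set.Ioi 0) := by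
  apply antitoneOn_of_deriv_nonpos (convex_Ioi 0)
  · intro x hx
    exact (g_hasderiv hp hh2 hpos hdec hint x hx).continuousAt.continuousWithinAt
  · rw [interior_Ioi]
    intro x hx
    exact (g_hasderiv hp hh2 hpos hdec hint x hx).differentiableAt.differentiableWithinAt
  · rw [interior_Ioi]
    intro x hx
    have hx0 : (0:ℝ) < x := hx
    have hpx : (0:ℝ) < p + x := by linarith
    rw [(g_hasderiv hp hh2 hpos hdec hint x hx).deriv]
    have h2 : iteratedDeriv 2 h x = deriv (deriv h) x := by
      rw [show (2:ℕ) = 1 + 1 from rfl, iteratedDeriv_succ, iteratedDeriv_one]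
    have h1 := hineq x hx0
    rw [h2] at h1
    have key : 0 ≤ p * deriv h x / (p + x) + x * deriv (deriv h) x := by
      have e : p * deriv h x / (p + x) + x * deriv (deriv h) x
          = (deriv h x + (1 + x / p) * x * deriv (deriv h) x) * (p / (p + x)) := by
        field_simp
      rw [e]
      exact mul_nonneg h1 (by positivity)
    linarith

include hp hh2 hpos hdec hint in
lemma g_pos : ∀ y ∈ Set.Ioi (0:ℝ), 0 < auxg p h y := by
  intro y hy
  have hy0 : (0:ℝ) < y := hy
  have hpy : (0:ℝ) < p + y := by linarith
  have h1 := Fnonneg hp hpos y hy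
  have h2 : 0 < y * h y / (p + y) := by
    have := hpos y hy0
    positivity
  have h3 := dh_nonpos hh2 hdec y hy
  have : 0 ≤ -(y * deriv h y) := by nlinarith
  unfold auxg
  linarith

include hp hh2 hpos hdec hint in
lemma g_bounded {M : ℝ} (hd1 : ∀ y > (0:ℝ), y * |deriv h y| ≤ M) :
    ∀ y ∈ Set.Ioi (0:ℝ), auxg p h y
      ≤ (∫ t in Set.Ioi (0:ℝ), auxf p h t) + ((2 / p) * (∫ t in Set.Ioo (0:ℝ) 1, h t) + h 1) + M := by
  intro y hy
  have hy0 : (0:ℝ) < y := hy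
  have h1 := Fbound hp hh2 hpos hdec hint y hy
  have h2 := yh_bound hp hpos hdec hint y hy0
  have h3 : -(y * deriv h y) ≤ M := by
    have := hd1 y hy0
    have habs : y * deriv h y ≥ -(y * |deriv h y|) := by
      have := neg_abs_le (deriv h y)
      nlinarith
    linarith
  unfold auxg
  linarith
end aux6

/-- Lemma 3.1: the kernel K(t) = −(1/d)⟨φ, e^{−Bt}B(Aξ_p)⟩ has
t ↦ e^{t/p}K(t) positive and decreasing on [0,∞). -/
theorem stmt_3 (p hinf I_p : ℝ) (hp : 0 < p) (h φ : ℝ → ℝ)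
    (hh2 : ContDiffOn ℝ 2 h (Set.Ioi 0))
    (hpos : ∀ y > (0:ℝ), 0 < h y)
    (hdec : AntitoneOn h (Set.Ioi 0))
    (hconv : ConvexOn ℝ (Set.Ioi 0) h)
    (hint : IntegrableOn h (Set.Ioo (0:ℝ) 1))
    (hlim : Tendsto h atTop (nhds hinf)) (hinfpos : 0 < hinf)
    (hd1 : ∃ M, ∀ y > (0:ℝ), y * |deriv h y| ≤ M)
    (hineq : ∀ y > (0:ℝ), 0 ≤ deriv h y + (1 + y / p) * y * iteratedDeriv 2 h y)
    (hφneg : ∀ y > (0:ℝ), φ y < 0)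
    (hφint : IntegrableOn φ (Set.Ioi 0))
    (hIp : 0 < I_p)
    (d : ℝ) (hddef : d = p * I_p + pairing φ (opA (xiP p h))) (hdpos : 0 < d)
    (K : ℝ → ℝ)
    (hK : ∀ t, K t
        = -(1 / d) * ∫ y in Set.Ioi (0:ℝ), φ y * sgB p t (opB p (opA (xiP p h))) y) :
    (∀ t ≥ (0:ℝ), 0 < Real.exp (t / p) * K t) ∧
    AntitoneOn (fun t => Real.exp (t / p) * K t) (Set.Ici 0) := by
  obtain ⟨M, hM⟩ := hd1
  set g : ℝ → ℝ := auxg p h with hg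
  set C : ℝ := (∫ t in Set.Ioi (0:ℝ), auxf p h t)
      + ((2 / p) * (∫ t in Set.Ioo (0:ℝ) 1, h t) + h 1) + M with hC
  have hgpos := g_pos hp hh2 hpos hdec hint
  have hgbdd : ∀ y ∈ Set.Ioi (0:ℝ), g y ≤ C := g_bounded hp hh2 hpos hdec hint hM
  have hganti : AntitoneOn g (Set.Ioi 0) := g_antitone hp hh2 hpos hdec hint hineq
  have hgcont : ContinuousOn g (Set.Ioi 0) := fun x hx =>
    (g_hasderiv hp hh2 hpos hdec hint x hx).continuousAt.continuousWithinAt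
  -- the flow
  set s : ℝ → ℝ → ℝ := fun t y => Real.exp (t / p) * y + p * (Real.exp (t / p) - 1) with hs
  have hsmem : ∀ t ≥ (0:ℝ), ∀ y ∈ Set.Ioi (0:ℝ), y ≤ s t y := by
    intro t ht y hy
    have hy0 : (0:ℝ) < y := hy
    have he : 1 ≤ Real.exp (t / p) := Real.one_le_exp (by positivity)
    simp only [hs]
    nlinarith
  have hsmem' : ∀ t ≥ (0:ℝ), ∀ y ∈ Set.Ioi (0:ℝ), s t y ∈ Set.Ioi (0:ℝ) := by
    intro t ht y hy
    exact lt_of_lt_of_le (Set.mem_Ioi.1 hy) (hsmem t ht y hy)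
  have hsmono : ∀ t₁ t₂, 0 ≤ t₁ → t₁ ≤ t₂ → ∀ y ∈ Set.Ioi (0:ℝ), s t₁ y ≤ s t₂ y := by
    intro t₁ t₂ ht1 ht12 y hy
    have hy0 : (0:ℝ) < y := hy
    have he : Real.exp (t₁ / p) ≤ Real.exp (t₂ / p) := by
      apply Real.exp_le_exp.2
      gcongr
    simp only [hs]
    nlinarith
  -- the integrand rewrite
  set ψ : ℝ → ℝ → ℝ := fun t y => (-φ y) * g (s t y) with hψ
  have hψint : ∀ t ≥ (0:ℝ), IntegrableOn (ψ t) (Set.Ioi 0) := by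
    intro t ht
    apply Integrable.mono' ((hφint.abs).const_mul C)
    · apply AEStronglyMeasurable.mul hφint.neg.aestronglyMeasurable
      apply ContinuousOn.aestronglyMeasurable ?_ measurableSet_Ioi
      apply hgcont.comp
      · exact ((continuous_const.mul continuous_id).add continuous_const).continuousOn
      · intro y hy
        exact hsmem' t ht y hy
    · filter_upwards [ae_restrict_mem measurableSet_Ioi] with y hy
      have h1 := hgpos (s t y) (hsmem' t ht y hy)
      have h2 := hgbdd (s t y) (hsmem' t ht y hy)
      rw [Real.norm_eq_abs, abs_mul, abs_neg, abs_of_pos h1]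
      calc |φ y| * g (s t y) ≤ |φ y| * C := by
            exact mul_le_mul_of_nonneg_left h2 (abs_nonneg _)
        _ = C * |φ y| := by ring
  have hψpos : ∀ t ≥ (0:ℝ), ∀ y ∈ Set.Ioi (0:ℝ), 0 < ψ t y := by
    intro t ht y hy
    have := hφneg y hy
    have := hgpos (s t y) (hsmem' t ht y hy)
    simp only [hψ]
    nlinarith
  -- rewrite e^{t/p} K t
  have hrw : ∀ t ≥ (0:ℝ), Real.exp (t / p) * K t = (1 / d) * ∫ y in Set.Ioi (0:ℝ), ψ t y := by
    intro t ht
    rw [hK t]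
    have hcong : ∫ y in Set.Ioi (0:ℝ), φ y * sgB p t (opB p (opA (xiP p h))) y
        = ∫ y in Set.Ioi (0:ℝ), Real.exp (-t / p) * (-(ψ t y)) := by
      apply setIntegral_congr_fun measurableSet_Ioi
      intro y hy
      have := opB_eq_g hp hh2 hpos hdec hint (s t y) (hsmem' t ht y hy)
      simp only [sgB, hψ]
      rw [show Real.exp (t/p) * y + p * (Real.exp (t/p) - 1) = s t y from rfl, this]
      ring
    rw [hcong, integral_const_mul, integral_neg]
    rw [show -(1/d) * (Real.exp (-t/p) * -∫ y in Set.Ioi (0:ℝ), ψ t y)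
        = (Real.exp (-t/p) * (1/d)) * ∫ y in Set.Ioi (0:ℝ), ψ t y by ring]
    rw [← mul_assoc, ← mul_assoc, ← Real.exp_add]
    rw [show t / p + -t / p = 0 by ring, Real.exp_zero, one_mul]
  constructor
  · intro t ht
    rw [hrw t ht]
    have hpos2 : 0 < ∫ y in Set.Ioi (0:ℝ), ψ t y := by
      rw [setIntegral_pos_iff_support_of_nonneg_ae]
      · have hsub : Set.Ioi (0:ℝ) ⊆ Function.support (ψ t) ∩ Set.Ioi 0 := by
          intro y hy
          exact ⟨ne_of_gt (hψpos t ht y hy), hy⟩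
        calc (0:ENNReal) < volume (Set.Ioi (0:ℝ)) := by simp [Real.volume_Ioi]
          _ ≤ volume (Function.support (ψ t) ∩ Set.Ioi 0) := measure_mono hsub
      · filter_upwards [ae_restrict_mem measurableSet_Ioi] with y hy
        exact (hψpos t ht y hy).le
      · exact hψint t ht
    positivity
  · intro t₁ ht1 t₂ ht2 h12
    show Real.exp (t₂ / p) * K t₂ ≤ Real.exp (t₁ / p) * K t₁
    rw [hrw t₁ ht1, hrw t₂ ht2]
    have hmono : (∫ y in Set.Ioi (0:ℝ), ψ t₂ y) ≤ ∫ y in Set.Ioi (0:ℝ), ψ t₁ y := by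
      apply setIntegral_mono_on (hψint t₂ ht2) (hψint t₁ ht1) measurableSet_Ioi
      intro y hy
      have hle := hganti (hsmem' t₁ ht1 y hy) (hsmem' t₂ ht2 y hy) (hsmono t₁ t₂ ht1 h12 y hy)
      have hφ := (hφneg y hy).le
      simp only [hψ]
      nlinarith
    have : 0 < 1 / d := by positivity
    nlinarith
end

section
/- Let p > 0 and let h : (0,∞) → ℝ be C¹, positive, decreasing, integrable on (0,1), with lim_{y→∞} h(y) = h_∞ finite. Then: (i) lim_{y→0} y h(y) = 0; (ii) for all y > 0, (1/p)(Aξ_p)(y) = ∫_y^∞ p h(y')/(p + y')² dy' + y h(y)/(p + y); (iii) Aξ_p is positive and bounded on (0,∞), and lim_{y→0} (Aξ_p)(y) exists and is finite; (iv) B(Aξ_p)(y) = (1/p)(Aξ_p)(y) − y h'(y) for all y > 0, and consequently B(Aξ_p)(y) ≥ 0 for all y > 0. -/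
open MeasureTheory Real Filter Set

section Aux

variable {p : ℝ} {h : ℝ → ℝ}

/-- continuity of the integrand on `Ioi 0`. -/
lemma fcontOn (hp : 0 < p) (hh1 : ContDiffOn ℝ 1 h (Set.Ioi 0)) :
    ContinuousOn (fun t => p * h t / (p + t) ^ 2) (Set.Ioi 0) := by
  have hc : ContinuousOn h (Set.Ioi 0) := hh1.continuousOn
  exact (continuousOn_const.mul hc).div
    ((continuousOn_const.add continuousOn_id).pow 2)
    (fun t ht => by simp only [Set.mem_Ioi] at ht; positivity)

/-- integrability of the integrand on `Ioi 0`. -/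
lemma fint_s4 (hp : 0 < p) (hh1 : ContDiffOn ℝ 1 h (Set.Ioi 0))
    (hpos : ∀ y > (0:ℝ), 0 < h y) (hdec : AntitoneOn h (Set.Ioi 0))
    (hint : IntegrableOn h (Set.Ioo (0:ℝ) 1)) :
    IntegrableOn (fun t => p * h t / (p + t) ^ 2) (Set.Ioi 0) := by
  have hmeas : ∀ s : Set ℝ, MeasurableSet s → s ⊆ Set.Ioi 0 →
      AEStronglyMeasurable (fun t => p * h t / (p + t) ^ 2) (volume.restrict s) := by
    intro s hs hsub
    exact ((fcontOn hp hh1).mono hsub).aestronglyMeasurable hs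
  rw [← Set.Ioo_union_Ici_eq_Ioi (zero_lt_one : (0:ℝ) < 1)]
  refine IntegrableOn.union ?_ ?_
  · refine Integrable.mono' (hint.div_const p) (hmeas _ measurableSet_Ioo Set.Ioo_subset_Ioi_self) ?_
    rw [ae_restrict_iff' measurableSet_Ioo]
    filter_upwards with t ht
    have h1 : 0 < h t := hpos t ht.1
    have h2 : 0 < p + t := by linarith [ht.1]
    rw [Real.norm_eq_abs, abs_of_nonneg (by positivity)]
    calc p * h t / (p + t) ^ 2 ≤ p * h t / p ^ 2 :=
          div_le_div_of_nonneg_left (by positivity) (by positivity) (by nlinarith [ht.1.le])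
      _ = h t / p := by field_simp
  · have hrp : IntegrableOn (fun t : ℝ => p * h 1 * t ^ (-2:ℝ)) (Set.Ici 1) := by
      rw [integrableOn_Ici_iff_integrableOn_Ioi]
      exact (integrableOn_Ioi_rpow_of_lt (by norm_num) one_pos).const_mul _
    refine Integrable.mono' hrp (hmeas _ measurableSet_Ici (fun t ht => show (0:ℝ) < t from lt_of_lt_of_le one_pos ht)) ?_
    rw [ae_restrict_iff' measurableSet_Ici]
    filter_upwards with t ht
    have ht0 : (0:ℝ) < t := lt_of_lt_of_le one_pos ht
    have h1 : 0 < h t := hpos t ht0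
    have h2 : 0 < p + t := by linarith
    have hle : h t ≤ h 1 := hdec (Set.mem_Ioi.mpr one_pos) (Set.mem_Ioi.mpr ht0) ht
    rw [Real.norm_eq_abs, abs_of_nonneg (by positivity)]
    have hrw : t ^ (-2:ℝ) = (t ^ 2)⁻¹ := by
      rw [show (-2:ℝ) = -((2:ℕ):ℝ) by norm_num, Real.rpow_neg ht0.le, Real.rpow_natCast]
    rw [hrw]
    calc p * h t / (p + t) ^ 2 ≤ p * h t / t ^ 2 :=
          div_le_div_of_nonneg_left (by positivity) (by positivity) (by nlinarith)
      _ ≤ p * h 1 / t ^ 2 := by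
          apply div_le_div_of_nonneg_right ?_ (by positivity)
          · exact mul_le_mul_of_nonneg_left hle hp.le
      _ = p * h 1 * (t ^ 2)⁻¹ := by ring

end Aux

/-- Vanishing of the integral near 0. -/
lemma tendsto_int_Ioo {F : ℝ → ℝ} (hF : IntegrableOn F (Set.Ioo (0:ℝ) 1)) :
    Tendsto (fun y => ∫ t in Set.Ioo (0:ℝ) y, F t) (nhdsWithin 0 (Set.Ioi 0)) (nhds 0) := by
  have h01 : Set.Ioo (0:ℝ) 1 ∈ nhdsWithin (0:ℝ) (Set.Ioi 0) :=
    Ioo_mem_nhdsGT_of_mem (Set.mem_Ico.mpr ⟨le_refl 0, one_pos⟩)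
  have key : Tendsto (fun y => ∫ t in Set.Ioo (0:ℝ) 1, (Set.Ioo (0:ℝ) y).indicator F t)
      (nhdsWithin 0 (Set.Ioi 0)) (nhds 0) := by
    have h0 : Tendsto (fun y => ∫ t in Set.Ioo (0:ℝ) 1, (Set.Ioo (0:ℝ) y).indicator F t)
        (nhdsWithin 0 (Set.Ioi 0)) (nhds (∫ t in Set.Ioo (0:ℝ) 1, (0:ℝ))) := by
      apply tendsto_integral_filter_of_dominated_convergence (fun t => ‖F t‖)
      · filter_upwards with y
        exact hF.aestronglyMeasurable.indicator measurableSet_Ioo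
      · filter_upwards with y
        filter_upwards with t
        exact norm_indicator_le_norm_self F t
      · exact hF.norm
      · rw [ae_restrict_iff' measurableSet_Ioo]
        filter_upwards with t htm
        have hIio : Set.Iio t ∈ nhdsWithin (0:ℝ) (Set.Ioi 0) :=
          nhdsWithin_le_nhds (Iio_mem_nhds htm.1)
        refine tendsto_const_nhds.congr' ?_
        filter_upwards [hIio] with y hy
        have : t ∉ Set.Ioo (0:ℝ) y := fun hc => absurd hc.2 (not_lt.mpr hy.le)
        simp [Set.indicator_of_notMem this]
    simpa using h0
  refine key.congr' ?_
  filter_upwards [h01] with y hy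
  rw [MeasureTheory.setIntegral_indicator measurableSet_Ioo,
    Set.inter_eq_self_of_subset_right (Set.Ioo_subset_Ioo_right hy.2.le)]

/-- Continuity at 0 of the tail integral. -/
lemma tendsto_int_Ioi {F : ℝ → ℝ} (hF : IntegrableOn F (Set.Ioi (0:ℝ))) :
    Tendsto (fun y => ∫ t in Set.Ioi y, F t) (nhdsWithin 0 (Set.Ioi 0))
      (nhds (∫ t in Set.Ioi (0:ℝ), F t)) := by
  have key : Tendsto (fun y => ∫ t in Set.Ioi (0:ℝ), (Set.Ioi y).indicator F t)
      (nhdsWithin 0 (Set.Ioi 0)) (nhds (∫ t in Set.Ioi (0:ℝ), F t)) := by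
    apply tendsto_integral_filter_of_dominated_convergence (fun t => ‖F t‖)
    · filter_upwards with y
      exact hF.aestronglyMeasurable.indicator measurableSet_Ioi
    · filter_upwards with y
      filter_upwards with t
      exact norm_indicator_le_norm_self F t
    · exact hF.norm
    · rw [ae_restrict_iff' measurableSet_Ioi]
      filter_upwards with t htm
      have hIio : Set.Iio t ∈ nhdsWithin (0:ℝ) (Set.Ioi 0) :=
        nhdsWithin_le_nhds (Iio_mem_nhds htm)
      refine tendsto_const_nhds.congr' ?_
      filter_upwards [hIio] with y hy
      rw [Set.indicator_of_mem (Set.mem_Ioi.mpr hy)]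
  refine key.congr' ?_
  filter_upwards [self_mem_nhdsWithin] with y hy
  rw [MeasureTheory.setIntegral_indicator measurableSet_Ioi,
    Set.inter_eq_self_of_subset_right (Set.Ioi_subset_Ioi (le_of_lt hy))]

section Deriv

variable {p : ℝ} {h : ℝ → ℝ}

/-- Derivative of the tail integral. -/
lemma hasDerivAt_g (hp : 0 < p) (hh1 : ContDiffOn ℝ 1 h (Set.Ioi 0))
    (hpos : ∀ y > (0:ℝ), 0 < h y) (hdec : AntitoneOn h (Set.Ioi 0))
    (hint : IntegrableOn h (Set.Ioo (0:ℝ) 1)) {y : ℝ} (hy : 0 < y) :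
    HasDerivAt (fun u => ∫ t in Set.Ioi u, p * h t / (p + t) ^ 2)
      (-(p * h y / (p + y) ^ 2)) y := by
  set f : ℝ → ℝ := fun t => p * h t / (p + t) ^ 2 with hf
  have hfi : IntegrableOn f (Set.Ioi 0) := fint_s4 hp hh1 hpos hdec hint
  have hfc : ContinuousOn f (Set.Ioi 0) := fcontOn hp hh1
  set b : ℝ := y + 1 with hb
  have hyb : y < b := by simp [hb]
  have key : ∀ u ∈ Set.Ioo (0:ℝ) b,
      (∫ t in Set.Ioi u, f t) = (∫ t in u..b, f t) + ∫ t in Set.Ioi b, f t := by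
    intro u hu
    rw [intervalIntegral.integral_of_le (le_of_lt hu.2), ← MeasureTheory.setIntegral_union
      (Set.Ioc_disjoint_Ioi le_rfl) measurableSet_Ioi
      (hfi.mono_set (fun t ht => lt_trans hu.1 ht.1))
      (hfi.mono_set (Set.Ioi_subset_Ioi (by linarith [hu.1]))),
      Set.Ioc_union_Ioi_eq_Ioi (le_of_lt hu.2)]
  have hii : IntervalIntegrable f volume y b := by
    apply IntegrableOn.intervalIntegrable
    apply hfi.mono_set
    intro t ht
    rw [Set.uIcc_of_le (le_of_lt hyb)] at ht
    exact lt_of_lt_of_le hy ht.1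
  have hmeas : StronglyMeasurableAtFilter f (nhds y) volume :=
    ContinuousOn.stronglyMeasurableAtFilter isOpen_Ioi hfc y hy
  have hca : ContinuousAt f y := hfc.continuousAt (isOpen_Ioi.mem_nhds hy)
  have hD : HasDerivAt (fun u => (∫ t in u..b, f t) + ∫ t in Set.Ioi b, f t) (-f y) y :=
    (intervalIntegral.integral_hasDerivAt_left hii hmeas hca).add_const _
  refine hD.congr_of_eventuallyEq ?_
  filter_upwards [isOpen_Ioo.mem_nhds (Set.mem_Ioo.mpr ⟨hy, hyb⟩)] with u hu
  exact key u hu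

/-- Derivative of ξ. -/
lemma hasDerivAt_xi (hp : 0 < p) (hh1 : ContDiffOn ℝ 1 h (Set.Ioi 0))
    (hpos : ∀ y > (0:ℝ), 0 < h y) (hdec : AntitoneOn h (Set.Ioi 0))
    (hint : IntegrableOn h (Set.Ioo (0:ℝ) 1)) {y : ℝ} (hy : 0 < y) :
    HasDerivAt (xiP p h)
      ((∫ t in Set.Ioi y, p * h t / (p + t) ^ 2) - p * h y / (p + y)) y := by
  have hg := hasDerivAt_g hp hh1 hpos hdec hint hy
  have hid : HasDerivAt (fun u : ℝ => p + u) 1 y := by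
    simpa using (hasDerivAt_id y).const_add p
  have := hid.mul hg
  have hpy : p + y ≠ 0 := by positivity
  refine this.congr_deriv ?_
  field_simp
  ring

/-- The explicit formula for `opA (xiP p h)`. -/
lemma opA_eq_s4 (hp : 0 < p) (hh1 : ContDiffOn ℝ 1 h (Set.Ioi 0))
    (hpos : ∀ y > (0:ℝ), 0 < h y) (hdec : AntitoneOn h (Set.Ioi 0))
    (hint : IntegrableOn h (Set.Ioo (0:ℝ) 1)) {y : ℝ} (hy : 0 < y) :
    opA (xiP p h) y
      = p * (∫ t in Set.Ioi y, p * h t / (p + t) ^ 2) + p * (y * h y) / (p + y) := by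
  have hxi := hasDerivAt_xi hp hh1 hpos hdec hint hy
  have hpy : p + y ≠ 0 := by positivity
  rw [opA, xiP, hxi.deriv]
  field_simp
  ring

end Deriv

section More

variable {p : ℝ} {h : ℝ → ℝ}

lemma hasDerivAt_opA (hp : 0 < p) (hh1 : ContDiffOn ℝ 1 h (Set.Ioi 0))
    (hpos : ∀ y > (0:ℝ), 0 < h y) (hdec : AntitoneOn h (Set.Ioi 0))
    (hint : IntegrableOn h (Set.Ioo (0:ℝ) 1)) {y : ℝ} (hy : 0 < y) :
    HasDerivAt (opA (xiP p h)) (p * y * deriv h y / (p + y)) y := by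
  have hg := hasDerivAt_g hp hh1 hpos hdec hint hy
  have hdiff : DifferentiableAt ℝ h y :=
    (hh1.differentiableOn one_ne_zero).differentiableAt (isOpen_Ioi.mem_nhds hy)
  have hh' : HasDerivAt h (deriv h y) y := hdiff.hasDerivAt
  have h2 : HasDerivAt (fun u => p * (u * h u)) (p * (1 * h y + y * deriv h y)) y :=
    ((hasDerivAt_id y).mul hh').const_mul p
  have h3 : HasDerivAt (fun u : ℝ => p + u) 1 y := by simpa using (hasDerivAt_id y).const_add p
  have hpy : p + y ≠ 0 := by positivity
  have h5 := (hg.const_mul p).add (h2.div h3 hpy)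
  have heq : opA (xiP p h) =ᶠ[nhds y]
      fun u => p * (∫ t in Set.Ioi u, p * h t / (p + t) ^ 2) + p * (u * h u) / (p + u) := by
    filter_upwards [isOpen_Ioi.mem_nhds hy] with u hu
    exact opA_eq_s4 hp hh1 hpos hdec hint hu
  have h6 := h5.congr_of_eventuallyEq heq
  refine h6.congr_deriv ?_
  field_simp
  ring

lemma deriv_h_nonpos (hh1 : ContDiffOn ℝ 1 h (Set.Ioi 0))
    (hdec : AntitoneOn h (Set.Ioi 0)) {y : ℝ} (hy : 0 < y) : deriv h y ≤ 0 := by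
  have hdiff : DifferentiableAt ℝ h y :=
    (hh1.differentiableOn one_ne_zero).differentiableAt (isOpen_Ioi.mem_nhds hy)
  have hslope := hasDerivAt_iff_tendsto_slope.mp hdiff.hasDerivAt
  have hsub : Set.Ioi y ⊆ {y}ᶜ := fun t ht => ne_of_gt ht
  have T : Tendsto (slope h y) (nhdsWithin y (Set.Ioi y)) (nhds (deriv h y)) :=
    hslope.mono_left (nhdsWithin_mono y hsub)
  refine le_of_tendsto T ?_
  filter_upwards [self_mem_nhdsWithin] with t ht
  have hty : y < t := ht
  rw [slope_def_field]
  apply div_nonpos_of_nonpos_of_nonneg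
  · have := hdec (Set.mem_Ioi.mpr hy) (Set.mem_Ioi.mpr (lt_trans hy hty)) hty.le
    linarith
  · linarith

lemma yh_le (hpos : ∀ y > (0:ℝ), 0 < h y) (hdec : AntitoneOn h (Set.Ioi 0))
    (hint : IntegrableOn h (Set.Ioo (0:ℝ) 1)) {y : ℝ} (hy : 0 < y) (hy1 : y ≤ 1) :
    y * h y ≤ 2 * ∫ t in Set.Ioo (0:ℝ) y, h t := by
  have hsub1 : Set.Ioo (y/2) y ⊆ Set.Ioo (0:ℝ) y := Set.Ioo_subset_Ioo (by linarith) le_rfl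
  have hsub2 : Set.Ioo (0:ℝ) y ⊆ Set.Ioo (0:ℝ) 1 := Set.Ioo_subset_Ioo le_rfl hy1
  have hi2 : IntegrableOn h (Set.Ioo (0:ℝ) y) := hint.mono_set hsub2
  have hi1 : IntegrableOn h (Set.Ioo (y/2) y) := hi2.mono_set hsub1
  have hstep : h y * (volume (Set.Ioo (y/2) y)).toReal ≤ ∫ t in Set.Ioo (y/2) y, h t := by
    apply setIntegral_ge_of_const_le_real measurableSet_Ioo (measure_Ioo_lt_top).ne ?_ hi1
    intro t htm
    exact hdec (Set.mem_Ioi.mpr (lt_trans (by linarith) htm.1)) (Set.mem_Ioi.mpr hy) htm.2.le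
  have hvol : (volume (Set.Ioo (y/2) y)).toReal = y / 2 := by
    rw [Real.volume_Ioo, ENNReal.toReal_ofReal (by linarith)]
    ring
  have hmono : (∫ t in Set.Ioo (y/2) y, h t) ≤ ∫ t in Set.Ioo (0:ℝ) y, h t := by
    apply setIntegral_mono_set hi2 ?_ (HasSubset.Subset.eventuallyLE hsub1)
    rw [Filter.EventuallyLE, ae_restrict_iff' measurableSet_Ioo]
    filter_upwards with t htm
    exact (hpos t htm.1).le
  rw [hvol] at hstep
  nlinarith

end More

/-- basic properties of Aξ_p and B(Aξ_p). -/
theorem stmt_4 (p hinf : ℝ) (hp : 0 < p) (h : ℝ → ℝ)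
    (hh1 : ContDiffOn ℝ 1 h (Set.Ioi 0))
    (hpos : ∀ y > (0:ℝ), 0 < h y)
    (hdec : AntitoneOn h (Set.Ioi 0))
    (hint : IntegrableOn h (Set.Ioo (0:ℝ) 1))
    (hlim : Tendsto h atTop (nhds hinf)) :
    Tendsto (fun y => y * h y) (nhdsWithin 0 (Set.Ioi 0)) (nhds 0) ∧
    (∀ y > (0:ℝ), (1 / p) * opA (xiP p h) y
        = (∫ y' in Set.Ioi y, p * h y' / (p + y') ^ 2) + y * h y / (p + y)) ∧
    (∀ y > (0:ℝ), 0 < opA (xiP p h) y) ∧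
    (∃ M, ∀ y > (0:ℝ), opA (xiP p h) y ≤ M) ∧
    (∃ L : ℝ, Tendsto (opA (xiP p h)) (nhdsWithin 0 (Set.Ioi 0)) (nhds L)) ∧
    (∀ y > (0:ℝ), opB p (opA (xiP p h)) y = (1 / p) * opA (xiP p h) y - y * deriv h y) ∧
    (∀ y > (0:ℝ), 0 ≤ opB p (opA (xiP p h)) y) := by
  have hfi : IntegrableOn (fun t => p * h t / (p + t) ^ 2) (Set.Ioi 0) :=
    fint_s4 hp hh1 hpos hdec hint
  have h01 : Set.Ioo (0:ℝ) 1 ∈ nhdsWithin (0:ℝ) (Set.Ioi 0) :=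
    Ioo_mem_nhdsGT_of_mem (Set.mem_Ico.mpr ⟨le_refl 0, one_pos⟩)
  -- part (i)
  have part1 : Tendsto (fun y => y * h y) (nhdsWithin 0 (Set.Ioi 0)) (nhds 0) := by
    have T2 : Tendsto (fun y => 2 * ∫ t in Set.Ioo (0:ℝ) y, h t)
        (nhdsWithin 0 (Set.Ioi 0)) (nhds 0) := by
      simpa using (tendsto_int_Ioo hint).const_mul 2
    apply squeeze_zero' ?_ ?_ T2
    · filter_upwards [self_mem_nhdsWithin] with y hy
      exact mul_nonneg (le_of_lt hy) (hpos y hy).le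
    · filter_upwards [h01] with y hy
      exact yh_le hpos hdec hint hy.1 hy.2.le
  -- nonnegativity of the tail integral
  have gpos : ∀ y > (0:ℝ), 0 ≤ ∫ t in Set.Ioi y, p * h t / (p + t) ^ 2 := by
    intro y hy
    apply setIntegral_nonneg measurableSet_Ioi
    intro t ht
    have ht0 : 0 < t := lt_trans hy ht
    have := hpos t ht0
    positivity
  -- part (ii)
  have part2 : ∀ y > (0:ℝ), (1 / p) * opA (xiP p h) y
      = (∫ y' in Set.Ioi y, p * h y' / (p + y') ^ 2) + y * h y / (p + y) := by
    intro y hy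
    rw [opA_eq_s4 hp hh1 hpos hdec hint hy]
    have hpy : p + y ≠ 0 := by positivity
    field_simp
  -- part (iii) positivity
  have part3 : ∀ y > (0:ℝ), 0 < opA (xiP p h) y := by
    intro y hy
    rw [opA_eq_s4 hp hh1 hpos hdec hint hy]
    have h1 := hpos y hy
    have h2 : 0 < p * (y * h y) / (p + y) := by positivity
    have h3 := mul_nonneg hp.le (gpos y hy)
    linarith
  -- part (iii) boundedness
  have part4 : ∀ y > (0:ℝ), opA (xiP p h) y
      ≤ p * (∫ t in Set.Ioi (0:ℝ), p * h t / (p + t) ^ 2)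
        + 2 * (∫ t in Set.Ioo (0:ℝ) 1, h t) + p * h 1 := by
    intro y hy
    rw [opA_eq_s4 hp hh1 hpos hdec hint hy]
    have hpy : (0:ℝ) < p + y := by positivity
    have hG_le : (∫ t in Set.Ioi y, p * h t / (p + t) ^ 2)
        ≤ ∫ t in Set.Ioi (0:ℝ), p * h t / (p + t) ^ 2 := by
      apply setIntegral_mono_set hfi ?_ (HasSubset.Subset.eventuallyLE (Set.Ioi_subset_Ioi hy.le))
      rw [Filter.EventuallyLE, ae_restrict_iff' measurableSet_Ioi]
      filter_upwards with t ht
      have := hpos t ht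
      positivity
    have hG := mul_le_mul_of_nonneg_left hG_le hp.le
    have hIoo_nonneg : 0 ≤ ∫ t in Set.Ioo (0:ℝ) 1, h t :=
      setIntegral_nonneg measurableSet_Ioo fun t ht => (hpos t ht.1).le
    have h1pos : 0 < h 1 := hpos 1 one_pos
    have hyh : 0 ≤ y * h y := mul_nonneg hy.le (hpos y hy).le
    rcases le_or_gt y 1 with hy1 | hy1
    · have hb := yh_le hpos hdec hint hy hy1
      have hmono : (∫ t in Set.Ioo (0:ℝ) y, h t) ≤ ∫ t in Set.Ioo (0:ℝ) 1, h t := by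
        apply setIntegral_mono_set hint ?_
          (HasSubset.Subset.eventuallyLE (Set.Ioo_subset_Ioo le_rfl hy1))
        rw [Filter.EventuallyLE, ae_restrict_iff' measurableSet_Ioo]
        filter_upwards with t ht
        exact (hpos t ht.1).le
      have hterm : p * (y * h y) / (p + y) ≤ y * h y := by
        rw [div_le_iff₀ hpy]
        nlinarith
      have hpH : 0 ≤ p * h 1 := by positivity
      linarith
    · have hterm : p * (y * h y) / (p + y) ≤ p * h 1 := by
        rw [div_le_iff₀ hpy]
        have hle : h y ≤ h 1 := hdec (Set.mem_Ioi.mpr one_pos) (Set.mem_Ioi.mpr hy) hy1.le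
        have h1 := hpos y hy
        nlinarith [mul_le_mul_of_nonneg_left hle (by positivity : (0:ℝ) ≤ p * y),
          mul_pos hp h1pos]
      linarith
  -- part (iii) limit
  have part5 : Tendsto (opA (xiP p h)) (nhdsWithin 0 (Set.Ioi 0))
      (nhds (p * (∫ t in Set.Ioi (0:ℝ), p * h t / (p + t) ^ 2) + 0)) := by
    have TG := (tendsto_int_Ioi hfi).const_mul p
    have Tq : Tendsto (fun y : ℝ => p / (p + y)) (nhdsWithin 0 (Set.Ioi 0)) (nhds (p / (p + 0))) := by
      apply Tendsto.mono_left ?_ nhdsWithin_le_nhds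
      exact (ContinuousAt.div continuousAt_const (continuousAt_const.add continuousAt_id)
        (by simpa using hp.ne')).tendsto
    have T2 : Tendsto (fun y => p * (y * h y) / (p + y)) (nhdsWithin 0 (Set.Ioi 0)) (nhds 0) := by
      have := part1.mul Tq
      refine (by simpa using this : Tendsto (fun y => y * h y * (p / (p + y)))
        (nhdsWithin 0 (Set.Ioi 0)) (nhds 0)).congr ?_
      intro y
      ring
    refine (TG.add T2).congr' ?_
    filter_upwards [self_mem_nhdsWithin] with y hy
    exact (opA_eq_s4 hp hh1 hpos hdec hint hy).symm
  -- part (iv)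
  have part6 : ∀ y > (0:ℝ), opB p (opA (xiP p h)) y
      = (1 / p) * opA (xiP p h) y - y * deriv h y := by
    intro y hy
    have hD := (hasDerivAt_opA hp hh1 hpos hdec hint hy).deriv
    simp only [opB, hD]
    have hpy : p + y ≠ 0 := by positivity
    have : (1 + y / p) * (p * y * deriv h y / (p + y)) = y * deriv h y := by
      field_simp
    rw [this]
  have part7 : ∀ y > (0:ℝ), 0 ≤ opB p (opA (xiP p h)) y := by
    intro y hy
    rw [part6 y hy]
    have h1 : 0 ≤ (1 / p) * opA (xiP p h) y :=
      le_of_lt (mul_pos (by positivity) (part3 y hy))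
    have h2 : y * deriv h y ≤ 0 :=
      mul_nonpos_of_nonneg_of_nonpos hy.le (deriv_h_nonpos hh1 hdec hy)
    linarith
  exact ⟨part1, part2, part3, ⟨_, part4⟩, ⟨_, part5⟩, part6, part7⟩
end

section
/- (Lemma 7.1.) Let g : (0,∞) → [0,∞) be C¹ and decreasing, such that the function z ↦ −z g'(z) is decreasing, and assume g'(z) < 0 for some z > 0. Set z_∞ = sup{z > 0 : g'(z) < 0} (so g' < 0 on (0, z_∞)), fix z₀ ∈ (0, z_∞), and define F(z) = −z log(−g'(z)) + ∫_{z₀}^z log(−g'(z')) dz' for z ∈ (0, z_∞). Then: (i) g is convex; (ii) F(z₂) − F(z₁) ≥ z₂ − z₁ for all 0 < z₁ < z₂ < z_∞, so F is strictly increasing on (0, z_∞); (iii) lim_{z→z_∞} F(z) = ∞. -/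
open MeasureTheory Real Filter Set

/-- The function F(z) = −z log(−g'(z)) + ∫_{z₀}^z log(−g'(z')) dz'. -/
noncomputable def Fg (g : ℝ → ℝ) (z₀ z : ℝ) : ℝ :=
  -z * Real.log (-deriv g z) + ∫ z' in z₀..z, Real.log (-deriv g z')

/-- Lemma 7.1: for g C¹, nonnegative, decreasing with z ↦ −zg'(z)
decreasing, g is convex, F grows at least linearly on (0, z_∞) (hence is strictly
increasing there), and F(z) → ∞ as z → z_∞, where z_∞ = sup{z > 0 : g'(z) < 0}; here
membership z ∈ (0, z_∞) is expressed as 0 < z ∧ deriv g z < 0. -/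
theorem stmt_13 (g : ℝ → ℝ) (z₀ : ℝ)
    (hg1 : ContDiffOn ℝ 1 g (Set.Ioi 0))
    (hgnonneg : ∀ z > (0:ℝ), 0 ≤ g z)
    (hgdec : AntitoneOn g (Set.Ioi 0))
    (hzg : AntitoneOn (fun z => -(z * deriv g z)) (Set.Ioi 0))
    (hsome : ∃ z > (0:ℝ), deriv g z < 0)
    (hz₀pos : 0 < z₀) (hz₀ : deriv g z₀ < 0) :
    ConvexOn ℝ (Set.Ioi 0) g ∧
    (∀ z₁ z₂ : ℝ, 0 < z₁ → z₁ < z₂ → deriv g z₂ < 0 →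
      z₂ - z₁ ≤ Fg g z₀ z₂ - Fg g z₀ z₁) ∧
    StrictMonoOn (Fg g z₀) {z : ℝ | 0 < z ∧ deriv g z < 0} ∧
    (∀ zinf : ℝ, IsLUB {z : ℝ | 0 < z ∧ deriv g z < 0} zinf →
      Tendsto (Fg g z₀) (nhdsWithin zinf (Set.Iio zinf)) atTop) ∧
    (¬ BddAbove {z : ℝ | 0 < z ∧ deriv g z < 0} →
      Tendsto (Fg g z₀) atTop atTop) := by
  have hdiff : ∀ z : ℝ, 0 < z → DifferentiableAt ℝ g z := fun z hz =>
    ((hg1.differentiableOn one_ne_zero) z hz).differentiableAt (Ioi_mem_nhds hz)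
  have hderiv_cont : ContinuousOn (deriv g) (Set.Ioi 0) :=
    hg1.continuousOn_deriv_of_isOpen isOpen_Ioi le_rfl
  -- the derivative is nonpositive on (0,∞)
  have hderiv_nonpos : ∀ z : ℝ, 0 < z → deriv g z ≤ 0 := by
    intro z hz
    have hd : HasDerivAt g (deriv g z) z := (hdiff z hz).hasDerivAt
    rw [hasDerivAt_iff_tendsto_slope] at hd
    have hd' : Tendsto (slope g z) (nhdsWithin z (Set.Ioi z)) (nhds (deriv g z)) :=
      hd.mono_left (nhdsWithin_mono _ fun y hy => ne_of_gt hy)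
    refine le_of_tendsto hd' ?_
    filter_upwards [self_mem_nhdsWithin] with y hy
    have hyz : z < y := hy
    have hle : g y ≤ g z := hgdec (mem_Ioi.mpr hz) (mem_Ioi.mpr (hz.trans hyz)) hyz.le
    have := div_nonpos_of_nonpos_of_nonneg (sub_nonpos.mpr hle) (sub_nonneg.mpr hyz.le)
    simpa [slope_def_field] using this
  -- the derivative is monotone on (0,∞)
  have hmono : MonotoneOn (deriv g) (Set.Ioi 0) := by
    intro x hx y hy hxy
    have hx' : (0:ℝ) < x := hx
    have hy' : (0:ℝ) < y := hy
    have h1 : -(y * deriv g y) ≤ -(x * deriv g x) := hzg hx hy hxy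
    have h2 : deriv g y ≤ 0 := hderiv_nonpos y hy'
    have h3 : x * deriv g x ≤ y * deriv g y := by linarith
    have h4 : y * deriv g y ≤ x * deriv g y := by nlinarith
    exact le_of_mul_le_mul_left (h3.trans h4) hx'
  -- convexity
  have hconv : ConvexOn ℝ (Set.Ioi 0) g := by
    refine MonotoneOn.convexOn_of_deriv (convex_Ioi 0) hg1.continuousOn ?_ ?_
    · rw [interior_Ioi]; exact hg1.differentiableOn one_ne_zero
    · rw [interior_Ioi]; exact hmono
  -- down-closedness of negativity
  have hdown : ∀ z b : ℝ, 0 < z → z ≤ b → deriv g b < 0 → deriv g z < 0 := by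
    intro z b hz hzb hb
    exact lt_of_le_of_lt (hmono (mem_Ioi.mpr hz) (mem_Ioi.mpr (hz.trans_le hzb)) hzb) hb
  -- continuity of L := log (-g') on compact subintervals
  set L : ℝ → ℝ := fun z => Real.log (-deriv g z) with hLdef
  have hLcont : ∀ a b : ℝ, 0 < a → deriv g b < 0 → ContinuousOn L (Set.Icc a b) := by
    intro a b ha hb
    have hsub : Set.Icc a b ⊆ Set.Ioi 0 := fun z hz => lt_of_lt_of_le ha hz.1
    have hneg : ∀ z ∈ Set.Icc a b, deriv g z < 0 := fun z hz =>
      hdown z b (lt_of_lt_of_le ha hz.1) hz.2 hb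
    exact ((hderiv_cont.mono hsub).neg).log
      (fun z hz => ne_of_gt (neg_pos.mpr (hneg z hz)))
  -- the core inequality
  have core : ∀ z₁ z₂ : ℝ, 0 < z₁ → z₁ < z₂ → deriv g z₂ < 0 →
      z₂ - z₁ + z₁ * (Real.log (-(z₁ * deriv g z₁)) - Real.log (-(z₂ * deriv g z₂)))
        ≤ Fg g z₀ z₂ - Fg g z₀ z₁ := by
    intro z₁ z₂ h1 h12 h2
    have h2pos : 0 < z₂ := h1.trans h12
    have h1neg : deriv g z₁ < 0 := hdown z₁ z₂ h1 h12.le h2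
    -- integrability
    have hapos : (0:ℝ) < min z₀ z₁ := lt_min hz₀pos h1
    have hbneg : deriv g (max z₀ z₂) < 0 := by
      rcases max_cases z₀ z₂ with ⟨h, _⟩ | ⟨h, _⟩ <;> rw [h]
      · exact hz₀
      · exact h2
    have hcontab : ContinuousOn L (Set.Icc (min z₀ z₁) (max z₀ z₂)) :=
      hLcont _ _ hapos hbneg
    have hI1 : IntervalIntegrable L volume z₀ z₁ := by
      refine (hcontab.mono ?_).intervalIntegrable
      exact uIcc_subset_Icc ⟨min_le_left _ _, le_max_left _ _⟩
        ⟨min_le_right _ _, h12.le.trans (le_max_right _ _)⟩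
    have hI2 : IntervalIntegrable L volume z₁ z₂ := by
      refine (hcontab.mono ?_).intervalIntegrable
      exact uIcc_subset_Icc ⟨min_le_right _ _, h12.le.trans (le_max_right _ _)⟩
        ⟨(min_le_right z₀ z₁).trans h12.le, le_max_right _ _⟩
    have hsplit : (∫ z in z₀..z₁, L z) + ∫ z in z₁..z₂, L z = ∫ z in z₀..z₂, L z :=
      intervalIntegral.integral_add_adjacent_intervals hI1 hI2
    -- pointwise bound on [z₁, z₂]
    have hbound : ∀ z ∈ Set.Icc z₁ z₂,
        Real.log (-(z₂ * deriv g z₂)) - Real.log z ≤ L z := by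
      intro z hz
      have hzpos : 0 < z := h1.trans_le hz.1
      have hzneg : deriv g z < 0 := hdown z z₂ hzpos hz.2 h2
      have h5 : -(z₂ * deriv g z₂) ≤ -(z * deriv g z) :=
        hzg (mem_Ioi.mpr hzpos) (mem_Ioi.mpr h2pos) hz.2
      have h6 : 0 < -(z₂ * deriv g z₂) := by nlinarith
      have h7 : Real.log (-(z₂ * deriv g z₂)) ≤ Real.log (-(z * deriv g z)) :=
        Real.log_le_log h6 h5
      have h8 : -(z * deriv g z) = z * (-deriv g z) := by ring
      rw [h8, Real.log_mul (ne_of_gt hzpos) (ne_of_gt (neg_pos.mpr hzneg))] at h7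
      simp only [hLdef]
      linarith
    -- integrability of the comparison function
    have hlogint : IntervalIntegrable Real.log volume z₁ z₂ := by
      refine (Real.continuousOn_log.mono ?_).intervalIntegrable
      rw [uIcc_of_le h12.le]
      intro z hz
      exact (ne_of_gt (h1.trans_le hz.1) : z ≠ 0)
    have hcompint : IntervalIntegrable
        (fun z => Real.log (-(z₂ * deriv g z₂)) - Real.log z) volume z₁ z₂ :=
      intervalIntegrable_const.sub hlogint
    have hIcomp : (∫ z in z₁..z₂, (Real.log (-(z₂ * deriv g z₂)) - Real.log z))
        ≤ ∫ z in z₁..z₂, L z :=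
      intervalIntegral.integral_mono_on h12.le hcompint hI2 hbound
    have hIval : (∫ z in z₁..z₂, (Real.log (-(z₂ * deriv g z₂)) - Real.log z))
        = Real.log (-(z₂ * deriv g z₂)) * (z₂ - z₁)
          - (z₂ * Real.log z₂ - z₁ * Real.log z₁ - z₂ + z₁) := by
      rw [intervalIntegral.integral_sub intervalIntegrable_const hlogint,
        intervalIntegral.integral_const, integral_log,
        smul_eq_mul]
      ring
    rw [hIval] at hIcomp
    -- expressing the Fg difference
    have hFdiff : Fg g z₀ z₂ - Fg g z₀ z₁
        = -z₂ * L z₂ + z₁ * L z₁ + ∫ z in z₁..z₂, L z := by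
      simp only [Fg, hLdef]
      rw [← hsplit]
      ring
    -- log decompositions
    have hlog1 : Real.log (-(z₁ * deriv g z₁)) = Real.log z₁ + L z₁ := by
      have h9 : -(z₁ * deriv g z₁) = z₁ * (-deriv g z₁) := by ring
      rw [h9, Real.log_mul (ne_of_gt h1) (ne_of_gt (neg_pos.mpr h1neg))]
    have hlog2 : Real.log (-(z₂ * deriv g z₂)) = Real.log z₂ + L z₂ := by
      have h9 : -(z₂ * deriv g z₂) = z₂ * (-deriv g z₂) := by ring
      rw [h9, Real.log_mul (ne_of_gt h2pos) (ne_of_gt (neg_pos.mpr h2))]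
    rw [hFdiff, hlog1, hlog2]
    rw [hlog2] at hIcomp
    have hexpand : -z₂ * L z₂ + z₁ * L z₁
        + ((Real.log z₂ + L z₂) * (z₂ - z₁)
          - (z₂ * Real.log z₂ - z₁ * Real.log z₁ - z₂ + z₁))
        = z₂ - z₁ + z₁ * ((Real.log z₁ + L z₁) - (Real.log z₂ + L z₂)) := by ring
    linarith
  -- part (ii)
  have part2 : ∀ z₁ z₂ : ℝ, 0 < z₁ → z₁ < z₂ → deriv g z₂ < 0 →
      z₂ - z₁ ≤ Fg g z₀ z₂ - Fg g z₀ z₁ := by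
    intro z₁ z₂ h1 h12 h2
    have h2pos : 0 < z₂ := h1.trans h12
    have h1neg : deriv g z₁ < 0 := hdown z₁ z₂ h1 h12.le h2
    have h5 : -(z₂ * deriv g z₂) ≤ -(z₁ * deriv g z₁) :=
      hzg (mem_Ioi.mpr h1) (mem_Ioi.mpr h2pos) h12.le
    have h6 : 0 < -(z₂ * deriv g z₂) := by nlinarith
    have h7 : Real.log (-(z₂ * deriv g z₂)) ≤ Real.log (-(z₁ * deriv g z₁)) :=
      Real.log_le_log h6 h5
    have := core z₁ z₂ h1 h12 h2
    nlinarith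
  refine ⟨hconv, part2, ?_, ?_, ?_⟩
  · -- strict monotonicity
    intro z₁ h₁ z₂ h₂ h12
    have := part2 z₁ z₂ h₁.1 h12 h₂.2
    linarith
  · -- limit at finite z_∞
    intro zinf hlub
    have hz₀le : z₀ ≤ zinf := hlub.1 ⟨hz₀pos, hz₀⟩
    have hzinfpos : 0 < zinf := lt_of_lt_of_le hz₀pos hz₀le
    set z₁ := z₀ / 2 with hz₁def
    have hz₁pos : 0 < z₁ := half_pos hz₀pos
    have hz₁lt : z₁ < zinf := lt_of_lt_of_le (half_lt_self hz₀pos) hz₀le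
    have hz₁neg : deriv g z₁ < 0 := hdown z₁ z₀ hz₁pos (half_le_self hz₀pos.le) hz₀
    have hSneg : ∀ z, 0 < z → z < zinf → deriv g z < 0 := by
      intro z hz hzlt
      obtain ⟨s, hsS, hslt⟩ : ∃ s ∈ {z : ℝ | 0 < z ∧ deriv g z < 0}, z < s := by
        by_contra hcon
        push_neg at hcon
        exact absurd (hlub.2 fun s hs => (hcon s hs)) (not_le.mpr hzlt)
      exact hdown z s hz hslt.le hsS.2
    have hct : ContinuousAt (deriv g) zinf :=
      hderiv_cont.continuousAt (Ioi_mem_nhds hzinfpos)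
    have hzinf0 : deriv g zinf = 0 := by
      by_contra h
      have hlt : deriv g zinf < 0 := lt_of_le_of_ne (hderiv_nonpos zinf hzinfpos) h
      have hev : ∀ᶠ z in nhds zinf, deriv g z < 0 ∧ 0 < z :=
        ((hct.eventually_lt continuousAt_const hlt).and (eventually_gt_nhds hzinfpos))
      obtain ⟨b, hb, hbneg, hbpos⟩ := hev.exists_gt
      exact absurd (hlub.1 ⟨hbpos, hbneg⟩) (not_le.mpr hb)
    have h1 : Tendsto (fun z => -(z * deriv g z)) (nhdsWithin zinf (Set.Iio zinf))
        (nhds 0) := by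
      have h1' : Tendsto (fun z => -(z * deriv g z)) (nhds zinf)
          (nhds (-(zinf * deriv g zinf))) := (continuousAt_id.mul hct).neg
      rw [hzinf0, mul_zero, neg_zero] at h1'
      exact h1'.mono_left nhdsWithin_le_nhds
    have h2 : Tendsto (fun z => Real.log (-(z * deriv g z)))
        (nhdsWithin zinf (Set.Iio zinf)) atBot := by
      refine Real.tendsto_log_nhdsGT_zero.comp ?_
      refine tendsto_nhdsWithin_of_tendsto_nhds_of_eventually_within _ h1 ?_
      filter_upwards [Ioo_mem_nhdsLT_of_mem (Set.mem_Ioc.mpr ⟨hz₁lt, le_rfl⟩)] with z hz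
      have hzpos : 0 < z := hz₁pos.trans hz.1
      have := hSneg z hzpos hz.2
      have : 0 < -(z * deriv g z) := by nlinarith
      exact this
    have hbound : ∀ᶠ z in nhdsWithin zinf (Set.Iio zinf),
        Fg g z₀ z₁ + (z - z₁)
          + z₁ * (Real.log (-(z₁ * deriv g z₁)) - Real.log (-(z * deriv g z)))
          ≤ Fg g z₀ z := by
      filter_upwards [Ioo_mem_nhdsLT_of_mem (Set.mem_Ioc.mpr ⟨hz₁lt, le_rfl⟩)] with z hz
      have hzneg : deriv g z < 0 := hSneg z (hz₁pos.trans hz.1) hz.2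
      have := core z₁ z hz₁pos hz.1 hzneg
      linarith
    have hA : Tendsto (fun z : ℝ => Fg g z₀ z₁ + (z - z₁))
        (nhdsWithin zinf (Set.Iio zinf)) (nhds (Fg g z₀ z₁ + (zinf - z₁))) := by
      exact (((tendsto_id.sub_const z₁).const_add (Fg g z₀ z₁))).mono_left
        nhdsWithin_le_nhds
    have hB : Tendsto (fun z : ℝ =>
        z₁ * (Real.log (-(z₁ * deriv g z₁)) - Real.log (-(z * deriv g z))))
        (nhdsWithin zinf (Set.Iio zinf)) atTop := by
      have hsub : Tendsto (fun z : ℝ =>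
          Real.log (-(z₁ * deriv g z₁)) - Real.log (-(z * deriv g z)))
          (nhdsWithin zinf (Set.Iio zinf)) atTop := by
        have := tendsto_neg_atBot_atTop.comp h2
        have h3 := tendsto_atTop_add_const_left _ (Real.log (-(z₁ * deriv g z₁))) this
        refine h3.congr fun z => ?_
        simp [Function.comp, sub_eq_add_neg]
      exact hsub.const_mul_atTop hz₁pos
    exact tendsto_atTop_mono' _ hbound (hA.add_atTop hB)
  · -- unbounded case
    intro hnb
    have hallneg : ∀ z : ℝ, 0 < z → deriv g z < 0 := by
      intro z hz
      rw [not_bddAbove_iff] at hnb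
      obtain ⟨s, hsS, hslt⟩ := hnb z
      exact hdown z s hz hslt.le hsS.2
    have hbound : ∀ᶠ z in atTop, Fg g z₀ z₀ + (z - z₀) ≤ Fg g z₀ z := by
      filter_upwards [eventually_gt_atTop z₀] with z hz
      have := part2 z₀ z hz₀pos hz (hallneg z (hz₀pos.trans hz))
      linarith
    have htot : Tendsto (fun z : ℝ => Fg g z₀ z₀ + (z - z₀)) atTop atTop := by
      have h := tendsto_atTop_add_const_left atTop (Fg g z₀ z₀)
        (tendsto_atTop_add_const_right atTop (-z₀) tendsto_id)
      exact h.congr fun z => by simp only [id_eq]; ring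
    exact tendsto_atTop_mono' _ hbound htot
end

section
/- (Lemma 7.2.) Let p > 0, T ∈ ℝ, y > 0. Let g : (0,∞) → [0,∞) be C¹ and decreasing with z ↦ −z g'(z) decreasing and g' < 0 somewhere; set z_∞ = sup{z > 0 : g'(z) < 0}, fix z₀ ∈ (0, z_∞), and let F(z) = −z log(−g'(z)) + ∫_{z₀}^z log(−g'(z')) dz' on (0, z_∞). Let x_p(s) = e^{(T−s)/p}(y + p) − p and λ_∞ = min(z_∞, y). For 0 < λ < λ_∞ and s ≤ T let z_p(s,λ) be the unique solution in (0, z_∞) of F(z_p(s,λ)) = F(λ) + T − s, and define y_p(s,λ) = y · exp[∫_s^T (1/p + 1/z_p(s',λ)) ds']. Then: (i) for all 0 < λ < λ_∞ and s < T, y_p(s,λ) > x_p(s), i.e. the trajectories y_p(·,λ) lie in the reachable set; (ii) for 0 < λ₁ < λ₂ < λ_∞ and s < T, y_p(s,λ₁) ≠ y_p(s,λ₂), i.e. the trajectories do not intersect. Moreover, if z_∞ < ∞ and z_∞ > y, let T_∞ < T be the unique solution of x_p(T_∞) = z_∞; for T_∞ < t < T and s ≤ t let z̃_p(s,t) be the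 unique solution in (0, z_∞) of F(z̃_p(s,t)) = F(x_p(t)) + t − s, and define x_p(s,t) = x_p(t) · exp[∫_s^t (1/p + 1/z̃_p(s',t)) ds']. Then x_p(s,t) > x_p(s) for all s < t, and for T_∞ < t₁ < t₂ < T and s < t₁ one has x_p(s,t₂) > x_p(s,t₁). -/
open MeasureTheory Real Filter Set

/-- The free trajectory x_p(s) = e^{(T−s)/p}(y+p) − p. -/
noncomputable def xpTraj (p y T s : ℝ) : ℝ := Real.exp ((T - s) / p) * (y + p) - p



/-- e^x - 1 < x e^x for x = u/p, scaled. -/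
lemma key_exp (p u : ℝ) (hp : 0 < p) (hu : 0 < u) :
    p * (Real.exp (u / p) - 1) < u * Real.exp (u / p) := by
  have hx : 0 < u / p := div_pos hu hp
  have h := Real.add_one_lt_exp (x := -(u / p)) (by linarith)
  rw [Real.exp_neg] at h
  have hE : 0 < Real.exp (u / p) := Real.exp_pos _
  have h2 : (-(u / p) + 1) * Real.exp (u / p) < 1 := by
    have := mul_lt_mul_of_pos_right h hE
    rwa [inv_mul_cancel₀ (ne_of_gt hE)] at this
  have h3 : p * ((-(u / p) + 1) * Real.exp (u / p)) < p * 1 :=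
    mul_lt_mul_of_pos_left h2 hp
  have h4 : p * (u / p) = u := by field_simp
  nlinarith [h3, h4]

/-- Downward closedness of {z > 0 : g'(z) < 0}. -/
lemma memD_of_le (g : ℝ → ℝ) (hzg : AntitoneOn (fun z => -(z * deriv g z)) (Set.Ioi 0))
    {a b : ℝ} (ha : 0 < a) (hab : a ≤ b) (hb : deriv g b < 0) : deriv g a < 0 := by
  have hbpos : 0 < b := lt_of_lt_of_le ha hab
  have h := hzg (Set.mem_Ioi.2 ha) (Set.mem_Ioi.2 hbpos) hab
  simp only at h
  nlinarith

/-- log inequality: log b + log(-g'(b)) ≤ log a + log(-g'(a)) for a ≤ b. -/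
lemma log_ineq (g : ℝ → ℝ) (hzg : AntitoneOn (fun z => -(z * deriv g z)) (Set.Ioi 0))
    {a b : ℝ} (ha : 0 < a) (hab : a ≤ b) (hb : deriv g b < 0) :
    Real.log b + Real.log (-deriv g b) ≤ Real.log a + Real.log (-deriv g a) := by
  have hbpos : 0 < b := lt_of_lt_of_le ha hab
  have hga : deriv g a < 0 := memD_of_le g hzg ha hab hb
  have h := hzg (Set.mem_Ioi.2 ha) (Set.mem_Ioi.2 hbpos) hab
  simp only at h
  have h1 : b * (-deriv g b) ≤ a * (-deriv g a) := by nlinarith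
  have h2 : 0 < b * (-deriv g b) := mul_pos hbpos (by linarith)
  have := Real.log_le_log (by positivity) h1
  rwa [Real.log_mul (ne_of_gt hbpos) (show (-deriv g b) ≠ 0 from ne_of_gt (by linarith)),
    Real.log_mul (ne_of_gt ha) (show (-deriv g a) ≠ 0 from ne_of_gt (by linarith))] at this
lemma uIcc_subset_S (g : ℝ → ℝ) (hzg : AntitoneOn (fun z => -(z * deriv g z)) (Set.Ioi 0))
    {x y : ℝ} (hx : 0 < x) (hx' : deriv g x < 0) (hy : 0 < y) (hy' : deriv g y < 0) :
    Set.uIcc x y ⊆ {z | 0 < z ∧ deriv g z < 0} := by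
  intro w hw
  rcases Set.mem_uIcc.1 hw with ⟨h1, h2⟩ | ⟨h1, h2⟩
  · exact ⟨lt_of_lt_of_le hx h1, memD_of_le g hzg (lt_of_lt_of_le hx h1) h2 hy'⟩
  · exact ⟨lt_of_lt_of_le hy h1, memD_of_le g hzg (lt_of_lt_of_le hy h1) h2 hx'⟩

lemma contL (g : ℝ → ℝ) (hg1 : ContDiffOn ℝ 1 g (Set.Ioi 0)) :
    ContinuousOn (fun z => Real.log (-deriv g z)) {z | 0 < z ∧ deriv g z < 0} := by
  have hc : ContinuousOn (deriv g) (Set.Ioi 0) :=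
    hg1.continuousOn_deriv_of_isOpen isOpen_Ioi le_rfl
  exact ((hc.mono (fun z hz => hz.1)).neg).log (fun z hz => ne_of_gt (by simp only [Pi.neg_apply]; linarith [hz.2]))

lemma Fg_gap (g : ℝ → ℝ) (hg1 : ContDiffOn ℝ 1 g (Set.Ioi 0))
    (hzg : AntitoneOn (fun z => -(z * deriv g z)) (Set.Ioi 0))
    {z₀ a b : ℝ} (hz₀pos : 0 < z₀) (hz₀ : deriv g z₀ < 0)
    (ha : 0 < a) (hab : a ≤ b) (hb : deriv g b < 0) :
    b - a ≤ Fg g z₀ b - Fg g z₀ a := by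
  set L := fun z => Real.log (-deriv g z) with hLdef
  have hga : deriv g a < 0 := memD_of_le g hzg ha hab hb
  have hbpos : 0 < b := lt_of_lt_of_le ha hab
  have hcont : ContinuousOn L {z | 0 < z ∧ deriv g z < 0} := contL g hg1
  have hint_ab : IntervalIntegrable L volume a b :=
    (hcont.mono (uIcc_subset_S g hzg ha hga hbpos hb)).intervalIntegrable
  have hint_za : IntervalIntegrable L volume z₀ a :=
    (hcont.mono (uIcc_subset_S g hzg hz₀pos hz₀ ha hga)).intervalIntegrable
  have hint_zb : IntervalIntegrable L volume z₀ b :=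
    (hcont.mono (uIcc_subset_S g hzg hz₀pos hz₀ hbpos hb)).intervalIntegrable
  have hsplit : (∫ z' in z₀..b, L z') - ∫ z' in z₀..a, L z' = ∫ z' in a..b, L z' :=
    intervalIntegral.integral_interval_sub_left hint_zb hint_za
  have h0uIcc : (0:ℝ) ∉ Set.uIcc a b := by
    rw [Set.uIcc_of_le hab, Set.mem_Icc]; push_neg; intro h; linarith
  have hintlog : IntervalIntegrable Real.log volume a b :=
    (Real.continuousOn_log.mono (fun x hx h0 => h0uIcc (h0 ▸ hx))).intervalIntegrable
  have hlogint : ∫ z' in a..b, Real.log z'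
      = b * Real.log b - a * Real.log a - b + a := integral_log
  have hlow : ∀ z' ∈ Set.Icc a b, (L b + Real.log b) - Real.log z' ≤ L z' := by
    intro z' hz'
    have h0 : 0 < z' := lt_of_lt_of_le ha hz'.1
    have := log_ineq g hzg h0 hz'.2 hb
    linarith
  have hintc : IntervalIntegrable (fun z' => (L b + Real.log b) - Real.log z') volume a b :=
    intervalIntegrable_const.sub hintlog
  have hmono := intervalIntegral.integral_mono_on hab hintc hint_ab hlow
  have hcalc : ∫ z' in a..b, ((L b + Real.log b) - Real.log z')
      = (b - a) * (L b + Real.log b) - (b * Real.log b - a * Real.log a - b + a) := by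
    rw [intervalIntegral.integral_sub intervalIntegrable_const hintlog,
      intervalIntegral.integral_const, hlogint, smul_eq_mul]
  have hmul : a * (Real.log b + L b) ≤ a * (Real.log a + L a) :=
    mul_le_mul_of_nonneg_left (log_ineq g hzg ha hab hb) ha.le
  have hFb : Fg g z₀ b = -b * L b + ∫ z' in z₀..b, L z' := rfl
  have hFa : Fg g z₀ a = -a * L a + ∫ z' in z₀..a, L z' := rfl
  rw [hFb, hFa]
  nlinarith [hmono, hcalc, hsplit, hmul]
lemma Fg_mono (g : ℝ → ℝ) (hg1 : ContDiffOn ℝ 1 g (Set.Ioi 0))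
    (hzg : AntitoneOn (fun z => -(z * deriv g z)) (Set.Ioi 0))
    {z₀ a b : ℝ} (hz₀pos : 0 < z₀) (hz₀ : deriv g z₀ < 0)
    (ha : 0 < a) (hab : a ≤ b) (hb : deriv g b < 0) : Fg g z₀ a ≤ Fg g z₀ b := by
  have := Fg_gap g hg1 hzg hz₀pos hz₀ ha hab hb; linarith

lemma le_of_Fg_le (g : ℝ → ℝ) (hg1 : ContDiffOn ℝ 1 g (Set.Ioi 0))
    (hzg : AntitoneOn (fun z => -(z * deriv g z)) (Set.Ioi 0))
    {z₀ a b : ℝ} (hz₀pos : 0 < z₀) (hz₀ : deriv g z₀ < 0)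
    (ha : 0 < a) (ha' : deriv g a < 0) (hb : 0 < b) (hb' : deriv g b < 0)
    (hF : Fg g z₀ a ≤ Fg g z₀ b) : a ≤ b := by
  by_contra h
  push_neg at h
  have := Fg_gap g hg1 hzg hz₀pos hz₀ hb h.le ha'
  linarith

lemma lt_of_Fg_lt (g : ℝ → ℝ) (hg1 : ContDiffOn ℝ 1 g (Set.Ioi 0))
    (hzg : AntitoneOn (fun z => -(z * deriv g z)) (Set.Ioi 0))
    {z₀ a b : ℝ} (hz₀pos : 0 < z₀) (hz₀ : deriv g z₀ < 0)
    (ha : 0 < a) (ha' : deriv g a < 0) (hb : 0 < b) (hb' : deriv g b < 0)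
    (hF : Fg g z₀ a < Fg g z₀ b) : a < b := by
  by_contra h
  push_neg at h
  have := Fg_mono g hg1 hzg hz₀pos hz₀ hb h ha'
  linarith

lemma int_aux (p t₀ : ℝ) (z : ℝ → ℝ) (c : ℝ) (hc : 0 < c)
    (hlow : ∀ s ≤ t₀, c ≤ z s)
    (hanti : ∀ s1 s2, s1 ≤ s2 → s2 ≤ t₀ → z s2 ≤ z s1)
    {a b : ℝ} (ha : a ≤ t₀) (hb : b ≤ t₀) :
    IntervalIntegrable (fun s => 1 / p + 1 / z s) volume a b := by
  apply MonotoneOn.intervalIntegrable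
  intro x hx y hy hxy
  have hyt : y ≤ t₀ := by
    rcases Set.mem_uIcc.1 hy with ⟨_, h2⟩ | ⟨_, h2⟩ <;> linarith
  have h1 : 0 < z y := lt_of_lt_of_le hc (hlow y hyt)
  have h2 : z y ≤ z x := hanti x y hxy hyt
  have h3 := one_div_le_one_div_of_le h1 h2
  simp only
  linarith

lemma core_traj (p Y Λ t₀ s : ℝ) (hp : 0 < p) (hΛ : 0 < Λ) (hΛY : Λ ≤ Y) (hs : s < t₀)
    (z : ℝ → ℝ)
    (hlow : ∀ s' ≤ t₀, Λ ≤ z s')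
    (hupp : ∀ s' ≤ t₀, z s' ≤ Λ + (t₀ - s'))
    (hint : IntervalIntegrable (fun s' => 1 / p + 1 / z s') volume s t₀) :
    Real.exp ((t₀ - s) / p) * (Y + p) - p
      < Y * Real.exp (∫ s' in s..t₀, (1 / p + 1 / z s')) := by
  have hu0 : 0 < t₀ - s := by linarith
  set u := t₀ - s with hu
  set w : ℝ → ℝ := fun s' => 1 / p + 1 / (Λ + (t₀ - s')) with hw
  have hwpos : ∀ s' ∈ Set.uIcc s t₀, 0 < Λ + (t₀ - s') := by
    intro s' hs'
    rw [Set.uIcc_of_le hs.le] at hs'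
    have := hs'.2; linarith
  have hintw : IntervalIntegrable w volume s t₀ := by
    apply ContinuousOn.intervalIntegrable
    apply ContinuousOn.add continuousOn_const
    apply ContinuousOn.div continuousOn_const
    · exact (by continuity : Continuous (fun s' : ℝ => Λ + (t₀ - s'))).continuousOn
    · intro x hx; exact ne_of_gt (hwpos x hx)
  have hW : ∀ x ∈ Set.uIcc s t₀,
      HasDerivAt (fun s' => s' / p - Real.log (Λ + (t₀ - s'))) (w x) x := by
    intro x hx
    have h1 : HasDerivAt (fun s' : ℝ => s' / p) (1 / p) x := by
      simpa using (hasDerivAt_id x).div_const p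
    have h2 : HasDerivAt (fun s' : ℝ => Λ + (t₀ - s')) (0 + (0 - 1)) x :=
      (hasDerivAt_const x Λ).add ((hasDerivAt_const x t₀).sub (hasDerivAt_id x))
    have h3 := h2.log (ne_of_gt (hwpos x hx))
    have h4 := h1.sub h3
    refine h4.congr_deriv ?_
    show 1 / p - (0 + (0 - 1)) / (Λ + (t₀ - x)) = 1 / p + 1 / (Λ + (t₀ - x))
    ring
  have hWint : ∫ s' in s..t₀, w s' = u / p + (Real.log (Λ + u) - Real.log Λ) := by
    rw [intervalIntegral.integral_eq_sub_of_hasDerivAt hW hintw]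
    simp only [sub_self, add_zero]
    rw [hu]; ring
  have hmono : ∫ s' in s..t₀, w s' ≤ ∫ s' in s..t₀, (1 / p + 1 / z s') := by
    apply intervalIntegral.integral_mono_on hs.le hintw hint
    intro x hx
    have hx' : x ≤ t₀ := hx.2
    have h1 : 0 < z x := lt_of_lt_of_le hΛ (hlow x hx')
    have h2 := one_div_le_one_div_of_le h1 (hupp x hx')
    simp only [hw]
    linarith
  have hE : Real.exp (u / p) * ((Λ + u) / Λ)
      ≤ Real.exp (∫ s' in s..t₀, (1 / p + 1 / z s')) := by
    have h1 : Real.exp (∫ s' in s..t₀, w s')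
        ≤ Real.exp (∫ s' in s..t₀, (1 / p + 1 / z s')) := Real.exp_le_exp.2 hmono
    rwa [hWint, Real.exp_add, Real.exp_sub, Real.exp_log (by linarith), Real.exp_log hΛ] at h1
  have hkey := key_exp p u hp hu0
  have hEpos : (0:ℝ) < Real.exp (u / p) := Real.exp_pos _
  have hY : 0 < Y := lt_of_lt_of_le hΛ hΛY
  have h4 : Y * (Real.exp (u / p) * ((Λ + u) / Λ))
      = Y * Real.exp (u / p) + (Y / Λ) * (u * Real.exp (u / p)) := by
    field_simp
  have h5 : (1:ℝ) ≤ Y / Λ := (one_le_div hΛ).2 hΛY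
  have h6 : Y * (Real.exp (u / p) * ((Λ + u) / Λ)) ≤ Y * Real.exp (∫ s' in s..t₀, (1 / p + 1 / z s')) :=
    mul_le_mul_of_nonneg_left hE hY.le
  nlinarith [mul_pos hu0 hEpos, mul_le_mul_of_nonneg_right h5 (mul_pos hu0 hEpos).le]
lemma z_props (g : ℝ → ℝ) (hg1 : ContDiffOn ℝ 1 g (Set.Ioi 0))
    (hzg : AntitoneOn (fun z => -(z * deriv g z)) (Set.Ioi 0))
    {z₀ : ℝ} (hz₀pos : 0 < z₀) (hz₀ : deriv g z₀ < 0)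
    (Λ t₀ : ℝ) (hΛpos : 0 < Λ) (hΛ' : deriv g Λ < 0) (z : ℝ → ℝ)
    (hz : ∀ s' ≤ t₀, 0 < z s' ∧ deriv g (z s') < 0 ∧
      Fg g z₀ (z s') = Fg g z₀ Λ + (t₀ - s')) :
    (∀ s' ≤ t₀, Λ ≤ z s' ∧ z s' ≤ Λ + (t₀ - s')) ∧
    (∀ s1 s2, s1 ≤ s2 → s2 ≤ t₀ → z s2 ≤ z s1) := by
  have hlow : ∀ s' ≤ t₀, Λ ≤ z s' := by
    intro s' hs'
    obtain ⟨h1, h2, h3⟩ := hz s' hs'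
    apply le_of_Fg_le g hg1 hzg hz₀pos hz₀ hΛpos hΛ' h1 h2
    rw [h3]; linarith
  refine ⟨fun s' hs' => ⟨hlow s' hs', ?_⟩, fun s1 s2 h12 h2t => ?_⟩
  · obtain ⟨h1, h2, h3⟩ := hz s' hs'
    have := Fg_gap g hg1 hzg hz₀pos hz₀ hΛpos (hlow s' hs') h2
    rw [h3] at this; linarith
  · obtain ⟨h1, h2, h3⟩ := hz s2 h2t
    obtain ⟨h1', h2', h3'⟩ := hz s1 (le_trans h12 h2t)
    apply le_of_Fg_le g hg1 hzg hz₀pos hz₀ h1 h2 h1' h2'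
    rw [h3, h3']; linarith

/-- Lemma 7.2: the trajectories y_p(·,λ) (and, when z_∞ < ∞, the
trajectories x_p(·,t)) lie in the reachable set {x > x_p(s)} and do not intersect.
Membership λ ∈ (0, z_∞) is expressed by deriv g λ < 0, since (0, z_∞) = {g' < 0}. -/
theorem stmt_14 (p T y z₀ : ℝ) (hp : 0 < p) (hy : 0 < y) (g : ℝ → ℝ)
    (hg1 : ContDiffOn ℝ 1 g (Set.Ioi 0))
    (hgnonneg : ∀ z > (0:ℝ), 0 ≤ g z)
    (hgdec : AntitoneOn g (Set.Ioi 0))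
    (hzg : AntitoneOn (fun z => -(z * deriv g z)) (Set.Ioi 0))
    (hsome : ∃ z > (0:ℝ), deriv g z < 0)
    (hz₀pos : 0 < z₀) (hz₀ : deriv g z₀ < 0)
    (zp : ℝ → ℝ → ℝ)
    (hzp : ∀ lam : ℝ, 0 < lam → lam < y → deriv g lam < 0 → ∀ s ≤ T,
      0 < zp s lam ∧ deriv g (zp s lam) < 0 ∧ Fg g z₀ (zp s lam) = Fg g z₀ lam + (T - s))
    (yp : ℝ → ℝ → ℝ)
    (hyp : ∀ lam s : ℝ,
      yp s lam = y * Real.exp (∫ s' in s..T, (1 / p + 1 / zp s' lam))) :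
    ((∀ lam : ℝ, 0 < lam → lam < y → deriv g lam < 0 →
        ∀ s < T, xpTraj p y T s < yp s lam) ∧
     (∀ lam₁ lam₂ : ℝ, 0 < lam₁ → lam₁ < y → deriv g lam₁ < 0 →
        0 < lam₂ → lam₂ < y → deriv g lam₂ < 0 → lam₁ < lam₂ →
        ∀ s < T, yp s lam₁ ≠ yp s lam₂)) ∧
    (∀ zinf Tinf : ℝ, IsLUB {z : ℝ | 0 < z ∧ deriv g z < 0} zinf →
      y < zinf → Tinf < T → xpTraj p y T Tinf = zinf →
      ∀ ztp : ℝ → ℝ → ℝ,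
        (∀ t : ℝ, Tinf < t → t < T → ∀ s ≤ t,
          0 < ztp s t ∧ deriv g (ztp s t) < 0 ∧
            Fg g z₀ (ztp s t) = Fg g z₀ (xpTraj p y T t) + (t - s)) →
        ∀ xpt : ℝ → ℝ → ℝ,
          (∀ t s : ℝ, xpt s t
            = xpTraj p y T t * Real.exp (∫ s' in s..t, (1 / p + 1 / ztp s' t))) →
          (∀ t : ℝ, Tinf < t → t < T → ∀ s < t, xpTraj p y T s < xpt s t) ∧
          (∀ t₁ t₂ : ℝ, Tinf < t₁ → t₁ < t₂ → t₂ < T →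
            ∀ s < t₁, xpt s t₁ < xpt s t₂)) := by
  constructor
  · constructor
    -- Part (i)
    · intro lam hlam hlamy hglam s hsT
      have props := z_props g hg1 hzg hz₀pos hz₀ lam T hlam hglam
        (fun s' => zp s' lam) (hzp lam hlam hlamy hglam)
      have hint := int_aux p T (fun s' => zp s' lam) lam hlam
        (fun s' hs' => (props.1 s' hs').1) props.2 hsT.le le_rfl
      have core := core_traj p y lam T s hp hlam hlamy.le hsT
        (fun s' => zp s' lam)
        (fun s' hs' => (props.1 s' hs').1) (fun s' hs' => (props.1 s' hs').2) hint
      rw [hyp lam s]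
      exact core
    -- Part (ii)
    · intro lam₁ lam₂ h1 h1y hg1' h2 h2y hg2' h12 s hsT heq
      have props1 := z_props g hg1 hzg hz₀pos hz₀ lam₁ T h1 hg1'
        (fun s' => zp s' lam₁) (hzp lam₁ h1 h1y hg1')
      have props2 := z_props g hg1 hzg hz₀pos hz₀ lam₂ T h2 hg2'
        (fun s' => zp s' lam₂) (hzp lam₂ h2 h2y hg2')
      have hint1 := int_aux p T (fun s' => zp s' lam₁) lam₁ h1
        (fun s' hs' => (props1.1 s' hs').1) props1.2 hsT.le le_rfl
      have hint2 := int_aux p T (fun s' => zp s' lam₂) lam₂ h2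
        (fun s' hs' => (props2.1 s' hs').1) props2.2 hsT.le le_rfl
      have hF12 : Fg g z₀ lam₁ < Fg g z₀ lam₂ := by
        have := Fg_gap g hg1 hzg hz₀pos hz₀ h1 h12.le hg2'
        linarith
      have hptw : ∀ x ∈ Set.Ioo s T,
          0 < (1 / p + 1 / zp x lam₁) - (1 / p + 1 / zp x lam₂) := by
        intro x hx
        have hxT : x ≤ T := hx.2.le
        obtain ⟨za1, za2, za3⟩ := hzp lam₁ h1 h1y hg1' x hxT
        obtain ⟨zb1, zb2, zb3⟩ := hzp lam₂ h2 h2y hg2' x hxT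
        have hlt : zp x lam₁ < zp x lam₂ := by
          apply lt_of_Fg_lt g hg1 hzg hz₀pos hz₀ za1 za2 zb1 zb2
          rw [za3, zb3]; linarith
        have := one_div_lt_one_div_of_lt za1 hlt
        linarith
      have hpos := intervalIntegral.intervalIntegral_pos_of_pos_on
        (hint1.sub hint2) hptw hsT
      rw [intervalIntegral.integral_sub hint1 hint2] at hpos
      rw [hyp lam₁ s, hyp lam₂ s] at heq
      have := mul_left_cancel₀ (ne_of_gt hy) heq
      have := Real.exp_eq_exp.1 this
      linarith
  -- Part (iii)
  · intro zinf Tinf hlub hyz hTinfT hxpTinf ztp hztp xpt hxpt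
    have hxp_lt : ∀ t1 t2 : ℝ, t1 < t2 → xpTraj p y T t2 < xpTraj p y T t1 := by
      intro t1 t2 h
      have hE : Real.exp ((T - t2) / p) < Real.exp ((T - t1) / p) :=
        Real.exp_lt_exp.2 ((div_lt_div_iff_of_pos_right hp).2 (by linarith))
      simp only [xpTraj]
      nlinarith
    have hxp_gt_y : ∀ t, t < T → y < xpTraj p y T t := by
      intro t ht
      have hE : Real.exp 0 < Real.exp ((T - t) / p) :=
        Real.exp_lt_exp.2 (div_pos (by linarith) hp)
      rw [Real.exp_zero] at hE
      simp only [xpTraj]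
      nlinarith
    have hxpS : ∀ t, Tinf < t → t < T → 0 < xpTraj p y T t ∧ deriv g (xpTraj p y T t) < 0 := by
      intro t ht1 ht2
      have hpos : 0 < xpTraj p y T t := lt_trans hy (hxp_gt_y t ht2)
      have hlt : xpTraj p y T t < zinf := by
        rw [← hxpTinf]; exact hxp_lt Tinf t ht1
      have hnub : ¬ (xpTraj p y T t ∈ upperBounds {z : ℝ | 0 < z ∧ deriv g z < 0}) := by
        intro hub
        exact absurd (hlub.2 hub) (not_le.2 hlt)
      rw [mem_upperBounds] at hnub
      push_neg at hnub
      obtain ⟨d, hd, hdlt⟩ := hnub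
      exact ⟨hpos, memD_of_le g hzg hpos hdlt.le hd.2⟩
    have hgap_xp : ∀ t1 t2, t1 < t2 → t2 < T →
        t2 - t1 < xpTraj p y T t1 - xpTraj p y T t2 := by
      intro t1 t2 h12 h2T
      have hd : 0 < (t2 - t1) / p := div_pos (by linarith) hp
      have hE2 : (1:ℝ) ≤ Real.exp ((T - t2) / p) :=
        Real.one_le_exp (div_nonneg (by linarith) hp.le)
      have hEd : (t2 - t1) / p + 1 < Real.exp ((t2 - t1) / p) :=
        Real.add_one_lt_exp (by linarith)
      have harg : (T - t2) / p + (t2 - t1) / p = (T - t1) / p := by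
        rw [← add_div]; ring_nf
      have hsum : Real.exp ((T - t1) / p)
          = Real.exp ((T - t2) / p) * Real.exp ((t2 - t1) / p) := by
        rw [← Real.exp_add, harg]
      have hpq : p * ((t2 - t1) / p) = t2 - t1 := by field_simp
      have hEd1 : (t2 - t1) / p < Real.exp ((t2 - t1) / p) - 1 := by linarith
      have hh1 : (y + p) * ((t2 - t1) / p) < (y + p) * (Real.exp ((t2 - t1) / p) - 1) :=
        mul_lt_mul_of_pos_left hEd1 (by linarith)
      have hh2 : (y + p) * (Real.exp ((t2 - t1) / p) - 1)
          ≤ (y + p) * (Real.exp ((t2 - t1) / p) - 1) * Real.exp ((T - t2) / p) :=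
        le_mul_of_one_le_right (by nlinarith) hE2
      have hh3 : t2 - t1 < (y + p) * ((t2 - t1) / p) := by
        nlinarith [mul_pos hy hd]
      simp only [xpTraj]
      rw [hsum]
      nlinarith [hh1, hh2, hh3]
    have hsemi : ∀ t s : ℝ, xpTraj p y T s
        = Real.exp ((t - s) / p) * (xpTraj p y T t + p) - p := by
      intro t s
      simp only [xpTraj]
      have h1 : Real.exp ((t - s) / p) * (Real.exp ((T - t) / p) * (y + p) - p + p)
          = Real.exp ((t - s) / p + (T - t) / p) * (y + p) := by
        rw [Real.exp_add]; ring
      rw [h1]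
      congr 2
      rw [← add_div]; ring_nf
    have claim1 : ∀ t : ℝ, Tinf < t → t < T → ∀ s < t, xpTraj p y T s < xpt s t := by
      intro t ht1 ht2 s hst
      obtain ⟨hxpos, hxneg⟩ := hxpS t ht1 ht2
      have props := z_props g hg1 hzg hz₀pos hz₀ (xpTraj p y T t) t hxpos hxneg
        (fun s' => ztp s' t) (hztp t ht1 ht2)
      have hint := int_aux p t (fun s' => ztp s' t) (xpTraj p y T t) hxpos
        (fun s' hs' => (props.1 s' hs').1) props.2 hst.le le_rfl
      have core := core_traj p (xpTraj p y T t) (xpTraj p y T t) t s hp hxpos le_rfl hst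
        (fun s' => ztp s' t)
        (fun s' hs' => (props.1 s' hs').1) (fun s' hs' => (props.1 s' hs').2) hint
      rw [hxpt t s, show xpTraj p y T s = _ from hsemi t s]
      exact core
    refine ⟨claim1, ?_⟩
    intro t₁ t₂ h1 h12 h2T s hs1
    have h1T : t₁ < T := lt_trans h12 h2T
    have h2inf : Tinf < t₂ := lt_trans h1 h12
    obtain ⟨hx1pos, hx1neg⟩ := hxpS t₁ h1 h1T
    obtain ⟨hx2pos, hx2neg⟩ := hxpS t₂ h2inf h2T
    have props1 := z_props g hg1 hzg hz₀pos hz₀ (xpTraj p y T t₁) t₁ hx1pos hx1neg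
      (fun s' => ztp s' t₁) (hztp t₁ h1 h1T)
    have props2 := z_props g hg1 hzg hz₀pos hz₀ (xpTraj p y T t₂) t₂ hx2pos hx2neg
      (fun s' => ztp s' t₂) (hztp t₂ h2inf h2T)
    have hint1 := int_aux p t₁ (fun s' => ztp s' t₁) (xpTraj p y T t₁) hx1pos
      (fun s' hs' => (props1.1 s' hs').1) props1.2 hs1.le le_rfl
    have hint2a := int_aux p t₂ (fun s' => ztp s' t₂) (xpTraj p y T t₂) hx2pos
      (fun s' hs' => (props2.1 s' hs').1) props2.2 (by linarith : s ≤ t₂) h12.le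
    have hint2b := int_aux p t₂ (fun s' => ztp s' t₂) (xpTraj p y T t₂) hx2pos
      (fun s' hs' => (props2.1 s' hs').1) props2.2 h12.le le_rfl
    have hsplit := intervalIntegral.integral_add_adjacent_intervals hint2a hint2b
    have hFgapx : t₂ - t₁ < Fg g z₀ (xpTraj p y T t₁) - Fg g z₀ (xpTraj p y T t₂) := by
      have hg := Fg_gap g hg1 hzg hz₀pos hz₀ hx2pos (hxp_lt t₁ t₂ h12).le hx1neg
      have := hgap_xp t₁ t₂ h12 h2T
      linarith
    have hptw : ∀ x ∈ Set.Icc s t₁,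
        (1 / p + 1 / ztp x t₁) ≤ (1 / p + 1 / ztp x t₂) := by
      intro x hx
      have hxt1 : x ≤ t₁ := hx.2
      obtain ⟨za1, za2, za3⟩ := hztp t₁ h1 h1T x hxt1
      obtain ⟨zb1, zb2, zb3⟩ := hztp t₂ h2inf h2T x (by linarith)
      have hle : ztp x t₂ ≤ ztp x t₁ := by
        apply le_of_Fg_le g hg1 hzg hz₀pos hz₀ zb1 zb2 za1 za2
        rw [za3, zb3]; linarith
      have := one_div_le_one_div_of_le zb1 hle
      linarith
    have hmono := intervalIntegral.integral_mono_on hs1.le hint1 hint2a hptw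
    have key : xpTraj p y T t₁ < xpt t₁ t₂ := claim1 t₂ h2inf h2T t₁ h12
    rw [hxpt t₂ t₁] at key
    rw [hxpt t₁ s, hxpt t₂ s, ← hsplit, Real.exp_add]
    have e1 : xpTraj p y T t₁ * Real.exp (∫ s' in s..t₁, (1 / p + 1 / ztp s' t₁))
        ≤ xpTraj p y T t₁ * Real.exp (∫ s' in s..t₁, (1 / p + 1 / ztp s' t₂)) :=
      mul_le_mul_of_nonneg_left (Real.exp_le_exp.2 hmono) hx1pos.le
    have e2 : xpTraj p y T t₁ * Real.exp (∫ s' in s..t₁, (1 / p + 1 / ztp s' t₂))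
        < (xpTraj p y T t₂ * Real.exp (∫ s' in t₁..t₂, (1 / p + 1 / ztp s' t₂)))
          * Real.exp (∫ s' in s..t₁, (1 / p + 1 / ztp s' t₂)) :=
      mul_lt_mul_of_pos_right key (Real.exp_pos _)
    nlinarith [e1, e2]
end

section
/- (Proposition 7.1.) Let p > 0 and let g : (0,∞) → ℝ be continuous, nonnegative and decreasing with limit g(∞) = lim_{z→∞} g(z), and suppose that x ↦ x[g(x) − g(∞)] is decreasing on (0,∞). Fix y > 0, t < T, and x with e^{(T−t)/p} y < x < e^{(T−t)/p}(y + p) − p, and define τ_{x,t} by e^{τ_{x,t}/p} = e^{T/p}(1 + y/p) − (x/p) e^{t/p}. Then t < τ_{x,t} < T, and the supremum, over all measurable controls v : [t,T] → (0,1] for which the solution x(·) of dx(s)/ds = −x(s)/p − v(s) with x(T) = y satisfies x(t) = x, of ∫_t^T g(x(s)/v(s)) ds equals (τ_{x,t} − t) g(∞) + ∫_{τ_{x,t}}^T g(x_p(s)) ds, where x_p(s) = e^{(T−s)/p}(y + p) − p. -/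
open MeasureTheory Real Filter Set

/-- The trajectory associated with a control v :
x(s) = e^{(T−s)/p} y + ∫_s^T e^{(s'−s)/p} v(s') ds'. -/
noncomputable def traj (p y T : ℝ) (v : ℝ → ℝ) (s : ℝ) : ℝ :=
  Real.exp ((T - s) / p) * y + ∫ s' in s..T, Real.exp ((s' - s) / p) * v s'

namespace S15

/-- Integrability of a measurable function bounded on an interval. -/
lemma intervalIntegrable_of_bdd {f : ℝ → ℝ} {a b K : ℝ} (hm : Measurable f)
    (hab : a ≤ b) (hK : ∀ s ∈ Set.Icc a b, |f s| ≤ K) :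
    IntervalIntegrable f volume a b := by
  rw [intervalIntegrable_iff_integrableOn_Icc_of_le hab]
  refine Integrable.mono' (g := fun _ => K) (integrableOn_const measure_Icc_lt_top.ne)
    hm.aestronglyMeasurable.restrict ?_
  exact (ae_restrict_iff' measurableSet_Icc).2 (ae_of_all _ hK)

/-- FTC : integral of e^{(s-T)/p}. -/
lemma integral_E {p T : ℝ} (hp : 0 < p) (a b : ℝ) :
    ∫ s in a..b, Real.exp ((s - T) / p)
      = p * Real.exp ((b - T) / p) - p * Real.exp ((a - T) / p) := by
  have h : ∀ s ∈ Set.uIcc a b,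
      HasDerivAt (fun s => p * Real.exp ((s - T) / p)) (Real.exp ((s - T) / p)) s := by
    intro s _
    have h1 : HasDerivAt (fun s : ℝ => (s - T) / p) (1 / p) s := by
      simpa using ((hasDerivAt_id s).sub_const T).div_const p
    have := (Real.hasDerivAt_exp ((s - T) / p)).comp s h1
    have h2 := this.const_mul p
    refine h2.congr_deriv ?_
    field_simp
  have hc : ContinuousOn (fun s => Real.exp ((s - T) / p)) (Set.uIcc a b) :=
    (Real.continuous_exp.comp (by continuity)).continuousOn
  simpa using intervalIntegral.integral_eq_sub_of_hasDerivAt h hc.intervalIntegrable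

end S15

noncomputable section
namespace S15

/-- E s = e^{(s-T)/p}. -/
def E (p T s : ℝ) : ℝ := Real.exp ((s - T) / p)

lemma E_pos (p T s : ℝ) : 0 < E p T s := Real.exp_pos _

lemma E_cont (p T : ℝ) : Continuous (E p T) := Real.continuous_exp.comp (by continuity)

lemma E_T (p T : ℝ) : E p T T = 1 := by simp [E]

lemma E_mono {p T : ℝ} (hp : 0 < p) {s s' : ℝ} (h : s ≤ s') : E p T s ≤ E p T s' :=
  Real.exp_le_exp.2 ((div_le_div_iff_of_pos_right hp).2 (by linarith))

lemma E_le_one {p T s : ℝ} (hp : 0 < p) (h : s ≤ T) : E p T s ≤ 1 := by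
  simpa [E_T] using E_mono (T := T) hp h

lemma E_strictMono {p T : ℝ} (hp : 0 < p) {s s' : ℝ} (h : s < s') : E p T s < E p T s' :=
  Real.exp_lt_exp.2 ((div_lt_div_iff_of_pos_right hp).2 (by linarith))

lemma integral_E' {p T : ℝ} (hp : 0 < p) (a b : ℝ) :
    ∫ s in a..b, E p T s = p * E p T b - p * E p T a := integral_E hp a b

/-- The transformed trajectory X(s) = y + ∫_s^T E(s') v(s') ds'. -/
def XC (p y T : ℝ) (v : ℝ → ℝ) (s : ℝ) : ℝ := y + ∫ s' in s..T, E p T s' * v s'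

lemma exp_mul_E {p T s : ℝ} : Real.exp ((T - s) / p) * E p T s = 1 := by
  rw [E, ← Real.exp_add, ← Real.exp_zero]
  ring_nf

lemma traj_eq (p y T : ℝ) (v : ℝ → ℝ) (s : ℝ) :
    traj p y T v s = Real.exp ((T - s) / p) * XC p y T v s := by
  have key : ∀ s' : ℝ, Real.exp ((s' - s) / p) * v s'
      = Real.exp ((T - s) / p) * (E p T s' * v s') := by
    intro s'
    rw [E, ← mul_assoc, ← Real.exp_add]
    ring_nf
  rw [traj, XC]
  simp_rw [key]
  rw [intervalIntegral.integral_const_mul]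
  ring

end S15
end

noncomputable section
namespace S15

lemma E_lt_E_iff {p T : ℝ} (hp : 0 < p) {s s' : ℝ} : E p T s < E p T s' ↔ s < s' := by
  rw [E, E, Real.exp_lt_exp, div_lt_div_iff_of_pos_right hp]
  constructor <;> intro h <;> linarith

/-- x_p(s) in terms of XP(s) := y + p(1-E(s)). -/
def XP (p y T s : ℝ) : ℝ := y + p * (1 - E p T s)

lemma xpTraj_eq (p y T s : ℝ) : xpTraj p y T s = Real.exp ((T - s) / p) * XP p y T s := by
  have h := exp_mul_E (p := p) (T := T) (s := s)
  rw [xpTraj, XP]; linear_combination p * h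

lemma E_mul_xpTraj (p y T s : ℝ) : E p T s * xpTraj p y T s = XP p y T s := by
  have h := exp_mul_E (p := p) (T := T) (s := s)
  rw [xpTraj_eq]
  linear_combination XP p y T s * h

def zeta (p y u : ℝ) : ℝ := u * p / (p + y - u)

def psi (g : ℝ → ℝ) (ginf p y u : ℝ) : ℝ := (g (zeta p y u) - ginf) * (p / (p + y - u))

lemma p_add_y_sub_XP (p y T s : ℝ) : p + y - XP p y T s = p * E p T s := by
  rw [XP]; ring

lemma zeta_XP (p y T s : ℝ) (hp : 0 < p) : zeta p y (XP p y T s) = xpTraj p y T s := by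
  have hE := E_pos p T s
  have h1 := E_mul_xpTraj p y T s
  rw [zeta, p_add_y_sub_XP]
  field_simp
  nlinarith [h1]

lemma psi_XP (g : ℝ → ℝ) (ginf p y T s : ℝ) (hp : 0 < p) :
    psi g ginf p y (XP p y T s) * E p T s = g (xpTraj p y T s) - ginf := by
  have hE := E_pos p T s
  rw [psi, zeta_XP _ _ _ _ hp, p_add_y_sub_XP]
  field_simp

lemma zeta_pos {p y u : ℝ} (hp : 0 < p) (hu : 0 < u) (hu2 : u < p + y) :
    0 < zeta p y u := div_pos (by positivity) (by linarith)

lemma zeta_mono {p y : ℝ} (hp : 0 < p) (hy : 0 < y) {u1 u2 : ℝ} (h1 : 0 < u1)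
    (h12 : u1 ≤ u2) (h2 : u2 < p + y) : zeta p y u1 ≤ zeta p y u2 := by
  rw [zeta, zeta, div_le_div_iff₀ (by linarith) (by linarith)]
  nlinarith [mul_nonneg (sub_nonneg.2 h12) (show (0:ℝ) ≤ p + y by linarith)]

lemma psi_eq (g : ℝ → ℝ) (ginf p y : ℝ) {u : ℝ} (hu : u ≠ 0) (hu2 : p + y - u ≠ 0) :
    psi g ginf p y u = zeta p y u * (g (zeta p y u) - ginf) / u := by
  rw [psi, zeta]
  field_simp

end S15
end

noncomputable section
namespace S15
variable {p y ginf : ℝ} {g : ℝ → ℝ}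

lemma g_ge_ginf (hgdec : AntitoneOn g (Set.Ioi 0)) (hglim : Tendsto g atTop (nhds ginf))
    {z : ℝ} (hz : 0 < z) : ginf ≤ g z := by
  apply le_of_tendsto hglim
  filter_upwards [eventually_ge_atTop (max z 1)] with w hw
  have hw0 : (0:ℝ) < w := lt_of_lt_of_le one_pos (le_trans (le_max_right z 1) hw)
  exact hgdec (Set.mem_Ioi.2 hz) (Set.mem_Ioi.2 hw0) (le_trans (le_max_left z 1) hw)

lemma psi_nonneg (hp : 0 < p) (hgdec : AntitoneOn g (Set.Ioi 0))
    (hglim : Tendsto g atTop (nhds ginf)) {u : ℝ} (hu : 0 < u) (hu2 : u < p + y) :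
    0 ≤ psi g ginf p y u := by
  apply mul_nonneg (sub_nonneg.2 (g_ge_ginf hgdec hglim (zeta_pos hp hu hu2)))
  apply le_of_lt; apply div_pos hp; linarith

lemma psi_anti (hp : 0 < p) (hy : 0 < y) (hgdec : AntitoneOn g (Set.Ioi 0))
    (hglim : Tendsto g atTop (nhds ginf))
    (hxgdec : AntitoneOn (fun z => z * (g z - ginf)) (Set.Ioi 0))
    {u1 u2 : ℝ} (h1 : 0 < u1) (h12 : u1 ≤ u2) (h2 : u2 < p + y) :
    psi g ginf p y u2 ≤ psi g ginf p y u1 := by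
  have h20 : 0 < u2 := lt_of_lt_of_le h1 h12
  have h1' : u1 < p + y := lt_of_le_of_lt h12 h2
  rw [psi_eq g ginf p y (ne_of_gt h1) (show p + y - u1 ≠ 0 by intro h; rw [sub_eq_zero] at h; exact absurd h.symm (ne_of_lt h1')), psi_eq g ginf p y (ne_of_gt h20)
    (show p + y - u2 ≠ 0 by intro h; rw [sub_eq_zero] at h; exact absurd h.symm (ne_of_lt h2))]
  have hz1 : 0 < zeta p y u1 := zeta_pos hp h1 h1'
  have hz2 : 0 < zeta p y u2 := zeta_pos hp h20 h2
  have hz12 : zeta p y u1 ≤ zeta p y u2 := zeta_mono hp hy h1 h12 h2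
  have hkey : zeta p y u2 * (g (zeta p y u2) - ginf) ≤ zeta p y u1 * (g (zeta p y u1) - ginf) :=
    hxgdec (Set.mem_Ioi.2 hz1) (Set.mem_Ioi.2 hz2) hz12
  have hnn : 0 ≤ zeta p y u2 * (g (zeta p y u2) - ginf) :=
    mul_nonneg (le_of_lt hz2) (sub_nonneg.2 (g_ge_ginf hgdec hglim hz2))
  calc zeta p y u2 * (g (zeta p y u2) - ginf) / u2
      ≤ zeta p y u2 * (g (zeta p y u2) - ginf) / u1 :=
        div_le_div_of_nonneg_left hnn h1 h12
    _ ≤ zeta p y u1 * (g (zeta p y u1) - ginf) / u1 := by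
        exact div_le_div_of_nonneg_right hkey h1.le

lemma psi_contOn (hp : 0 < p) (hy : 0 < y) (hgcont : ContinuousOn g (Set.Ioi 0))
    {C : ℝ} (hCy : y ≤ C) (hC : C < p + y) :
    ContinuousOn (psi g ginf p y) (Set.Icc y C) := by
  have hden : ∀ u ∈ Set.Icc y C, p + y - u ≠ 0 := by
    rintro u ⟨hu1, hu2⟩; have : 0 < p + y - u := by linarith
    exact ne_of_gt this
  have hzc : ContinuousOn (zeta p y) (Set.Icc y C) := by
    apply ContinuousOn.div (by fun_prop) (by fun_prop) hden
  have hmaps : ∀ u ∈ Set.Icc y C, zeta p y u ∈ Set.Ioi (0:ℝ) := by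
    rintro u ⟨hu1, hu2⟩
    exact Set.mem_Ioi.2 (zeta_pos hp (by linarith) (by linarith))
  have hgz : ContinuousOn (fun u => g (zeta p y u)) (Set.Icc y C) :=
    hgcont.comp hzc hmaps
  exact (hgz.sub continuousOn_const).mul (ContinuousOn.div continuousOn_const (by fun_prop) hden)

end S15
end

noncomputable section
namespace S15

variable {p y t T : ℝ} {v : ℝ → ℝ}

lemma m_intInt (hp : 0 < p) (hvm : Measurable v)
    (hv : ∀ s ∈ Set.Icc t T, 0 < v s ∧ v s ≤ 1)
    {a b : ℝ} (ha : a ∈ Set.Icc t T) (hb : b ∈ Set.Icc t T) (hab : a ≤ b) :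
    IntervalIntegrable (fun s => E p T s * v s) volume a b := by
  apply intervalIntegrable_of_bdd (K := 1) ((E_cont p T).measurable.mul hvm) hab
  intro s hs
  have hs' : s ∈ Set.Icc t T := ⟨le_trans ha.1 hs.1, le_trans hs.2 hb.2⟩
  have h1 := (hv s hs').1
  have h2 := (hv s hs').2
  have hE1 : E p T s ≤ 1 := E_le_one hp hs'.2
  have hE0 : 0 < E p T s := E_pos p T s
  rw [Pi.mul_apply, abs_le]; constructor <;> nlinarith

lemma XC_T : XC p y T v T = y := by simp [XC]

lemma XC_diff (hp : 0 < p) (hvm : Measurable v)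
    (hv : ∀ s ∈ Set.Icc t T, 0 < v s ∧ v s ≤ 1)
    {a b : ℝ} (ha : a ∈ Set.Icc t T) (hb : b ∈ Set.Icc t T) (hab : a ≤ b) :
    XC p y T v a = XC p y T v b + ∫ s in a..b, E p T s * v s := by
  have htT' : t ≤ T := le_trans ha.1 ha.2
  have h := intervalIntegral.integral_add_adjacent_intervals
    (m_intInt hp hvm hv ha hb hab)
    (m_intInt hp hvm hv hb (Set.right_mem_Icc.2 htT') hb.2)
  rw [XC, XC, ← h]; ring

lemma XC_anti (hp : 0 < p) (hvm : Measurable v)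
    (hv : ∀ s ∈ Set.Icc t T, 0 < v s ∧ v s ≤ 1)
    {a b : ℝ} (ha : a ∈ Set.Icc t T) (hb : b ∈ Set.Icc t T) (hab : a ≤ b) :
    XC p y T v b ≤ XC p y T v a := by
  rw [XC_diff hp hvm hv ha hb hab]
  have : 0 ≤ ∫ s in a..b, E p T s * v s := by
    apply intervalIntegral.integral_nonneg hab
    intro s hs
    have hs' : s ∈ Set.Icc t T := ⟨le_trans ha.1 hs.1, le_trans hs.2 hb.2⟩
    exact le_of_lt (mul_pos (E_pos p T s) (hv s hs').1)
  linarith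

lemma XC_ge_y (hp : 0 < p) (hvm : Measurable v)
    (hv : ∀ s ∈ Set.Icc t T, 0 < v s ∧ v s ≤ 1)
    {s : ℝ} (hs : s ∈ Set.Icc t T) : y ≤ XC p y T v s := by
  have htT' : t ≤ T := le_trans hs.1 hs.2
  have := XC_anti (y := y) hp hvm hv hs (Set.right_mem_Icc.2 htT') hs.2
  rw [XC_T] at this; exact this

lemma XC_le_XP (hp : 0 < p) (hvm : Measurable v)
    (hv : ∀ s ∈ Set.Icc t T, 0 < v s ∧ v s ≤ 1)
    {s : ℝ} (hs : s ∈ Set.Icc t T) : XC p y T v s ≤ XP p y T s := by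
  have htT' : t ≤ T := le_trans hs.1 hs.2
  have hint : (∫ s' in s..T, E p T s' * v s') ≤ ∫ s' in s..T, E p T s' := by
    apply intervalIntegral.integral_mono_on hs.2
      (m_intInt hp hvm hv hs (Set.right_mem_Icc.2 htT') hs.2)
      ((Real.continuous_exp.comp (by continuity)).continuousOn.intervalIntegrable)
    intro u hu
    have hu' : u ∈ Set.Icc t T := ⟨le_trans hs.1 hu.1, hu.2⟩
    have hE0 : 0 < E p T u := E_pos p T u
    simpa [E] using mul_le_of_le_one_right hE0.le (hv u hu').2
  rw [XC, XP]
  rw [integral_E' hp, E_T] at hint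
  nlinarith

lemma XC_contOn (hp : 0 < p) (htT : t ≤ T) (hvm : Measurable v)
    (hv : ∀ s ∈ Set.Icc t T, 0 < v s ∧ v s ≤ 1) :
    ContinuousOn (XC p y T v) (Set.Icc t T) := by
  have hInt : IntegrableOn (fun s => E p T s * v s) (Set.uIcc t T) volume := by
    rw [Set.uIcc_of_le htT]
    rw [← intervalIntegrable_iff_integrableOn_Icc_of_le htT]
    exact m_intInt hp hvm hv (Set.left_mem_Icc.2 htT) (Set.right_mem_Icc.2 htT) htT
  have h2 : ContinuousOn (fun s => ∫ s' in s..T, E p T s' * v s') (Set.Icc t T) := by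
    rw [← Set.uIcc_of_le htT]
    exact intervalIntegral.continuousOn_primitive_interval_left hInt
  exact continuousOn_const.add h2

end S15
end

noncomputable section
namespace S15
variable {p y t T ginf : ℝ} {v g : ℝ → ℝ}

lemma traj_div (hp : 0 < p) {s : ℝ} (hvs : v s ≠ 0) :
    traj p y T v s / v s = XC p y T v s / (E p T s * v s) := by
  rw [traj_eq]
  have h := exp_mul_E (p := p) (T := T) (s := s)
  have hE : E p T s ≠ 0 := ne_of_gt (E_pos p T s)
  field_simp
  linear_combination XC p y T v s * h

lemma claimP (hp : 0 < p) (hy : 0 < y) (hvm : Measurable v)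
    (hv : ∀ s ∈ Set.Icc t T, 0 < v s ∧ v s ≤ 1)
    (hgdec : AntitoneOn g (Set.Ioi 0)) (hglim : Tendsto g atTop (nhds ginf))
    (hxgdec : AntitoneOn (fun z => z * (g z - ginf)) (Set.Ioi 0))
    {s : ℝ} (hs : s ∈ Set.Icc t T) :
    g (traj p y T v s / v s) - ginf
      ≤ psi g ginf p y (XC p y T v s) * (E p T s * v s) := by
  set u := XC p y T v s with hu
  set ms := E p T s * v s with hms_def
  have hvs := (hv s hs).1
  have hvs1 := (hv s hs).2
  have hEpos := E_pos p T s
  have hE1 : E p T s ≤ 1 := E_le_one hp hs.2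
  have hms : 0 < ms := mul_pos hEpos hvs
  have hms_le : ms ≤ E p T s := mul_le_of_le_one_right hEpos.le hvs1
  have hu_y : y ≤ u := XC_ge_y hp hvm hv hs
  have hu0 : 0 < u := lt_of_lt_of_le hy hu_y
  have huXP : u ≤ XP p y T s := XC_le_XP hp hvm hv hs
  have hXPp : XP p y T s < p + y := by rw [XP]; nlinarith
  have hupy : u < p + y := lt_of_le_of_lt huXP hXPp
  have hden : 0 < p + y - u := by linarith
  set z := u / ms with hz_def
  have hz0 : 0 < z := div_pos hu0 hms
  have hzeta0 : 0 < zeta p y u := zeta_pos hp hu0 hupy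
  -- zeta u ≤ z
  have hzeta_le : zeta p y u ≤ z := by
    have h1 : zeta p y u ≤ u / E p T s := by
      have hrw : u / E p T s = u * p / (p * E p T s) := by
        field_simp
      rw [zeta, hrw]
      apply div_le_div_of_nonneg_left (by positivity) (by positivity)
      have := p_add_y_sub_XP p y T s
      nlinarith
    have h2 : u / E p T s ≤ z := div_le_div_of_nonneg_left hu0.le hms hms_le
    linarith
  have hkey : z * (g z - ginf) ≤ zeta p y u * (g (zeta p y u) - ginf) :=
    hxgdec (Set.mem_Ioi.2 hzeta0) (Set.mem_Ioi.2 hz0) hzeta_le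
  have htd : traj p y T v s / v s = z := traj_div hp (ne_of_gt hvs)
  rw [htd]
  have step1 : g z - ginf ≤ zeta p y u * (g (zeta p y u) - ginf) / z := by
    have := div_le_div_of_nonneg_right hkey hz0.le
    rwa [mul_comm z (g z - ginf), mul_div_assoc, div_self (ne_of_gt hz0), mul_one] at this
  have step2 : zeta p y u * (g (zeta p y u) - ginf) / z = psi g ginf p y u * ms := by
    rw [psi_eq g ginf p y (ne_of_gt hu0) (ne_of_gt hden), hz_def]
    field_simp
  linarith

end S15
end

noncomputable section
namespace S15
variable {p y t T ginf : ℝ} {v g : ℝ → ℝ}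

lemma integrableOn_of_bdd_ae {f : ℝ → ℝ} {a b K : ℝ}
    (hm : AEMeasurable f (volume.restrict (Set.Icc a b)))
    (hK : ∀ s ∈ Set.Icc a b, |f s| ≤ K) : IntegrableOn f (Set.Icc a b) volume :=
  Integrable.mono' (g := fun _ => K) (integrableOn_const measure_Icc_lt_top.ne)
    hm.aestronglyMeasurable ((ae_restrict_iff' measurableSet_Icc).2 (ae_of_all _ hK))

lemma traj_div_ge_y (hp : 0 < p) (hy : 0 < y) (hvm : Measurable v)
    (hv : ∀ s ∈ Set.Icc t T, 0 < v s ∧ v s ≤ 1)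
    {s : ℝ} (hs : s ∈ Set.Icc t T) : y ≤ traj p y T v s / v s := by
  rw [traj_div hp (ne_of_gt (hv s hs).1)]
  have hms : 0 < E p T s * v s := mul_pos (E_pos p T s) (hv s hs).1
  have hms1 : E p T s * v s ≤ 1 := mul_le_one₀ (E_le_one hp hs.2) (hv s hs).1.le (hv s hs).2
  have huy : y ≤ XC p y T v s := XC_ge_y hp hvm hv hs
  calc y ≤ XC p y T v s := huy
    _ ≤ XC p y T v s / (E p T s * v s) := by
        rw [le_div_iff₀ hms]
        nlinarith

lemma traj_contOn (hp : 0 < p) (htT : t ≤ T) (hvm : Measurable v)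
    (hv : ∀ s ∈ Set.Icc t T, 0 < v s ∧ v s ≤ 1) :
    ContinuousOn (traj p y T v) (Set.Icc t T) := by
  have h1 : ContinuousOn (fun s => Real.exp ((T - s) / p) * XC p y T v s) (Set.Icc t T) :=
    (Real.continuous_exp.comp (by continuity)).continuousOn.mul (XC_contOn hp htT hvm hv)
  exact h1.congr (fun s _ => traj_eq p y T v s)

lemma obj_integrableOn (hp : 0 < p) (hy : 0 < y) (htT : t ≤ T) (hvm : Measurable v)
    (hv : ∀ s ∈ Set.Icc t T, 0 < v s ∧ v s ≤ 1)
    (hgcont : ContinuousOn g (Set.Ioi 0)) (hgdec : AntitoneOn g (Set.Ioi 0))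
    (hglim : Tendsto g atTop (nhds ginf)) :
    IntegrableOn (fun s => g (traj p y T v s / v s)) (Set.Icc t T) volume := by
  set Gm : ℝ → ℝ := fun z => g (max z y) with hGm
  have hGmc : Continuous Gm := by
    apply hgcont.comp_continuous (by continuity)
    intro z; exact Set.mem_Ioi.2 (lt_of_lt_of_le hy (le_max_right z y))
  have htm : AEMeasurable (fun s => traj p y T v s / v s) (volume.restrict (Set.Icc t T)) :=
    AEMeasurable.div ((traj_contOn hp htT hvm hv).aemeasurable measurableSet_Icc)
      hvm.aemeasurable
  have heq : ∀ s ∈ Set.Icc t T, Gm (traj p y T v s / v s) = g (traj p y T v s / v s) := by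
    intro s hs
    rw [hGm]; simp only []
    rw [max_eq_left (traj_div_ge_y hp hy hvm hv hs)]
  have hGmeas : AEMeasurable (fun s => g (traj p y T v s / v s))
      (volume.restrict (Set.Icc t T)) := by
    refine (hGmc.measurable.comp_aemeasurable htm).congr ?_
    exact (ae_restrict_iff' measurableSet_Icc).2 (ae_of_all _ heq)
  apply integrableOn_of_bdd_ae (K := max |g y| |ginf|) hGmeas
  intro s hs
  have h1 : y ≤ traj p y T v s / v s := traj_div_ge_y hp hy hvm hv hs
  have h2 : g (traj p y T v s / v s) ≤ g y :=
    hgdec (Set.mem_Ioi.2 hy) (Set.mem_Ioi.2 (lt_of_lt_of_le hy h1)) h1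
  have h3 : ginf ≤ g (traj p y T v s / v s) :=
    g_ge_ginf hgdec hglim (lt_of_lt_of_le hy h1)
  rw [abs_le]
  constructor
  · calc -(max |g y| |ginf|) ≤ -|ginf| := by simp [neg_le_neg_iff]
      _ ≤ ginf := neg_abs_le _
      _ ≤ _ := h3
  · exact le_trans h2 (le_trans (le_abs_self _) (le_max_left _ _))

lemma psiXC_contOn (hp : 0 < p) (hy : 0 < y) (htT : t ≤ T) (hvm : Measurable v)
    (hv : ∀ s ∈ Set.Icc t T, 0 < v s ∧ v s ≤ 1)
    (hgcont : ContinuousOn g (Set.Ioi 0)) :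
    ContinuousOn (fun s => psi g ginf p y (XC p y T v s)) (Set.Icc t T) := by
  have hCy : y ≤ XC p y T v t := XC_ge_y hp hvm hv (Set.left_mem_Icc.2 htT)
  have hCp : XC p y T v t < p + y := by
    have h1 := XC_le_XP (y := y) hp hvm hv (Set.left_mem_Icc.2 htT)
    have h2 : XP p y T t < p + y := by rw [XP]; nlinarith [E_pos p T t]
    linarith
  apply (psi_contOn hp hy hgcont hCy hCp).comp (XC_contOn hp htT hvm hv)
  intro s hs
  exact ⟨XC_ge_y hp hvm hv hs, XC_anti hp hvm hv (Set.left_mem_Icc.2 htT) hs hs.1⟩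

lemma claimF (hp : 0 < p) (hy : 0 < y) (htT : t < T) (hvm : Measurable v)
    (hv : ∀ s ∈ Set.Icc t T, 0 < v s ∧ v s ≤ 1)
    (hgcont : ContinuousOn g (Set.Ioi 0)) (hgdec : AntitoneOn g (Set.Ioi 0))
    (hglim : Tendsto g atTop (nhds ginf))
    (hxgdec : AntitoneOn (fun z => z * (g z - ginf)) (Set.Ioi 0))
    {C : ℝ} (hcon : XC p y T v t = C) (hCy : y < C) :
    (∫ s in t..T, psi g ginf p y (XC p y T v s) * (E p T s * v s))
      ≤ ∫ u in y..C, psi g ginf p y u := by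
  have htT' : t ≤ T := htT.le
  have hmemt : t ∈ Set.Icc t T := Set.left_mem_Icc.2 htT'
  have hmemT : T ∈ Set.Icc t T := Set.right_mem_Icc.2 htT'
  have hCp : C < p + y := by
    have h1 := XC_le_XP (y := y) hp hvm hv hmemt
    have h2 : XP p y T t < p + y := by rw [XP]; nlinarith [E_pos p T t]
    rw [hcon] at h1; linarith
  set Φ : ℝ → ℝ := fun s => psi g ginf p y (XC p y T v s) * (E p T s * v s) with hΦdef
  set R : ℝ := ∫ u in y..C, psi g ginf p y u with hR
  have hpsi_cont : ContinuousOn (psi g ginf p y) (Set.Icc y C) :=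
    psi_contOn hp hy hgcont hCy.le hCp
  -- facts about XC along [t,T]
  have hXCmem : ∀ s ∈ Set.Icc t T, XC p y T v s ∈ Set.Icc y C := by
    intro s hs
    exact ⟨XC_ge_y hp hvm hv hs, hcon ▸ XC_anti hp hvm hv hmemt hs hs.1⟩
  have hXClt : ∀ s ∈ Set.Icc t T, XC p y T v s < p + y :=
    fun s hs => lt_of_le_of_lt (hXCmem s hs).2 hCp
  -- integrability of Φ on [t,T]
  have hΦint : IntegrableOn Φ (Set.Icc t T) volume := by
    apply integrableOn_of_bdd_ae (K := |psi g ginf p y y|)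
    · exact (((psiXC_contOn hp hy htT' hvm hv hgcont).aemeasurable measurableSet_Icc).mul
        ((E_cont p T).measurable.mul hvm).aemeasurable)
    · intro s hs
      have h1 : 0 ≤ psi g ginf p y (XC p y T v s) :=
        psi_nonneg hp hgdec hglim (lt_of_lt_of_le hy (hXCmem s hs).1) (hXClt s hs)
      have h2 : psi g ginf p y (XC p y T v s) ≤ psi g ginf p y y :=
        psi_anti hp hy hgdec hglim hxgdec hy (hXCmem s hs).1 (hXClt s hs)
      have h3 : 0 < E p T s * v s := mul_pos (E_pos p T s) (hv s hs).1
      have h4 : E p T s * v s ≤ 1 := mul_le_one₀ (E_le_one hp hs.2) (hv s hs).1.le (hv s hs).2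
      simp only [hΦdef]
      rw [abs_le]
      constructor
      · nlinarith [abs_nonneg (psi g ginf p y y)]
      · nlinarith [le_abs_self (psi g ginf p y y)]
  -- intervalIntegrability of psi on subintervals of [y,C]
  have hpsiII : ∀ {a b : ℝ}, y ≤ a → a ≤ b → b ≤ C →
      IntervalIntegrable (psi g ginf p y) volume a b := by
    intro a b hya hab hbC
    apply ContinuousOn.intervalIntegrable
    rw [Set.uIcc_of_le hab]
    exact hpsi_cont.mono (Set.Icc_subset_Icc hya hbC)
  -- main step : bound for each n
  have hmain : ∀ n : ℕ, 0 < n →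
      (∫ s in t..T, Φ s) ≤ R + (C - y) * (psi g ginf p y y - psi g ginf p y C) / n := by
    intro n hn
    have hnR : (0:ℝ) < n := Nat.cast_pos.2 hn
    set Δ : ℝ := (C - y) / n with hΔdef
    have hΔ0 : 0 < Δ := div_pos (by linarith) hnR
    set U : ℕ → ℝ := fun i => C - i * Δ with hUdef
    have hU0 : U 0 = C := by simp [hUdef]
    have hUn : U n = y := by
      rw [hUdef]; simp only []; rw [hΔdef]; field_simp; ring
    have hUstep : ∀ i : ℕ, U i - U (i + 1) = Δ := by
      intro i; rw [hUdef]; simp only []; push_cast; ring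
    have hUmem : ∀ i ≤ n, U i ∈ Set.Icc y C := by
      intro i hi
      have hin : (i:ℝ) ≤ n := Nat.cast_le.2 hi
      have hi0 : (0:ℝ) ≤ i := Nat.cast_nonneg i
      have hnΔ : (n:ℝ) * Δ = C - y := by rw [hΔdef]; field_simp
      have hiΔ : (i:ℝ) * Δ ≤ n * Δ := mul_le_mul_of_nonneg_right hin hΔ0.le
      constructor
      · rw [hUdef]; simp only []; linarith
      · rw [hUdef]; simp only []; nlinarith
    have hUanti : ∀ i : ℕ, U (i + 1) < U i := by
      intro i; have := hUstep i; linarith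
    -- choice of partition points
    have hIVT : ∀ i : ℕ, 0 < i → i < n → ∃ si, si ∈ Set.Icc t T ∧ XC p y T v si = U i := by
      intro i hi0 hin
      have hmem : U i ∈ Set.Icc (XC p y T v T) (XC p y T v t) := by
        rw [XC_T, hcon]; exact hUmem i hin.le
      have h := intermediate_value_Icc' htT' (XC_contOn hp htT' hvm hv) hmem
      obtain ⟨si, hsi, hXCsi⟩ := h
      exact ⟨si, hsi, hXCsi⟩
    set S : ℕ → ℝ := fun i =>
      if h : i = 0 then t else if h' : n ≤ i then T
      else Classical.choose (hIVT i (Nat.pos_of_ne_zero h) (not_le.1 h')) with hSdef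
    have hS0 : S 0 = t := by simp [hSdef]
    have hSn : S n = T := by simp [hSdef, hn.ne']
    have hSmid : ∀ i (h0 : i ≠ 0) (h1 : ¬ n ≤ i),
        S i = Classical.choose (hIVT i (Nat.pos_of_ne_zero h0) (not_le.1 h1)) := by
      intro i h0 h1; simp [hSdef, h0, h1]
    have hS : ∀ i ≤ n, S i ∈ Set.Icc t T ∧ XC p y T v (S i) = U i := by
      intro i hi
      by_cases h0 : i = 0
      · subst h0
        rw [hS0]
        exact ⟨hmemt, by rw [hcon, hU0]⟩
      · by_cases h1 : n ≤ i
        · have hieq : i = n := le_antisymm hi h1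
          subst hieq
          rw [hSn]
          exact ⟨hmemT, by rw [XC_T, hUn]⟩
        · rw [hSmid i h0 h1]
          exact Classical.choose_spec (hIVT i (Nat.pos_of_ne_zero h0) (not_le.1 h1))
    have hSmono : ∀ i, i < n → S i ≤ S (i + 1) := by
      intro i hi
      by_contra hcon2
      push_neg at hcon2
      have h1 := hS i hi.le
      have h2 := hS (i + 1) hi
      have h3 := XC_anti (y := y) hp hvm hv h2.1 h1.1 hcon2.le
      rw [h1.2, h2.2] at h3
      have := hUanti i
      linarith
    -- pieces integrable
    have hsub : ∀ i, i < n → Set.Icc (S i) (S (i+1)) ⊆ Set.Icc t T := by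
      intro i hi
      exact Set.Icc_subset_Icc (hS i hi.le).1.1 (hS (i+1) hi).1.2
    have hΦii : ∀ i, i < n → IntervalIntegrable Φ volume (S i) (S (i+1)) := by
      intro i hi
      rw [intervalIntegrable_iff_integrableOn_Icc_of_le (hSmono i hi)]
      exact hΦint.mono_set (hsub i hi)
    have hsum1 := intervalIntegral.sum_integral_adjacent_intervals hΦii
    rw [hS0, hSn] at hsum1
    -- per-piece upper bound
    have hpiece : ∀ i, i < n →
        (∫ s in (S i)..(S (i+1)), Φ s) ≤ psi g ginf p y (U (i+1)) * Δ := by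
      intro i hi
      have hi1 : i + 1 ≤ n := hi
      have hU1mem := hUmem (i+1) hi1
      have hmii : IntervalIntegrable (fun s => psi g ginf p y (U (i+1)) * (E p T s * v s))
          volume (S i) (S (i+1)) :=
        (m_intInt hp hvm hv (hS i hi.le).1 (hS (i+1) hi1).1 (hSmono i hi)).const_mul _
      have hmono := intervalIntegral.integral_mono_on (hSmono i hi) (hΦii i hi) hmii ?_
      · have hmint : (∫ s in (S i)..(S (i+1)), E p T s * v s) = Δ := by
          have hd := XC_diff (y := y) hp hvm hv (hS i hi.le).1 (hS (i+1) hi1).1 (hSmono i hi)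
          rw [(hS i hi.le).2, (hS (i+1) hi1).2] at hd
          have := hUstep i
          linarith
        rw [intervalIntegral.integral_const_mul, hmint] at hmono
        exact hmono
      · intro r hr
        have hrI : r ∈ Set.Icc t T := hsub i hi hr
        have hXCr := hXCmem r hrI
        have h1 : U (i+1) ≤ XC p y T v r := by
          have := XC_anti (y := y) hp hvm hv ⟨hrI.1, hrI.2⟩ (hS (i+1) hi1).1 hr.2
          rw [(hS (i+1) hi1).2] at this
          exact this
        have h2 : psi g ginf p y (XC p y T v r) ≤ psi g ginf p y (U (i+1)) :=
          psi_anti hp hy hgdec hglim hxgdec (lt_of_lt_of_le hy hU1mem.1) h1 (hXClt r hrI)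
        have h3 : 0 ≤ E p T r * v r := (mul_pos (E_pos p T r) (hv r hrI).1).le
        exact mul_le_mul_of_nonneg_right h2 h3
    -- per-piece lower bound for R
    have hpiece2 : ∀ i, i < n →
        psi g ginf p y (U i) * Δ ≤ ∫ u in (U (i+1))..(U i), psi g ginf p y u := by
      intro i hi
      have hU1mem := hUmem (i+1) hi
      have hUimem := hUmem i hi.le
      have hconst : IntervalIntegrable (fun _ => psi g ginf p y (U i)) volume (U (i+1)) (U i) :=
        intervalIntegrable_const
      have hmono := intervalIntegral.integral_mono_on (hUanti i).le hconst
        (hpsiII hU1mem.1 (hUanti i).le hUimem.2) ?_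
      · rw [intervalIntegral.integral_const, hUstep i, smul_eq_mul, mul_comm] at hmono
        exact hmono
      · intro u hu
        exact psi_anti hp hy hgdec hglim hxgdec
          (lt_of_lt_of_le hy (le_trans hU1mem.1 hu.1)) hu.2 (lt_of_le_of_lt hUimem.2 hCp)
    -- antitonicity of U in its index
    have hUmono : ∀ a b : ℕ, a ≤ b → U b ≤ U a := by
      intro a b hab
      have : (a:ℝ) ≤ b := Nat.cast_le.2 hab
      rw [hUdef]; simp only []; nlinarith
    -- summing the lower bounds : reindex
    have hsum2 : ∑ i ∈ Finset.range n, (∫ u in (U (i+1))..(U i), psi g ginf p y u) = R := by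
      have hint : ∀ j, j < n → IntervalIntegrable (psi g ginf p y) volume
          (U (n - j)) (U (n - (j+1))) := by
        intro j hj
        exact hpsiII (hUmem (n - j) (by omega)).1 (hUmono (n - (j+1)) (n - j) (by omega))
          (hUmem (n - (j+1)) (by omega)).2
      have hadj := intervalIntegral.sum_integral_adjacent_intervals hint
      simp only [Nat.sub_zero, Nat.sub_self] at hadj
      rw [hUn, hU0] at hadj
      rw [hR, ← hadj]
      rw [← Finset.sum_range_reflect (fun i => ∫ u in (U (i+1))..(U i), psi g ginf p y u) n]
      apply Finset.sum_congr rfl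
      intro j hj
      have hj' : j < n := Finset.mem_range.1 hj
      have e2 : n - 1 - j + 1 = n - j := by omega
      have e3 : n - 1 - j = n - (j + 1) := by omega
      rw [e2, e3]
    -- telescoping
    have htel : ∑ i ∈ Finset.range n, psi g ginf p y (U (i+1)) * Δ
        = ∑ i ∈ Finset.range n, psi g ginf p y (U i) * Δ
          + (psi g ginf p y y - psi g ginf p y C) * Δ := by
      have t1 := Finset.sum_range_succ' (fun i => psi g ginf p y (U i) * Δ) n
      have t2 := Finset.sum_range_succ (fun i => psi g ginf p y (U i) * Δ) n
      rw [hU0] at t1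
      rw [hUn] at t2
      linarith
    have hstep1 : (∫ s in t..T, Φ s) ≤ ∑ i ∈ Finset.range n, psi g ginf p y (U (i+1)) * Δ := by
      rw [← hsum1]
      exact Finset.sum_le_sum (fun i hi => hpiece i (Finset.mem_range.1 hi))
    have hstep2 : ∑ i ∈ Finset.range n, psi g ginf p y (U i) * Δ
        ≤ ∑ i ∈ Finset.range n, (∫ u in (U (i+1))..(U i), psi g ginf p y u) :=
      Finset.sum_le_sum (fun i hi => hpiece2 i (Finset.mem_range.1 hi))
    have hfin : (∫ s in t..T, Φ s)
        ≤ R + (psi g ginf p y y - psi g ginf p y C) * Δ := by linarith [hsum2 ▸ hstep2]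
    calc (∫ s in t..T, Φ s) ≤ R + (psi g ginf p y y - psi g ginf p y C) * Δ := hfin
      _ = R + (C - y) * (psi g ginf p y y - psi g ginf p y C) / n := by
          rw [hΔdef]; ring
  -- pass to the limit n → ∞
  have htends : Tendsto
      (fun n : ℕ => R + (C - y) * (psi g ginf p y y - psi g ginf p y C) / n) atTop (nhds R) := by
    have h1 := tendsto_const_div_atTop_nhds_zero_nat
      ((C - y) * (psi g ginf p y y - psi g ginf p y C))
    have h2 := (tendsto_const_nhds (x := R) (f := (atTop : Filter ℕ))).add h1
    simpa using h2
  apply ge_of_tendsto htends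
  filter_upwards [eventually_ge_atTop 1] with n hn1
  exact hmain n hn1

lemma XP_T (p y T : ℝ) : XP p y T T = y := by rw [XP, E_T]; ring

lemma XP_hasDeriv (hp : 0 < p) (x : ℝ) : HasDerivAt (XP p y T) (-(E p T x)) x := by
  have h1 : HasDerivAt (fun s : ℝ => (s - T) / p) (1 / p) x := by
    simpa using ((hasDerivAt_id x).sub_const T).div_const p
  have h2 := (Real.hasDerivAt_exp ((x - T) / p)).comp x h1
  have h3 := ((hasDerivAt_const x (1:ℝ)).sub h2).const_mul p
  have h4 := h3.const_add y
  refine h4.congr_deriv ?_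
  rw [E]
  field_simp
  ring

lemma xpTraj_ge_y (hp : 0 < p) (hy : 0 < y) {s : ℝ} (hs : s ≤ T) : y ≤ xpTraj p y T s := by
  rw [xpTraj]
  have h1 : (1:ℝ) ≤ Real.exp ((T - s) / p) := by
    rw [← Real.exp_zero]
    apply Real.exp_le_exp.2
    exact div_nonneg (by linarith) hp.le
  nlinarith [mul_nonneg (sub_nonneg.2 h1) (show (0:ℝ) ≤ y + p by positivity)]

lemma gxp_contOn (hp : 0 < p) (hy : 0 < y) (hgcont : ContinuousOn g (Set.Ioi 0)) :
    ContinuousOn (fun s => g (xpTraj p y T s)) {s : ℝ | s ≤ T} := by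
  apply hgcont.comp
  · apply Continuous.continuousOn
    rw [show xpTraj p y T = fun s => Real.exp ((T - s)/p) * (y + p) - p from rfl]
    continuity
  · intro s hs
    exact Set.mem_Ioi.2 (lt_of_lt_of_le hy (xpTraj_ge_y hp hy hs))

lemma claimA (hp : 0 < p) (hy : 0 < y) (hgcont : ContinuousOn g (Set.Ioi 0))
    {τ : ℝ} (hτT : τ ≤ T) :
    (∫ s in τ..T, (g (xpTraj p y T s) - ginf))
      = ∫ u in y..(XP p y T τ), psi g ginf p y u := by
  have hEτ1 : E p T τ ≤ 1 := E_le_one hp hτT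
  have hEτ0 : 0 < E p T τ := E_pos p T τ
  have hCy : y ≤ XP p y T τ := by rw [XP]; nlinarith
  have hCp : XP p y T τ < p + y := by rw [XP]; nlinarith
  have himg : ∀ s ∈ Set.uIcc τ T, XP p y T s ∈ Set.Icc y (XP p y T τ) := by
    intro s hs
    rw [Set.uIcc_of_le hτT] at hs
    have h1 : E p T s ≤ 1 := E_le_one hp hs.2
    have h2 : E p T τ ≤ E p T s := E_mono hp hs.1
    constructor
    · rw [XP]; nlinarith
    · rw [XP, XP]; nlinarith
  have key := intervalIntegral.integral_comp_smul_deriv' (a := τ) (b := T)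
    (f := XP p y T) (f' := fun s => -(E p T s)) (g := psi g ginf p y)
    (fun s _ => XP_hasDeriv hp s) ((E_cont p T).neg.continuousOn) ?_
  · rw [XP_T] at key
    have hptw : ∀ s : ℝ, (fun s => -(E p T s)) s • (psi g ginf p y ∘ XP p y T) s
        = -(g (xpTraj p y T s) - ginf) := by
      intro s
      simp only [Function.comp_apply, smul_eq_mul]
      linear_combination -(psi_XP g ginf p y T s hp)
    rw [intervalIntegral.integral_congr (fun s _ => hptw s)] at key
    rw [intervalIntegral.integral_neg] at key
    rw [intervalIntegral.integral_symm y (XP p y T τ)] at key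
    linarith [key]
  · apply (psi_contOn hp hy hgcont hCy hCp).mono
    intro u hu
    obtain ⟨s, hs, rfl⟩ := hu
    exact himg s hs

lemma Phi_integrableOn (hp : 0 < p) (hy : 0 < y) (htT : t ≤ T) (hvm : Measurable v)
    (hv : ∀ s ∈ Set.Icc t T, 0 < v s ∧ v s ≤ 1)
    (hgcont : ContinuousOn g (Set.Ioi 0)) (hgdec : AntitoneOn g (Set.Ioi 0))
    (hglim : Tendsto g atTop (nhds ginf))
    (hxgdec : AntitoneOn (fun z => z * (g z - ginf)) (Set.Ioi 0)) :
    IntegrableOn (fun s => psi g ginf p y (XC p y T v s) * (E p T s * v s))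
      (Set.Icc t T) volume := by
  have hXClt : ∀ s ∈ Set.Icc t T, XC p y T v s < p + y := by
    intro s hs
    have h1 := XC_le_XP (y := y) hp hvm hv hs
    have h2 : XP p y T s < p + y := by rw [XP]; nlinarith [E_pos p T s]
    linarith
  apply integrableOn_of_bdd_ae (K := |psi g ginf p y y|)
  · exact (((psiXC_contOn hp hy htT hvm hv hgcont).aemeasurable measurableSet_Icc).mul
      ((E_cont p T).measurable.mul hvm).aemeasurable)
  · intro s hs
    have hXy := XC_ge_y (y := y) hp hvm hv hs
    have h1 : 0 ≤ psi g ginf p y (XC p y T v s) :=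
      psi_nonneg hp hgdec hglim (lt_of_lt_of_le hy hXy) (hXClt s hs)
    have h2 : psi g ginf p y (XC p y T v s) ≤ psi g ginf p y y :=
      psi_anti hp hy hgdec hglim hxgdec hy hXy (hXClt s hs)
    have h3 : 0 < E p T s * v s := mul_pos (E_pos p T s) (hv s hs).1
    have h4 : E p T s * v s ≤ 1 := mul_le_one₀ (E_le_one hp hs.2) (hv s hs).1.le (hv s hs).2
    rw [abs_le]
    constructor
    · nlinarith [abs_nonneg (psi g ginf p y y)]
    · nlinarith [le_abs_self (psi g ginf p y y)]

lemma upper_bound (hp : 0 < p) (hy : 0 < y) (htT : t < T)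
    (hgcont : ContinuousOn g (Set.Ioi 0)) (hgdec : AntitoneOn g (Set.Ioi 0))
    (hglim : Tendsto g atTop (nhds ginf))
    (hxgdec : AntitoneOn (fun z => z * (g z - ginf)) (Set.Ioi 0))
    {x τ : ℝ} (hτt : t < τ) (hτT : τ < T)
    (hEτ : p * E p T τ = p + y - x * E p T t)
    (hCy : y < x * E p T t)
    (hvm : Measurable v) (hv : ∀ s ∈ Set.Icc t T, 0 < v s ∧ v s ≤ 1)
    (hcon : traj p y T v t = x) :
    (∫ s in t..T, g (traj p y T v s / v s))
      ≤ (τ - t) * ginf + ∫ s in τ..T, g (xpTraj p y T s) := by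
  have hconX : XC p y T v t = x * E p T t := by
    have h := traj_eq p y T v t
    rw [hcon] at h
    have hm := exp_mul_E (p := p) (T := T) (s := t)
    linear_combination -(E p T t) * h - (XC p y T v t) * hm
  have hobj : IntervalIntegrable (fun s => g (traj p y T v s / v s)) volume t T :=
    (intervalIntegrable_iff_integrableOn_Icc_of_le htT.le).2
      (obj_integrableOn hp hy htT.le hvm hv hgcont hgdec hglim)
  have hΦ : IntervalIntegrable
      (fun s => psi g ginf p y (XC p y T v s) * (E p T s * v s)) volume t T :=
    (intervalIntegrable_iff_integrableOn_Icc_of_le htT.le).2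
      (Phi_integrableOn hp hy htT.le hvm hv hgcont hgdec hglim hxgdec)
  have hgix : IntervalIntegrable (fun s => g (xpTraj p y T s)) volume τ T := by
    apply ContinuousOn.intervalIntegrable
    apply (gxp_contOn hp hy hgcont).mono
    rw [Set.uIcc_of_le hτT.le]
    intro s hs; exact hs.2
  -- step 0 : split off the constant ginf
  have hsub1 := intervalIntegral.integral_sub hobj (intervalIntegrable_const (c := ginf))
  rw [intervalIntegral.integral_const, smul_eq_mul] at hsub1
  -- step 1 : pointwise domination
  have hstep1 : (∫ s in t..T, (g (traj p y T v s / v s) - ginf))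
      ≤ ∫ s in t..T, psi g ginf p y (XC p y T v s) * (E p T s * v s) := by
    apply intervalIntegral.integral_mono_on htT.le
      (hobj.sub (intervalIntegrable_const (c := ginf))) hΦ
    intro s hs
    exact claimP hp hy hvm hv hgdec hglim hxgdec hs
  -- step 2 : claim F
  have hstep2 := claimF hp hy htT hvm hv hgcont hgdec hglim hxgdec hconX hCy
  -- step 3 : claim A
  have hXPτ : XP p y T τ = x * E p T t := by
    rw [XP]; linear_combination -hEτ
  have hstep3 := claimA (ginf := ginf) hp hy hgcont hτT.le
  rw [hXPτ] at hstep3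
  -- step 4 : recombine the constant on [τ,T]
  have hsub2 := intervalIntegral.integral_sub hgix (intervalIntegrable_const (c := ginf))
  rw [intervalIntegral.integral_const, smul_eq_mul] at hsub2
  -- combine
  have e1 : (∫ s in t..T, g (traj p y T v s / v s))
      = (∫ s in t..T, (g (traj p y T v s / v s) - ginf)) + (T - t) * ginf := by
    rw [hsub1]; ring
  have e2 : (∫ s in τ..T, (g (xpTraj p y T s) - ginf))
      = (∫ s in τ..T, g (xpTraj p y T s)) - (T - τ) * ginf := hsub2
  rw [e1]
  have : (∫ s in t..T, (g (traj p y T v s / v s) - ginf))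
      ≤ (∫ s in τ..T, g (xpTraj p y T s)) - (T - τ) * ginf :=
    calc (∫ s in t..T, (g (traj p y T v s / v s) - ginf))
        ≤ ∫ u in y..(x * E p T t), psi g ginf p y u := le_trans hstep1 hstep2
      _ = ∫ s in τ..T, (g (xpTraj p y T s) - ginf) := hstep3.symm
      _ = (∫ s in τ..T, g (xpTraj p y T s)) - (T - τ) * ginf := e2
  nlinarith [this]

/-- The switching time of the approximating control. -/
def tauE (p t T τ ε : ℝ) : ℝ := T + p * Real.log ((E p T τ - ε * E p T t) / (1 - ε))

lemma approx (hp : 0 < p) (hy : 0 < y) (htT : t < T)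
    (hgcont : ContinuousOn g (Set.Ioi 0)) (hgdec : AntitoneOn g (Set.Ioi 0))
    (hglim : Tendsto g atTop (nhds ginf))
    {x τ : ℝ} (hτt : t < τ) (hτT : τ < T)
    (hEτ : p * E p T τ = p + y - x * E p T t)
    {ε : ℝ} (hε0 : 0 < ε) (hε1 : ε < 1)
    (hεs : ε * (p * (1 - E p T t)) < x * E p T t - y) :
    ∃ v : ℝ → ℝ, Measurable v ∧ (∀ s ∈ Set.Icc t T, 0 < v s ∧ v s ≤ 1) ∧
      traj p y T v t = x ∧
      (τ - t) * ginf + (∫ s in τ..T, g (xpTraj p y T s))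
          - (tauE p t T τ ε - τ) * (g y - ginf)
        ≤ ∫ s in t..T, g (traj p y T v s / v s) := by
  have hEt := E_pos p T t
  have hA := E_pos p T τ
  have hAEt : E p T t < E p T τ := (E_lt_E_iff hp).2 hτt
  have h1ε : 0 < 1 - ε := by linarith
  set q := (E p T τ - ε * E p T t) / (1 - ε) with hqdef
  have hqpos : 0 < q := div_pos (by nlinarith) h1ε
  set τε := tauE p t T τ ε with hτεdef
  have hτεq : τε = T + p * Real.log q := by rw [hτεdef, tauE, hqdef]
  have hEτε : E p T τε = q := by
    rw [E, hτεq, show (T + p * Real.log q - T) / p = Real.log q by field_simp; ring]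
    exact Real.exp_log hqpos
  have hq1 : q < 1 := by
    rw [hqdef, div_lt_one h1ε]
    have hmul : p * (E p T τ - ε * E p T t) < p * (1 - ε) := by nlinarith [hεs, hEτ]
    nlinarith [hmul]
  have hAq : E p T τ ≤ q := by
    rw [hqdef, le_div_iff₀ h1ε]
    nlinarith [mul_le_mul_of_nonneg_left hAEt.le hε0.le]
  have hττε : τ ≤ τε := by
    by_contra h
    push_neg at h
    have h2 : E p T τε < E p T τ := (E_lt_E_iff (T := T) hp).2 h
    rw [hEτε] at h2
    linarith
  have hτεT : τε < T := by
    have h := hq1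
    rw [← hEτε, ← E_T p T] at h
    exact (E_lt_E_iff hp).1 h
  have htτε : t < τε := lt_of_lt_of_le hτt hττε
  -- the control
  set v : ℝ → ℝ := fun s => if s ≤ τε then ε else 1 with hvdef
  have hvm : Measurable v := Measurable.ite measurableSet_Iic measurable_const measurable_const
  have hv : ∀ s ∈ Set.Icc t T, 0 < v s ∧ v s ≤ 1 := by
    intro s _
    rw [hvdef]
    simp only []
    split_ifs
    · exact ⟨hε0, hε1.le⟩
    · exact ⟨one_pos, le_rfl⟩
  -- XC to the right of τε
  have hcgright : ∀ s, τε ≤ s → s ≤ T →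
      (∫ s' in s..T, E p T s' * v s') = ∫ s' in s..T, E p T s' := by
    intro s hs1 hs2
    apply intervalIntegral.integral_congr_ae
    apply ae_of_all
    intro s' hmem
    rw [Set.uIoc_of_le hs2] at hmem
    have h2 : τε < s' := lt_of_le_of_lt hs1 hmem.1
    rw [hvdef]
    simp only []
    rw [if_neg (not_le.2 h2), mul_one]
  have hXCright : ∀ s, τε ≤ s → s ≤ T → XC p y T v s = XP p y T s := by
    intro s hs1 hs2
    rw [XC, XP, hcgright s hs1 hs2, integral_E' hp, E_T]
    ring
  -- the constraint traj(t) = x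
  have hq_eq : q * (1 - ε) = E p T τ - ε * E p T t := by
    rw [hqdef]; field_simp
  have hXC_t : XC p y T v t = x * E p T t := by
    rw [XC]
    have hsplit := intervalIntegral.integral_add_adjacent_intervals
      (m_intInt hp hvm hv (Set.mem_Icc.2 ⟨le_rfl, htT.le⟩)
        (Set.mem_Icc.2 ⟨htτε.le, hτεT.le⟩) htτε.le)
      (m_intInt hp hvm hv (Set.mem_Icc.2 ⟨htτε.le, hτεT.le⟩)
        (Set.mem_Icc.2 ⟨htT.le, le_rfl⟩) hτεT.le)
    rw [← hsplit]
    have hleft : (∫ s' in t..τε, E p T s' * v s') = ε * (p * q - p * E p T t) := by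
      have hEq : Set.EqOn (fun s' => E p T s' * v s') (fun s' => ε * E p T s')
          (Set.uIcc t τε) := by
        intro s' hs'
        rw [Set.uIcc_of_le htτε.le] at hs'
        rw [hvdef]
        simp only []
        rw [if_pos hs'.2]
        ring
      rw [intervalIntegral.integral_congr hEq, intervalIntegral.integral_const_mul,
        integral_E' hp, hEτε]
    have hright : (∫ s' in τε..T, E p T s' * v s') = p * 1 - p * q := by
      rw [hcgright τε le_rfl hτεT.le, integral_E' hp, E_T, hEτε]
    rw [hleft, hright]
    linear_combination -p * hq_eq - hEτ
  have htraj_t : traj p y T v t = x := by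
    rw [traj_eq, hXC_t]
    have hm := exp_mul_E (p := p) (T := T) (s := t)
    linear_combination x * hm
  -- value estimate
  have hobjI : IntegrableOn (fun s => g (traj p y T v s / v s)) (Set.Icc t T) volume :=
    obj_integrableOn hp hy htT.le hvm hv hgcont hgdec hglim
  have hobj1 : IntervalIntegrable (fun s => g (traj p y T v s / v s)) volume t τε :=
    (intervalIntegrable_iff_integrableOn_Icc_of_le htτε.le).2
      (hobjI.mono_set (Set.Icc_subset_Icc le_rfl hτεT.le))
  have hobj2 : IntervalIntegrable (fun s => g (traj p y T v s / v s)) volume τε T :=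
    (intervalIntegrable_iff_integrableOn_Icc_of_le hτεT.le).2
      (hobjI.mono_set (Set.Icc_subset_Icc htτε.le le_rfl))
  have hsplitJ := intervalIntegral.integral_add_adjacent_intervals hobj1 hobj2
  -- second piece : the free trajectory
  have hpiece2eq : (∫ s in τε..T, g (traj p y T v s / v s))
      = ∫ s in τε..T, g (xpTraj p y T s) := by
    apply intervalIntegral.integral_congr_ae
    apply ae_of_all
    intro s hmem
    rw [Set.uIoc_of_le hτεT.le] at hmem
    have h2 : τε < s := hmem.1
    have hv1 : v s = 1 := by rw [hvdef]; simp only []; rw [if_neg (not_le.2 h2)]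
    rw [hv1, div_one, traj_eq, hXCright s h2.le hmem.2, ← xpTraj_eq]
  -- first piece : bounded below by ginf
  have hpiece1ge : (τε - t) * ginf ≤ ∫ s in t..τε, g (traj p y T v s / v s) := by
    have h := intervalIntegral.integral_mono_on htτε.le
      (intervalIntegrable_const (c := ginf)) hobj1 ?_
    · rw [intervalIntegral.integral_const, smul_eq_mul] at h
      exact h
    · intro s hs
      have hs' : s ∈ Set.Icc t T := ⟨hs.1, le_trans hs.2 hτεT.le⟩
      have h1 := traj_div_ge_y hp hy hvm hv hs'
      exact g_ge_ginf hgdec hglim (lt_of_lt_of_le hy h1)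
  -- compare ∫_{τε}^T with ∫_τ^T
  have hgxpII : ∀ a b : ℝ, a ≤ b → b ≤ T →
      IntervalIntegrable (fun s => g (xpTraj p y T s)) volume a b := by
    intro a b hab hbT
    apply ContinuousOn.intervalIntegrable
    apply (gxp_contOn hp hy hgcont).mono
    rw [Set.uIcc_of_le hab]
    intro s hs
    exact le_trans hs.2 hbT
  have hsplitxp := intervalIntegral.integral_add_adjacent_intervals
    (hgxpII τ τε hττε hτεT.le) (hgxpII τε T hτεT.le le_rfl)
  have hmid : (∫ s in τ..τε, g (xpTraj p y T s)) ≤ (τε - τ) * g y := by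
    have h := intervalIntegral.integral_mono_on hττε
      (hgxpII τ τε hττε hτεT.le) (intervalIntegrable_const (c := g y)) ?_
    · rw [intervalIntegral.integral_const, smul_eq_mul] at h
      exact h
    · intro s hs
      have hsT : s ≤ T := le_trans hs.2 hτεT.le
      have h1 := xpTraj_ge_y (y := y) hp hy hsT
      exact hgdec (Set.mem_Ioi.2 hy) (Set.mem_Ioi.2 (lt_of_lt_of_le hy h1)) h1
  refine ⟨v, hvm, hv, htraj_t, ?_⟩
  rw [← hsplitJ, hpiece2eq]
  have : (∫ s in τε..T, g (xpTraj p y T s))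
      = (∫ s in τ..T, g (xpTraj p y T s)) - ∫ s in τ..τε, g (xpTraj p y T s) := by
    rw [← hsplitxp]; ring
  rw [this]
  nlinarith [hpiece1ge, hmid]

lemma tauE_tendsto (hp : 0 < p) {τ : ℝ} :
    Tendsto (fun ε => tauE p t T τ ε) (nhdsWithin 0 (Set.Ioi 0)) (nhds τ) := by
  have hA := E_pos p T τ
  have hf : ContinuousAt (fun ε : ℝ => (E p T τ - ε * E p T t) / (1 - ε)) 0 := by
    apply ContinuousAt.div (by fun_prop) (by fun_prop)
    norm_num
  have hf0 : (fun ε : ℝ => (E p T τ - ε * E p T t) / (1 - ε)) 0 = E p T τ := by norm_num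
  have hne : (fun ε : ℝ => (E p T τ - ε * E p T t) / (1 - ε)) 0 ≠ 0 := by
    rw [hf0]; exact ne_of_gt hA
  have hlog : ContinuousAt (Real.log ∘ fun ε : ℝ => (E p T τ - ε * E p T t) / (1 - ε)) 0 :=
    ContinuousAt.comp (Real.continuousAt_log hne) hf
  have hc : ContinuousAt (fun ε => tauE p t T τ ε) 0 := by
    exact ((hlog.const_mul p).const_add T)
  have hval : tauE p t T τ 0 = τ := by
    have h0 : (E p T τ - 0 * E p T t) / (1 - 0) = E p T τ := by norm_num
    rw [tauE, h0, E, Real.log_exp]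
    have h2 : p * ((τ - T) / p) = τ - T := by field_simp
    linarith
  have h3 := hc.tendsto.mono_left (nhdsWithin_le_nhds (s := Set.Ioi (0:ℝ)))
  rwa [hval] at h3

end S15
end

open S15 in
/-- Proposition 7.1: the value of the maximization problem
sup_{0<v≤1, x(t)=x} ∫_t^T g(x(s)/v(s)) ds equals (τ_{x,t}−t)g(∞) + ∫_{τ_{x,t}}^T g(x_p(s)) ds. -/
theorem stmt_15 (p y t T x ginf : ℝ) (hp : 0 < p) (hy : 0 < y) (htT : t < T)
    (g : ℝ → ℝ)
    (hgcont : ContinuousOn g (Set.Ioi 0))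
    (hgnonneg : ∀ z > (0:ℝ), 0 ≤ g z)
    (hgdec : AntitoneOn g (Set.Ioi 0))
    (hglim : Tendsto g atTop (nhds ginf))
    (hxgdec : AntitoneOn (fun z => z * (g z - ginf)) (Set.Ioi 0))
    (hx1 : Real.exp ((T - t) / p) * y < x)
    (hx2 : x < Real.exp ((T - t) / p) * (y + p) - p)
    (τ : ℝ)
    (hτ : Real.exp (τ / p)
        = Real.exp (T / p) * (1 + y / p) - (x / p) * Real.exp (t / p)) :
    t < τ ∧ τ < T ∧
    IsLUB {c : ℝ | ∃ v : ℝ → ℝ, Measurable v ∧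
        (∀ s ∈ Set.Icc t T, 0 < v s ∧ v s ≤ 1) ∧
        traj p y T v t = x ∧
        c = ∫ s in t..T, g (traj p y T v s / v s)}
      ((τ - t) * ginf + ∫ s in τ..T, g (xpTraj p y T s)) := by
  
  have hEt := E_pos p T t
  have hEτ0 := E_pos p T τ
  have h1 := exp_mul_E (p := p) (T := T) (s := t)
  -- translate hτ
  have hEτdef : E p T τ = Real.exp (τ / p) / Real.exp (T / p) := by
    rw [E, sub_div, Real.exp_sub]
  have hEtdef : E p T t = Real.exp (t / p) / Real.exp (T / p) := by
    rw [E, sub_div, Real.exp_sub]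
  have hEτ : p * E p T τ = p + y - x * E p T t := by
    rw [hEτdef, hEtdef, hτ]
    field_simp
  -- y < C and C < XP t
  have hCy : y < x * E p T t := by
    have h2 := mul_lt_mul_of_pos_right hx1 hEt
    have h3 : Real.exp ((T - t) / p) * y * E p T t = y := by linear_combination y * h1
    linarith
  have hCXP : x * E p T t < y + p * (1 - E p T t) := by
    have h2 := mul_lt_mul_of_pos_right hx2 hEt
    have h3 : (Real.exp ((T - t) / p) * (y + p) - p) * E p T t
        = y + p - p * E p T t := by
      linear_combination (y + p) * h1
    nlinarith [h2, h3]
  -- t < τ < T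
  have hτT' : τ < T := by
    have h2 : E p T τ < 1 := by nlinarith
    rw [← E_T p T] at h2
    exact (E_lt_E_iff hp).1 h2
  have hτt' : t < τ := by
    have h2 : E p T t < E p T τ := by nlinarith
    exact (E_lt_E_iff hp).1 h2
  refine ⟨hτt', hτT', ?_, ?_⟩
  · -- upper bound
    rintro c ⟨v, hvm, hv, hcon, rfl⟩
    exact upper_bound hp hy htT hgcont hgdec hglim hxgdec hτt' hτT' hEτ hCy hvm hv hcon
  · -- least upper bound
    intro b hb
    have hEt1 : E p T t < 1 := by
      have := (E_lt_E_iff (T := T) hp).2 htT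
      rwa [E_T] at this
    have hpos : 0 < p * (1 - E p T t) := by nlinarith
    set δ : ℝ := min (1/2) ((x * E p T t - y) / (p * (1 - E p T t)) / 2) with hδdef
    have hδpos : 0 < δ := by
      apply lt_min (by norm_num)
      exact div_pos (div_pos (by linarith) hpos) two_pos
    have hmemb : ∀ ε : ℝ, 0 < ε → ε < 1 → ε * (p * (1 - E p T t)) < x * E p T t - y →
        (τ - t) * ginf + (∫ s in τ..T, g (xpTraj p y T s))
          - (tauE p t T τ ε - τ) * (g y - ginf) ≤ b := by
      intro ε he0 he1 hes
      obtain ⟨v, hvm, hv, hcon, hval⟩ :=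
        approx hp hy htT hgcont hgdec hglim hτt' hτT' hEτ he0 he1 hes
      have hmem : (∫ s in t..T, g (traj p y T v s / v s)) ≤ b :=
        hb ⟨v, hvm, hv, hcon, rfl⟩
      linarith
    have hlim : Tendsto (fun ε => (τ - t) * ginf + (∫ s in τ..T, g (xpTraj p y T s))
        - (tauE p t T τ ε - τ) * (g y - ginf)) (nhdsWithin 0 (Set.Ioi 0))
        (nhds ((τ - t) * ginf + ∫ s in τ..T, g (xpTraj p y T s))) := by
      have h2 := (((tauE_tendsto (t := t) (T := T) hp (τ := τ)).sub_const τ).mul_const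
        (g y - ginf)).const_sub ((τ - t) * ginf + ∫ s in τ..T, g (xpTraj p y T s))
      simpa using h2
    apply le_of_tendsto hlim
    have hIoo : Set.Ioo (0:ℝ) δ ∈ nhdsWithin (0:ℝ) (Set.Ioi 0) :=
      Ioo_mem_nhdsGT_of_mem ⟨le_rfl, hδpos⟩
    filter_upwards [hIoo] with ε hε
    apply hmemb ε hε.1
    · exact lt_of_lt_of_le hε.2 (le_trans (min_le_left _ _) (by norm_num))
    · have h2 : ε < (x * E p T t - y) / (p * (1 - E p T t)) / 2 :=
        lt_of_lt_of_le hε.2 (min_le_right _ _)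
      have h4 : ((x * E p T t - y) / (p * (1 - E p T t)) / 2) * (p * (1 - E p T t))
          = (x * E p T t - y) / 2 := by
        rw [div_right_comm, div_mul_cancel₀ _ hpos.ne']
      have h5 := mul_lt_mul_of_pos_right h2 hpos
      rw [h4] at h5
      linarith [hCy]
end
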